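/- arXiv:0801.0390 — 13 statements merged into one kernel-verified Lean document; each statement's English description precedes it below -/
import Mathlib

section
/- Let F : ℝ^d × ℝ^d → ℝ be continuously differentiable and satisfy: (1) non-negativity: F(x,y) ≥ 0 for all x,y; (2) identity of indiscernibles: F(x,y) = 0 if and only if x = y; (3) the expectation is the lowest distortion's predictor: for every m ≥ 1, every family of points x_1,…,x_m ∈ ℝ^d and every family of weights κ_1,…,κ_m > 0 with Σ_i κ_i = 1, the function y ↦ Σ_i κ_i F(x_i, y) attains its minimum over ℝ^d exactly at the point y = Σ_i κ_i x_i. Then there exists a strictly convex differentiable function φ : ℝ^d → ℝ such that F(x,y) = φ(x) − φ(y) − ⟨x − y, ∇φ(y)⟩ for all x,y ∈ ℝ^d. -/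
open scoped RealInnerProductSpace BigOperators


theorem strictConvexOn_of_support {E : Type*} [NormedAddCommGroup E] [InnerProductSpace ℝ E]
    (φ : E → ℝ) (g : E → E)
    (h : ∀ x y : E, x ≠ y → φ y + ⟪x - y, g y⟫ < φ x) :
    StrictConvexOn ℝ Set.univ φ := by
  refine ⟨convex_univ, fun x _ y _ hxy a b ha hb hab => ?_⟩
  set z := a • x + b • y with hz
  have hxx : a • x + b • x = x := by rw [← add_smul, hab, one_smul]
  have hyy : a • y + b • y = y := by rw [← add_smul, hab, one_smul]
  have hzx : x ≠ z := by
    intro hzx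
    apply hxy
    have hb0 : b • (y - x) = 0 := by
      rw [smul_sub]
      have h1' : a • x + b • y = x := hzx.symm
      calc b • y - b • x = (a • x + b • y) - (a • x + b • x) := by abel
        _ = 0 := by rw [h1', hxx, sub_self]
    rcases smul_eq_zero.mp hb0 with h' | h'
    · exact absurd h' (ne_of_gt hb)
    · exact (sub_eq_zero.mp h').symm
  have hzy : y ≠ z := by
    intro hzy
    apply hxy
    have ha0 : a • (x - y) = 0 := by
      rw [smul_sub]
      have h1' : a • x + b • y = y := hzy.symm
      calc a • x - a • y = (a • x + b • y) - (a • y + b • y) := by abel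
        _ = 0 := by rw [h1', hyy, sub_self]
    rcases smul_eq_zero.mp ha0 with h' | h'
    · exact absurd h' (ne_of_gt ha)
    · exact sub_eq_zero.mp h'
  have h1 := h x z hzx
  have h2 := h y z hzy
  have key : a • (x - z) + b • (y - z) = 0 := by
    rw [hz]
    match_scalars <;> nlinarith [hab]
  have e1 : a * ⟪x - z, g z⟫ + b * ⟪y - z, g z⟫ = 0 := by
    rw [← real_inner_smul_left, ← real_inner_smul_left, ← inner_add_left, key, inner_zero_left]
  calc φ (a • x + b • y) = φ z := rfl
    _ = a * φ z + b * φ z + (a * ⟪x - z, g z⟫ + b * ⟪y - z, g z⟫) := by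
        rw [e1, ← add_mul, hab, one_mul, add_zero]
    _ = a * (φ z + ⟪x - z, g z⟫) + b * (φ z + ⟪y - z, g z⟫) := by ring
    _ < a * φ x + b * φ y :=
        add_lt_add ((mul_lt_mul_iff_right₀ ha).mpr h1) ((mul_lt_mul_iff_right₀ hb).mpr h2)

set_option maxHeartbeats 1000000 in
theorem bregman_aux {E : Type*} [NormedAddCommGroup E] [InnerProductSpace ℝ E]
    [FiniteDimensional ℝ E]
    (F : E → E → ℝ) (hF : ContDiff ℝ 1 fun p : E × E => F p.1 p.2)
    (hnonneg : ∀ x y, 0 ≤ F x y)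
    (hind : ∀ x y, F x y = 0 ↔ x = y)
    (stat2 : ∀ a : ℝ, 0 < a → a < 1 → ∀ x₁ x₂ y : E, y ≠ a • x₁ + (1-a) • x₂ →
      a * F x₁ (a • x₁ + (1-a) • x₂) + (1-a) * F x₂ (a • x₁ + (1-a) • x₂)
        < a * F x₁ y + (1-a) * F x₂ y)
    (stat3 : ∀ x₁ x₂ x₃ y : E, y ≠ (3:ℝ)⁻¹ • x₁ + (3:ℝ)⁻¹ • x₂ + (3:ℝ)⁻¹ • x₃ →
      (3:ℝ)⁻¹ * F x₁ ((3:ℝ)⁻¹ • x₁ + (3:ℝ)⁻¹ • x₂ + (3:ℝ)⁻¹ • x₃)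
        + (3:ℝ)⁻¹ * F x₂ ((3:ℝ)⁻¹ • x₁ + (3:ℝ)⁻¹ • x₂ + (3:ℝ)⁻¹ • x₃)
        + (3:ℝ)⁻¹ * F x₃ ((3:ℝ)⁻¹ • x₁ + (3:ℝ)⁻¹ • x₂ + (3:ℝ)⁻¹ • x₃)
        < (3:ℝ)⁻¹ * F x₁ y + (3:ℝ)⁻¹ * F x₂ y + (3:ℝ)⁻¹ * F x₃ y) :
    ∃ φ : E → ℝ, StrictConvexOn ℝ Set.univ φ ∧ Differentiable ℝ φ ∧
      ∀ x y, F x y = φ x - φ y - ⟪x - y, gradient φ y⟫ := by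
  classical
  have Fdiff : Differentiable ℝ (fun p : E × E => F p.1 p.2) := hF.differentiable one_ne_zero
  -- differentiability of partial functions
  have hdiff2 : ∀ x : E, Differentiable ℝ (fun y => F x y) := by
    intro x
    exact Fdiff.comp ((differentiable_const x).prodMk differentiable_id)
  have hdiff1 : ∀ y : E, Differentiable ℝ (fun x => F x y) := by
    intro y
    exact Fdiff.comp (differentiable_id.prodMk (differentiable_const y))
  -- the partial gradient in the second variable
  set G : E → E → E := fun x y => gradient (fun z => F x z) y with hG
  have hasG : ∀ x y : E, HasGradientAt (fun z => F x z) (G x y) y := by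
    intro x y
    exact ((hdiff2 x) y).hasGradientAt
  have Dcont : Continuous (fun p : E × E => fderiv ℝ (fun q : E × E => F q.1 q.2) p) :=
    hF.continuous_fderiv one_ne_zero
  have hpart2 : ∀ p : E × E, HasFDerivAt (fun z => F p.1 z)
      ((fderiv ℝ (fun q : E × E => F q.1 q.2) p).comp (ContinuousLinearMap.inr ℝ E E)) p.2 :=
    fun p => HasFDerivAt.comp (f := fun z : E => (p.1, z)) p.2 (Fdiff p).hasFDerivAt (hasFDerivAt_prodMk_right p.1 p.2)
  have Gcont : Continuous (fun p : E × E => G p.1 p.2) := by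
    have hGeq : (fun p : E × E => G p.1 p.2) = fun p : E × E =>
        (InnerProductSpace.toDual ℝ E).symm
          ((fderiv ℝ (fun q : E × E => F q.1 q.2) p).comp (ContinuousLinearMap.inr ℝ E E)) := by
      funext p
      have h2 := (hasG p.1 p.2).hasFDerivAt
      have h3 := h2.unique (hpart2 p)
      rw [← h3, LinearIsometryEquiv.symm_apply_apply]
    rw [hGeq]
    exact (InnerProductSpace.toDual ℝ E).symm.continuous.comp
      ((((ContinuousLinearMap.compL ℝ E (E × E) ℝ).flip
        (ContinuousLinearMap.inr ℝ E E)).continuous).comp Dcont)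
  -- G x x = 0
  have Gzero : ∀ x : E, G x x = 0 := by
    intro x
    have hmin' : IsMinOn (fun z => F x z) Set.univ x := by
      intro z _
      simp only [Set.mem_setOf_eq]
      rw [(hind x x).mpr rfl]
      exact hnonneg x z
    have hloc : IsLocalMin (fun z => F x z) x := hmin'.isLocalMin Filter.univ_mem
    have h0 : InnerProductSpace.toDual ℝ E (G x x) = 0 :=
      hloc.hasFDerivAt_eq_zero (hasG x x).hasFDerivAt
    have := congrArg (InnerProductSpace.toDual ℝ E).symm h0
    simpa using this
  -- stationarity for two points
  have stat2' : ∀ a : ℝ, 0 < a → a < 1 → ∀ x₁ x₂ : E,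
      a • G x₁ (a • x₁ + (1-a) • x₂) + (1-a) • G x₂ (a • x₁ + (1-a) • x₂) = 0 := by
    intro a ha ha1 x₁ x₂
    set z := a • x₁ + (1-a) • x₂ with hz
    have hmin' : IsMinOn (fun y => a * F x₁ y + (1-a) * F x₂ y) Set.univ z := by
      rw [isMinOn_iff]
      intro y _
      by_cases hy : y = z
      · rw [hy]
      · exact le_of_lt (stat2 a ha ha1 x₁ x₂ y hy)
    have hloc : IsLocalMin (fun y => a * F x₁ y + (1-a) * F x₂ y) z :=
      hmin'.isLocalMin Filter.univ_mem
    have hfd : HasFDerivAt (fun y => a * F x₁ y + (1-a) * F x₂ y)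
        (a • (InnerProductSpace.toDual ℝ E (G x₁ z))
          + (1-a) • (InnerProductSpace.toDual ℝ E (G x₂ z))) z :=
      ((hasG x₁ z).hasFDerivAt.const_mul a).add ((hasG x₂ z).hasFDerivAt.const_mul (1-a))
    have h0 := hloc.hasFDerivAt_eq_zero hfd
    have h1 := congrArg (InnerProductSpace.toDual ℝ E).symm h0
    simpa using h1
  -- stationarity for three points, equal weights
  have stat3' : ∀ x₁ x₂ x₃ : E,
      G x₁ ((3:ℝ)⁻¹ • x₁ + (3:ℝ)⁻¹ • x₂ + (3:ℝ)⁻¹ • x₃)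
      + G x₂ ((3:ℝ)⁻¹ • x₁ + (3:ℝ)⁻¹ • x₂ + (3:ℝ)⁻¹ • x₃)
      + G x₃ ((3:ℝ)⁻¹ • x₁ + (3:ℝ)⁻¹ • x₂ + (3:ℝ)⁻¹ • x₃) = 0 := by
    intro x₁ x₂ x₃
    set z := (3:ℝ)⁻¹ • x₁ + (3:ℝ)⁻¹ • x₂ + (3:ℝ)⁻¹ • x₃ with hz
    have hmin' : IsMinOn
        (fun y => (3:ℝ)⁻¹ * F x₁ y + (3:ℝ)⁻¹ * F x₂ y + (3:ℝ)⁻¹ * F x₃ y) Set.univ z := by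
      rw [isMinOn_iff]
      intro y _
      by_cases hy : y = z
      · rw [hy]
      · exact le_of_lt (stat3 x₁ x₂ x₃ y hy)
    have hloc := hmin'.isLocalMin Filter.univ_mem
    have hfd : HasFDerivAt (fun y => (3:ℝ)⁻¹ * F x₁ y + (3:ℝ)⁻¹ * F x₂ y + (3:ℝ)⁻¹ * F x₃ y)
        ((3:ℝ)⁻¹ • (InnerProductSpace.toDual ℝ E (G x₁ z))
          + (3:ℝ)⁻¹ • (InnerProductSpace.toDual ℝ E (G x₂ z))
          + (3:ℝ)⁻¹ • (InnerProductSpace.toDual ℝ E (G x₃ z))) z :=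
      (((hasG x₁ z).hasFDerivAt.const_mul _).add
        ((hasG x₂ z).hasFDerivAt.const_mul _)).add ((hasG x₃ z).hasFDerivAt.const_mul _)
    have h0 := hloc.hasFDerivAt_eq_zero hfd
    have h1 := congrArg (InnerProductSpace.toDual ℝ E).symm h0
    simp only [map_add, map_smul, LinearIsometryEquiv.symm_apply_apply, map_zero] at h1
    have h2 := congrArg (fun v : E => (3:ℝ) • v) h1
    simp only [smul_add, smul_smul, smul_zero] at h2
    norm_num at h2
    exact h2
  -- oddness
  have odd : ∀ z u : E, G (z - u) z = - G (z + u) z := by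
    intro z u
    have h := stat2' (2⁻¹ : ℝ) (by norm_num) (by norm_num) (z + u) (z - u)
    have hzz : (2⁻¹ : ℝ) • (z + u) + (1 - 2⁻¹ : ℝ) • (z - u) = z := by
      match_scalars <;> norm_num
    rw [hzz] at h
    norm_num at h
    have h2 := congrArg (fun v : E => (2:ℝ) • v) h
    simp only [smul_add, smul_smul, smul_zero] at h2
    norm_num at h2
    linear_combination (norm := module) h2
  -- homogeneity
  have homog_neg : ∀ (z u : E) (t : ℝ), 0 < t → G (z - t • u) z = -t • G (z + u) z := by
    intro z u t ht
    have h1t : (0:ℝ) < 1 + t := by linarith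
    have ha : (0:ℝ) < t / (1 + t) := by positivity
    have ha1 : t / (1 + t) < 1 := by
      rw [div_lt_one h1t]; linarith
    have h := stat2' (t / (1+t)) ha ha1 (z + u) (z - t • u)
    have hzz : (t/(1+t)) • (z + u) + (1 - t/(1+t)) • (z - t • u) = z := by
      match_scalars <;> field_simp <;> ring
    rw [hzz] at h
    have hb : (1 : ℝ) - t/(1+t) = 1/(1+t) := by field_simp; ring
    -- solve for G (z - t•u) z
    have h2 := congrArg (fun v : E => (1 + t) • v) h
    simp only [smul_add, smul_smul, smul_zero] at h2
    rw [hb] at h2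
    have e1 : (1+t) * (t/(1+t)) = t := by field_simp
    have e2 : (1+t) * (1/(1+t)) = 1 := by field_simp
    rw [e1, e2, one_smul] at h2
    linear_combination (norm := module) h2
  have homog : ∀ (z u : E) (s : ℝ), G (z + s • u) z = s • G (z + u) z := by
    intro z u s
    rcases lt_trichotomy s 0 with hs | hs | hs
    · have h := homog_neg z u (-s) (by linarith)
      have e : z - (-s) • u = z + s • u := by module
      rw [e] at h
      rw [h]
      module
    · simp [hs, Gzero]
    · have h := homog_neg z (-u) s hs
      have e : z - s • (-u) = z + s • u := by module
      have e2 : z + (-u) = z - u := by module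
      rw [e, e2, odd z u] at h
      rw [h]
      module
  -- additivity
  have add' : ∀ z a b : E, G (z + (a + b)) z = G (z + a) z + G (z + b) z := by
    intro z a b
    have h := stat3' (z + a) (z + b) (z - a - b)
    have hzz : (3:ℝ)⁻¹ • (z + a) + (3:ℝ)⁻¹ • (z + b) + (3:ℝ)⁻¹ • (z - a - b) = z := by
      match_scalars <;> norm_num
    rw [hzz] at h
    have e : z - a - b = z - (a + b) := by module
    rw [e, odd z (a + b)] at h
    linear_combination (norm := module) -h
  have Gsub : ∀ c x y : E, G x c - G y c = G (c + (x - y)) c := by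
    intro c x y
    have h1 : G (c + ((x - y) + (y - c))) c = G (c + (x - y)) c + G (c + (y - c)) c :=
      add' c (x - y) (y - c)
    have e1 : c + ((x - y) + (y - c)) = x := by abel
    have e2 : c + (y - c) = y := by abel
    rw [e1, e2] at h1
    rw [h1]; abel
  -- derivative along a ray in the second variable
  have hasDeriv : ∀ (x y : E) (t : ℝ),
      HasDerivAt (fun s : ℝ => F x (s • y)) ⟪G x (t • y), y⟫ t := by
    intro x y t
    have h1 : HasDerivAt (fun s : ℝ => s • y) y t := by
      simpa using (hasDerivAt_id t).smul_const y
    have h2 := (hasG x (t • y)).hasFDerivAt.comp_hasDerivAt t h1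
    simp [InnerProductSpace.toDual_apply_apply] at h2
    exact h2
  have intFTC : ∀ x y : E,
      IntervalIntegrable (fun t : ℝ => ⟪G x (t • y), y⟫) MeasureTheory.volume 0 1 := by
    intro x y
    apply Continuous.intervalIntegrable
    exact Continuous.inner
      (Gcont.comp (continuous_const.prodMk (continuous_id.smul continuous_const)))
      continuous_const
  have intL : ∀ y v : E,
      IntervalIntegrable (fun t : ℝ => ⟪G (t • y + v) (t • y), y⟫)
        MeasureTheory.volume 0 1 := by
    intro y v
    apply Continuous.intervalIntegrable
    exact Continuous.inner
      (Gcont.comp (((continuous_id.smul continuous_const).add continuous_const).prodMk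
        (continuous_id.smul continuous_const)))
      continuous_const
  have ftc : ∀ x y : E, F x y - F x 0 = ∫ t in (0:ℝ)..1, ⟪G x (t • y), y⟫ := by
    intro x y
    have h := intervalIntegral.integral_eq_sub_of_hasDerivAt
      (f := fun s : ℝ => F x (s • y)) (f' := fun t => ⟪G x (t • y), y⟫)
      (fun t _ => hasDeriv x y t) (intFTC x y)
    rw [h]
    show F x y - F x 0 = F x ((1:ℝ) • y) - F x ((0:ℝ) • y)
    rw [one_smul, zero_smul]
  set φ : E → ℝ := fun x => F x 0 with hφ
  have key2 : ∀ x y : E, F x y + φ y - φ x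
      = ∫ t in (0:ℝ)..1, ⟪G (t • y + (x - y)) (t • y), y⟫ := by
    intro x y
    have h1 := ftc x y
    have h2 := ftc y y
    rw [(hind y y).mpr rfl] at h2
    have h3 : F x y + φ y - φ x
        = (∫ t in (0:ℝ)..1, ⟪G x (t • y), y⟫) - ∫ t in (0:ℝ)..1, ⟪G y (t • y), y⟫ := by
      rw [← h1, ← h2]; simp only [hφ]; ring
    rw [h3, ← intervalIntegral.integral_sub (intFTC x y) (intFTC y y)]
    have : (fun t : ℝ => ⟪G x (t • y), y⟫ - ⟪G y (t • y), y⟫)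
        = fun t : ℝ => ⟪G (t • y + (x - y)) (t • y), y⟫ := by
      funext t
      rw [← inner_sub_left, Gsub (t • y) x y]
    rw [this]
  -- the Riesz vector of the linear functional
  set wfun : E → E := fun y => (InnerProductSpace.toDual ℝ E).symm
    (LinearMap.toContinuousLinearMap
      { toFun := fun v => ∫ t in (0:ℝ)..1, ⟪G (t • y + v) (t • y), y⟫
        map_add' := by
          intro v v'
          show (∫ t in (0:ℝ)..1, ⟪G (t • y + (v + v')) (t • y), y⟫)
              = (∫ t in (0:ℝ)..1, ⟪G (t • y + v) (t • y), y⟫)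
                + ∫ t in (0:ℝ)..1, ⟪G (t • y + v') (t • y), y⟫
          rw [← intervalIntegral.integral_add (intL y v) (intL y v')]
          congr 1
          funext t
          rw [← inner_add_left, ← add' (t • y) v v']
        map_smul' := by
          intro s v
          show (∫ t in (0:ℝ)..1, ⟪G (t • y + s • v) (t • y), y⟫)
              = s • ∫ t in (0:ℝ)..1, ⟪G (t • y + v) (t • y), y⟫
          rw [smul_eq_mul, ← intervalIntegral.integral_const_mul]
          congr 1
          funext t
          rw [← real_inner_smul_left, ← homog (t • y) v s] }) with hwfun
  have wspec : ∀ y v : E, ⟪v, wfun y⟫ = ∫ t in (0:ℝ)..1, ⟪G (t • y + v) (t • y), y⟫ := by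
    intro y v
    rw [real_inner_comm, hwfun, InnerProductSpace.toDual_symm_apply]
    rfl
  have star : ∀ x y : E, F x y = φ x - φ y + ⟪x - y, wfun y⟫ := by
    intro x y
    rw [wspec y (x - y)]
    have := key2 x y
    linarith
  -- vanishing of the first partial gradient on the diagonal
  have grad1zero : ∀ y : E, HasFDerivAt (fun x => F x y) (0 : E →L[ℝ] ℝ) y := by
    intro y
    have hDp : HasFDerivAt (fun q : E × E => F q.1 q.2)
        (fderiv ℝ (fun q : E × E => F q.1 q.2) (y, y)) (y, y) := (Fdiff (y, y)).hasFDerivAt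
    have h1 := HasFDerivAt.comp (f := fun e : E => (e, y)) (x := y) hDp (hasFDerivAt_prodMk_left y y)
    have hdiag := HasFDerivAt.comp (f := fun e : E => (id e, id e)) (x := y) hDp ((hasFDerivAt_id y).prodMk (hasFDerivAt_id y))
    have hdiag0 : ((fderiv ℝ (fun q : E × E => F q.1 q.2) (y, y)).comp
        ((ContinuousLinearMap.id ℝ E).prod (ContinuousLinearMap.id ℝ E))) = 0 := by
      have hconst : (fun z : E => F z z) = fun _ => (0 : ℝ) :=
        funext fun z => (hind z z).mpr rfl
      have h0 : HasFDerivAt (fun z : E => F z z) (0 : E →L[ℝ] ℝ) y := by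
        rw [hconst]; exact hasFDerivAt_const 0 y
      exact hdiag.unique h0
    have hsecond0 : ((fderiv ℝ (fun q : E × E => F q.1 q.2) (y, y)).comp
        (ContinuousLinearMap.inr ℝ E E)) = 0 := by
      have h2 := (hasG y y).hasFDerivAt
      rw [Gzero y] at h2
      have h3 := (hpart2 (y, y)).unique h2
      rw [h3]
      simp
    have hzero : ((fderiv ℝ (fun q : E × E => F q.1 q.2) (y, y)).comp
        (ContinuousLinearMap.inl ℝ E E)) = 0 := by
      ext v
      have e2 := ContinuousLinearMap.ext_iff.mp hdiag0 v
      have e3 := ContinuousLinearMap.ext_iff.mp hsecond0 v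
      simp only [ContinuousLinearMap.comp_apply, ContinuousLinearMap.prod_apply,
        ContinuousLinearMap.id_apply, ContinuousLinearMap.inr_apply,
        ContinuousLinearMap.inl_apply, ContinuousLinearMap.zero_apply] at e2 e3 ⊢
      have hv : ((v, (0:E)) : E × E) = (v, v) - (0, v) := by simp
      rw [hv, map_sub, e2, e3, sub_zero]
    rw [← hzero]
    exact h1
  have hgradphi : ∀ y : E, HasGradientAt φ (-(wfun y)) y := by
    intro y
    rw [hasGradientAt_iff_hasFDerivAt]
    have hinner : HasFDerivAt (fun x : E => (⟪x - y, wfun y⟫ : ℝ))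
        (InnerProductSpace.toDual ℝ E (wfun y)) y := by
      have heq : (fun x : E => (⟪x - y, wfun y⟫ : ℝ))
          = fun x : E => (InnerProductSpace.toDual ℝ E (wfun y)) x - ⟪y, wfun y⟫ := by
        funext x
        rw [InnerProductSpace.toDual_apply_apply, inner_sub_left, real_inner_comm]
      rw [heq]
      exact (InnerProductSpace.toDual ℝ E (wfun y)).hasFDerivAt.sub_const _
    have hphieq : φ = fun x => F x y + φ y - ⟪x - y, wfun y⟫ := by
      funext x
      have := star x y
      linarith
    rw [hphieq]
    have hcomb := ((grad1zero y).add_const (φ y)).sub hinner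
    have e : (InnerProductSpace.toDual ℝ E) (-wfun y) = 0 - (InnerProductSpace.toDual ℝ E) (wfun y) := by simp
    rw [e]
    exact hcomb
  have φdiff : Differentiable ℝ φ := fun y => (hgradphi y).differentiableAt
  have gradφ : ∀ y : E, gradient φ y = -(wfun y) := fun y => (hgradphi y).gradient
  refine ⟨φ, ?_, φdiff, ?_⟩
  · apply strictConvexOn_of_support φ (fun y => gradient φ y)
    intro x y hxy
    have hF0 : 0 < F x y :=
      lt_of_le_of_ne (hnonneg x y) (fun h => hxy ((hind x y).mp h.symm))
    have hs := star x y
    rw [gradφ y, inner_neg_right]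
    linarith
  · intro x y
    rw [gradφ y, inner_neg_right]
    have hs := star x y
    linarith

/-- A continuously differentiable non-negative function `F` on `ℝ^d × ℝ^d`
satisfying the identity of indiscernibles and such that, for any finite family of points and
positive weights summing to one, the weighted distortion `y ↦ Σ κᵢ F(xᵢ, y)` is minimized
exactly at the weighted mean, must be a Bregman divergence. -/
theorem statement_0 (d : ℕ)
    (F : EuclideanSpace ℝ (Fin d) → EuclideanSpace ℝ (Fin d) → ℝ)
    (hF : ContDiff ℝ 1 fun p : EuclideanSpace ℝ (Fin d) × EuclideanSpace ℝ (Fin d) =>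
      F p.1 p.2)
    (hnonneg : ∀ x y, 0 ≤ F x y)
    (hind : ∀ x y, F x y = 0 ↔ x = y)
    (hmin : ∀ m : ℕ, 1 ≤ m → ∀ (x : Fin m → EuclideanSpace ℝ (Fin d)) (κ : Fin m → ℝ),
      (∀ i, 0 < κ i) → (∑ i, κ i) = 1 →
      ∀ y : EuclideanSpace ℝ (Fin d), y ≠ (∑ i, κ i • x i) →
        (∑ i, κ i * F (x i) (∑ j, κ j • x j)) < ∑ i, κ i * F (x i) y) :
    ∃ φ : EuclideanSpace ℝ (Fin d) → ℝ,
      StrictConvexOn ℝ Set.univ φ ∧ Differentiable ℝ φ ∧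
      ∀ x y, F x y = φ x - φ y - ⟪x - y, gradient φ y⟫ := by
  
  apply bregman_aux F hF hnonneg hind
  · -- stat2
    intro a ha ha1 x₁ x₂ y hy
    have e : (∑ j : Fin 2, (![a, 1 - a]) j • (![x₁, x₂]) j) = a • x₁ + (1 - a) • x₂ := by
      simp [Fin.sum_univ_two]
    have h := hmin 2 (by norm_num) ![x₁, x₂] ![a, 1 - a]
      (by intro i; fin_cases i <;> simp <;> linarith)
      (by simp [Fin.sum_univ_two])
      y (by rw [e]; exact hy)
    rw [e] at h
    simpa [Fin.sum_univ_two] using h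
  · -- stat3
    intro x₁ x₂ x₃ y hy
    have e : (∑ j : Fin 3, (![(3:ℝ)⁻¹, (3:ℝ)⁻¹, (3:ℝ)⁻¹]) j • (![x₁, x₂, x₃]) j)
        = (3:ℝ)⁻¹ • x₁ + (3:ℝ)⁻¹ • x₂ + (3:ℝ)⁻¹ • x₃ := by
      simp [Fin.sum_univ_three]
    have h := hmin 3 (by norm_num) ![x₁, x₂, x₃] ![(3:ℝ)⁻¹, (3:ℝ)⁻¹, (3:ℝ)⁻¹]
      (by intro i; fin_cases i <;> norm_num)
      (by simp [Fin.sum_univ_three]; norm_num)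
      y (by rw [e]; exact hy)
    rw [e] at h
    simpa [Fin.sum_univ_three] using h
end

section
/- Let φ : ℝ^d → ℝ be strictly convex and differentiable, let x_1,…,x_m ∈ ℝ^d and γ_1,…,γ_m > 0 with Γ = Σ_i γ_i. Then the point ȳ = (1/Γ) Σ_i γ_i x_i is the unique minimizer over y ∈ ℝ^d of the weighted total Bregman distortion y ↦ Σ_i γ_i D_φ(x_i‖y); that is, Σ_i γ_i D_φ(x_i‖y) > Σ_i γ_i D_φ(x_i‖ȳ) for every y ≠ ȳ. -/
open scoped RealInnerProductSpace BigOperators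

/-- The Bregman divergence `D_φ(x‖y) = φ(x) − φ(y) − ⟨x − y, ∇φ(y)⟩`. -/
noncomputable def bregman {d : ℕ} (φ : EuclideanSpace ℝ (Fin d) → ℝ)
    (x y : EuclideanSpace ℝ (Fin d)) : ℝ :=
  φ x - φ y - ⟪x - y, gradient φ y⟫

lemma bregman_pos {d : ℕ} {φ : EuclideanSpace ℝ (Fin d) → ℝ}
    (hconv : StrictConvexOn ℝ Set.univ φ) (hdiff : Differentiable ℝ φ)
    {x y : EuclideanSpace ℝ (Fin d)} (hxy : x ≠ y) : 0 < bregman φ x y := by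
  set v : EuclideanSpace ℝ (Fin d) := x - y with hv
  have hv0 : v ≠ 0 := sub_ne_zero.2 hxy
  set g : ℝ → ℝ := fun t => φ (y + t • v) with hg
  have hgconv : StrictConvexOn ℝ Set.univ g := by
    refine ⟨convex_univ, fun a _ b _ hab s t hs ht hst => ?_⟩
    have hne : y + a • v ≠ y + b • v := by
      intro h
      apply hab
      have := add_left_cancel h
      have h2 : (a - b) • v = 0 := by rw [sub_smul, this, sub_self]
      rcases smul_eq_zero.1 h2 with h3 | h3
      · linarith [sub_eq_zero.1 (by exact_mod_cast h3)]
      · exact absurd h3 hv0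
    have h := hconv.2 (Set.mem_univ (y + a • v)) (Set.mem_univ (y + b • v)) hne hs ht hst
    have heq : s • (y + a • v) + t • (y + b • v) = y + (s * a + t * b) • v := by
      have h1 : s • y + t • y = y := by rw [← add_smul, hst, one_smul]
      rw [smul_add, smul_add, smul_smul, smul_smul, add_smul]
      rw [add_add_add_comm, h1]
    rw [hg]
    simp only []
    rw [heq] at h
    simpa using h
  have hcurve : HasDerivAt (fun t : ℝ => y + t • v) v 0 := by
    simpa using ((hasDerivAt_id (0 : ℝ)).smul_const v).const_add y
  have hgrad : HasGradientAt φ (gradient φ y) y := (hdiff y).hasGradientAt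
  have hfd : HasFDerivAt φ ((InnerProductSpace.toDual ℝ _) (gradient φ y)) y :=
    hasGradientAt_iff_hasFDerivAt.1 hgrad
  have hgd : HasDerivAt g (⟪gradient φ y, v⟫) 0 := by
    have hfd' : HasFDerivAt φ ((InnerProductSpace.toDual ℝ _) (gradient φ y)) (y + (0:ℝ) • v) := by
      simpa using hfd
    have := hfd'.comp_hasDerivAt 0 hcurve
    simpa [hg, InnerProductSpace.toDual_apply_apply, Function.comp_def] using this
  have hslope := hgconv.lt_slope_of_hasDerivAt (Set.mem_univ (0 : ℝ)) (Set.mem_univ (1 : ℝ))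
    one_pos hgd
  have hs : slope g 0 1 = φ x - φ y := by
    simp [slope, hg, hv]
  rw [hs] at hslope
  have : ⟪x - y, gradient φ y⟫ = ⟪gradient φ y, v⟫ := by
    rw [real_inner_comm]
  unfold bregman
  rw [this]
  linarith

/-- the weighted arithmetic mean `ȳ = (1/Γ) Σ γᵢ xᵢ` is the unique minimizer of
the weighted total Bregman distortion `y ↦ Σ γᵢ D_φ(xᵢ‖y)`. -/
theorem statement_1 (d m : ℕ) (hm : 1 ≤ m)
    (φ : EuclideanSpace ℝ (Fin d) → ℝ)
    (hconv : StrictConvexOn ℝ Set.univ φ) (hdiff : Differentiable ℝ φ)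
    (x : Fin m → EuclideanSpace ℝ (Fin d))
    (γ : Fin m → ℝ) (hγ : ∀ i, 0 < γ i)
    (Γ : ℝ) (hΓ : Γ = ∑ i, γ i)
    (ybar : EuclideanSpace ℝ (Fin d)) (hybar : ybar = (1 / Γ) • ∑ i, γ i • x i) :
    ∀ y : EuclideanSpace ℝ (Fin d), y ≠ ybar →
      (∑ i, γ i * bregman φ (x i) ybar) < ∑ i, γ i * bregman φ (x i) y := by
  intro y hy
  have : Nonempty (Fin m) := ⟨⟨0, hm⟩⟩
  have hΓpos : 0 < Γ := by
    rw [hΓ]; exact Finset.sum_pos (fun i _ => hγ i) Finset.univ_nonempty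
  have hsum : ∑ i, γ i • x i = Γ • ybar := by
    rw [hybar, smul_smul, mul_one_div, div_self hΓpos.ne', one_smul]
  have key : ∀ z : EuclideanSpace ℝ (Fin d),
      ∑ i, γ i * bregman φ (x i) z
        = ∑ i, γ i * φ (x i) - Γ * φ z - Γ * ⟪ybar - z, gradient φ z⟫ := by
    intro z
    have h1 : ∀ i : Fin m, γ i * bregman φ (x i) z
        = γ i * φ (x i) - γ i * φ z - ⟪γ i • (x i - z), gradient φ z⟫ := by
      intro i
      unfold bregman
      rw [real_inner_smul_left]
      ring
    rw [Finset.sum_congr rfl (fun i _ => h1 i)]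
    rw [Finset.sum_sub_distrib, Finset.sum_sub_distrib, ← Finset.sum_mul,
      ← sum_inner]
    have h2 : ∑ i, γ i • (x i - z) = Γ • (ybar - z) := by
      simp only [smul_sub]
      rw [Finset.sum_sub_distrib, hsum, ← Finset.sum_smul, ← hΓ, ← smul_sub]
    rw [h2, real_inner_smul_left, ← hΓ]
  have hby := bregman_pos hconv hdiff (x := ybar) (y := y) (Ne.symm hy)
  have h3 := key y
  have h4 := key ybar
  rw [sub_self, inner_zero_left] at h4
  unfold bregman at hby
  nlinarith [mul_pos hΓpos hby]
end

section
/- Let φ : ℝ^d → ℝ be strictly convex and differentiable with ∇φ a bijection from ℝ^d onto its image, let x_1,…,x_m ∈ ℝ^d and γ_1,…,γ_m > 0 with Γ = Σ_i γ_i, and suppose μ = (∇φ)^{-1}((1/Γ) Σ_i γ_i ∇φ(x_i)) is well defined. Then μ is the unique minimizer over y ∈ ℝ^d of the weighted total dual distortion y ↦ Σ_i γ_i D_φ(y‖x_i). -/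
open scoped RealInnerProductSpace BigOperators

/-- Strictly convex differentiable functions lie strictly above their tangent lines. -/
lemma tangent_lt {d : ℕ} {φ : EuclideanSpace ℝ (Fin d) → ℝ}
    (hconv : StrictConvexOn ℝ Set.univ φ) (hdiff : Differentiable ℝ φ)
    {y μ : EuclideanSpace ℝ (Fin d)} (hne : y ≠ μ) :
    ⟪y - μ, gradient φ μ⟫ < φ y - φ μ := by
  set v := y - μ with hv
  have hv0 : v ≠ 0 := sub_ne_zero.2 hne
  set g : ℝ → ℝ := fun t => φ (μ + t • v) with hg
  -- g is strictly convex on ℝ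
  have hgconv : StrictConvexOn ℝ Set.univ g := by
    refine ⟨convex_univ, fun p _ q _ hpq a b ha hb hab => ?_⟩
    have hpt : μ + p • v ≠ μ + q • v := by
      intro h
      apply hpq
      have : p • v = q • v := by
        have := add_left_cancel h
        exact this
      have h2 : (p - q) • v = 0 := by rw [sub_smul, this, sub_self]
      rcases smul_eq_zero.1 h2 with h3 | h3
      · linarith [sub_eq_zero.1 (by linarith [h3] : p - q = 0)]
      · exact absurd h3 hv0
    have := hconv.2 (Set.mem_univ (μ + p • v)) (Set.mem_univ (μ + q • v)) hpt ha hb hab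
    have harg : a • (μ + p • v) + b • (μ + q • v) = μ + (a * p + b * q) • v := by
      have h2 : a • (μ + p • v) + b • (μ + q • v) = (a + b) • μ + (a * p + b * q) • v := by
        module
      rw [h2, hab, one_smul]
    calc g (a • p + b • q) = φ (μ + (a * p + b * q) • v) := by
          simp [hg, smul_eq_mul]
      _ < a • φ (μ + p • v) + b • φ (μ + q • v) := by rw [← harg]; exact this
      _ = a • g p + b • g q := rfl
  -- derivative of g at 0
  have hline : HasDerivAt (fun t : ℝ => μ + t • v) v 0 := by
    simpa using ((hasDerivAt_id (0 : ℝ)).smul_const v).const_add μ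
  have hgrad : HasFDerivAt φ ((InnerProductSpace.toDual ℝ _) (gradient φ μ)) μ :=
    hasGradientAt_iff_hasFDerivAt.1 (hdiff μ).hasGradientAt
  have hgrad' : HasFDerivAt φ ((InnerProductSpace.toDual ℝ _) (gradient φ μ)) (μ + (0:ℝ) • v) := by
    simpa using hgrad
  have hgderiv : HasDerivAt g ⟪gradient φ μ, v⟫ 0 := by
    have := hgrad'.comp_hasDerivAt 0 hline
    exact this
  have := hgconv.lt_slope_of_hasDerivAt (Set.mem_univ (0:ℝ)) (Set.mem_univ (1:ℝ))
    zero_lt_one hgderiv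
  have hs : slope g 0 1 = φ y - φ μ := by
    simp [slope, hg, hv]
  rw [hs] at this
  calc ⟪y - μ, gradient φ μ⟫ = ⟪gradient φ μ, v⟫ := real_inner_comm _ _
    _ < φ y - φ μ := this

/-- the low-distortion aggregator `μ = (∇φ)⁻¹((1/Γ) Σ γᵢ ∇φ(xᵢ))` is the unique
minimizer of the weighted total dual distortion `y ↦ Σ γᵢ D_φ(y‖xᵢ)`. -/
theorem statement_3 (d m : ℕ) (hm : 1 ≤ m)
    (φ : EuclideanSpace ℝ (Fin d) → ℝ)
    (hconv : StrictConvexOn ℝ Set.univ φ) (hdiff : Differentiable ℝ φ)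
    (hinj : Function.Injective (gradient φ))
    (x : Fin m → EuclideanSpace ℝ (Fin d))
    (γ : Fin m → ℝ) (hγ : ∀ i, 0 < γ i)
    (Γ : ℝ) (hΓ : Γ = ∑ i, γ i)
    (μ : EuclideanSpace ℝ (Fin d))
    (hμ : gradient φ μ = (1 / Γ) • ∑ i, γ i • gradient φ (x i)) :
    ∀ y : EuclideanSpace ℝ (Fin d), y ≠ μ →
      (∑ i, γ i * bregman φ μ (x i)) < ∑ i, γ i * bregman φ y (x i) := by
  intro y hy
  have hmne : Nonempty (Fin m) := ⟨⟨0, hm⟩⟩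
  have hΓpos : 0 < Γ := by
    rw [hΓ]
    exact Finset.sum_pos (fun i _ => hγ i) Finset.univ_nonempty
  have hsum : ∑ i, γ i • gradient φ (x i) = Γ • gradient φ μ := by
    rw [hμ, smul_smul, mul_one_div, div_self hΓpos.ne', one_smul]
  have key : (∑ i, γ i * bregman φ y (x i)) - (∑ i, γ i * bregman φ μ (x i))
      = Γ * (φ y - φ μ - ⟪y - μ, gradient φ μ⟫) := by
    rw [← Finset.sum_sub_distrib]
    have h1 : ∀ i, γ i * bregman φ y (x i) - γ i * bregman φ μ (x i)
        = γ i * (φ y - φ μ) - ⟪y - μ, γ i • gradient φ (x i)⟫ := by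
      intro i
      rw [real_inner_smul_right]
      simp only [bregman]
      have : y - x i - (μ - x i) = y - μ := by abel
      rw [← this]
      simp only [inner_sub_left]
      ring
    simp_rw [h1]
    rw [Finset.sum_sub_distrib, ← Finset.sum_mul, ← inner_sum, hsum,
      real_inner_smul_right, ← hΓ]
    ring
  have htan := tangent_lt hconv hdiff hy
  nlinarith [mul_pos hΓpos (by linarith : (0:ℝ) < φ y - φ μ - ⟪y - μ, gradient φ μ⟫)]
end

section
/- Let I ⊆ ℝ be an open interval, let φ : I → ℝ be strictly convex and continuously differentiable with φ' a bijection from I onto an open interval J, fix m ≥ 1 and weights κ_1,…,κ_m > 0 with Σ_i κ_i = 1, and define μ_φ : I^m → ℝ by μ_φ(x_1,…,x_m) = (φ')^{-1}(Σ_i κ_i φ'(x_i)) and the dual aggregator μ_{φ⋆} : J^m → ℝ by μ_{φ⋆}(y_1,…,y_m) = φ'(Σ_i κ_i (φ')^{-1}(y_i)). Then μ_φ is concave on I^m if and only if μ_{φ⋆} is convex on J^m. -/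
open scoped BigOperators

open Set


lemma tconvexOn_of_continuousOn {f : ℝ × ℝ → ℝ} {s : Set (ℝ × ℝ)}
    (hs : Convex ℝ s) (hf : ContinuousOn f s) {t : ℝ} (ht0 : 0 < t) (ht1 : t < 1)
    (H : ∀ p ∈ s, ∀ q ∈ s, f (t • p + (1 - t) • q) ≤ t * f p + (1 - t) * f q) :
    ConvexOn ℝ s f := by
  refine ⟨hs, fun x hx y hy a b ha hb hab => ?_⟩
  have hb' : b = 1 - a := by linarith
  subst hb'
  set γ : ℝ → ℝ × ℝ := fun c => c • x + (1 - c) • y with hγ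
  have hγmem : ∀ c ∈ Icc (0:ℝ) 1, γ c ∈ s := fun c hc =>
    hs hx hy hc.1 (by linarith [hc.2]) (by ring)
  have hγcont : Continuous γ := by
    apply Continuous.add
    · exact continuous_id.smul continuous_const
    · exact (continuous_const.sub continuous_id).smul continuous_const
  set T : Set ℝ := Icc (0:ℝ) 1 ∩ (fun c => f (γ c) - (c * f x + (1 - c) * f y)) ⁻¹' Iic 0 with hT
  have hTmem : ∀ c, c ∈ T ↔ c ∈ Icc (0:ℝ) 1 ∧ f (γ c) ≤ c * f x + (1 - c) * f y := by
    intro c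
    simp [T, sub_nonpos]
  have h0 : (0:ℝ) ∈ T := (hTmem 0).2 ⟨⟨le_refl 0, zero_le_one⟩, by simp [γ]⟩
  have h1 : (1:ℝ) ∈ T := (hTmem 1).2 ⟨⟨zero_le_one, le_refl 1⟩, by simp [γ]⟩
  have hclosed : IsClosed T := by
    apply ContinuousOn.preimage_isClosed_of_isClosed _ isClosed_Icc isClosed_Iic
    apply ContinuousOn.sub
    · exact hf.comp hγcont.continuousOn hγmem
    · fun_prop
  have hop : ∀ c ∈ T, ∀ d ∈ T, t * c + (1 - t) * d ∈ T := by
    intro c hc d hd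
    rw [hTmem] at hc hd ⊢
    obtain ⟨⟨hc0, hc1⟩, hcle⟩ := hc
    obtain ⟨⟨hd0, hd1⟩, hdle⟩ := hd
    refine ⟨⟨by nlinarith, by nlinarith⟩, ?_⟩
    have hγeq : γ (t * c + (1 - t) * d) = t • γ c + (1 - t) • γ d := by
      simp only [γ, Prod.ext_iff, Prod.fst_add, Prod.snd_add, Prod.smul_fst, Prod.smul_snd,
        smul_eq_mul]
      constructor <;> ring
    rw [hγeq]
    calc f (t • γ c + (1 - t) • γ d) ≤ t * f (γ c) + (1 - t) * f (γ d) :=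
          H _ (hγmem c ⟨hc0, hc1⟩) _ (hγmem d ⟨hd0, hd1⟩)
      _ ≤ t * (c * f x + (1 - c) * f y) + (1 - t) * (d * f x + (1 - d) * f y) := by nlinarith
      _ = (t * c + (1 - t) * d) * f x + (1 - (t * c + (1 - t) * d)) * f y := by ring
  have hall : ∀ c ∈ Icc (0:ℝ) 1, c ∈ T := by
    intro c hc
    by_contra hnot
    have hS1ne : (T ∩ Iic c).Nonempty := ⟨0, h0, hc.1⟩
    have hS2ne : (T ∩ Ici c).Nonempty := ⟨1, h1, hc.2⟩
    have hS1c : IsClosed (T ∩ Iic c) := hclosed.inter isClosed_Iic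
    have hS2c : IsClosed (T ∩ Ici c) := hclosed.inter isClosed_Ici
    have hS1b : BddAbove (T ∩ Iic c) := ⟨c, fun u hu => hu.2⟩
    have hS2b : BddBelow (T ∩ Ici c) := ⟨c, fun u hu => hu.2⟩
    set u := sSup (T ∩ Iic c) with hu
    set v := sInf (T ∩ Ici c) with hv
    have huS : u ∈ T ∩ Iic c := hS1c.csSup_mem hS1ne hS1b
    have hvS : v ∈ T ∩ Ici c := hS2c.csInf_mem hS2ne hS2b
    have huc : u ≤ c := huS.2
    have hcv : c ≤ v := hvS.2
    have huv : u < v := by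
      rcases eq_or_lt_of_le (huc.trans hcv) with h | h
      · exfalso
        apply hnot
        have hueq : u = c := le_antisymm huc (h ▸ hcv)
        exact hueq ▸ huS.1
      · exact h
    set e := t * v + (1 - t) * u with he
    have heT : e ∈ T := hop v hvS.1 u huS.1
    have hue : u < e := by nlinarith
    have hev : e < v := by nlinarith
    rcases le_or_gt e c with h | h
    · exact absurd (le_csSup hS1b ⟨heT, h⟩) (not_le.2 hue)
    · exact absurd (csInf_le hS2b ⟨heT, h.le⟩) (not_le.2 hev)
  have := ((hTmem a).1 (hall a ⟨ha, by linarith⟩)).2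
  simpa [γ, smul_eq_mul] using this

lemma tconcaveOn_of_continuousOn {f : ℝ × ℝ → ℝ} {s : Set (ℝ × ℝ)}
    (hs : Convex ℝ s) (hf : ContinuousOn f s) {t : ℝ} (ht0 : 0 < t) (ht1 : t < 1)
    (H : ∀ p ∈ s, ∀ q ∈ s, t * f p + (1 - t) * f q ≤ f (t • p + (1 - t) • q)) :
    ConcaveOn ℝ s f := by
  have h : ConvexOn ℝ s (fun p => -(f p)) := by
    apply tconvexOn_of_continuousOn hs hf.neg ht0 ht1
    intro p hp q hq
    have := H p hp q hq
    simp only [Pi.neg_apply]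
    linarith
  refine ⟨hs, fun x hx y hy a b ha hb hab => ?_⟩
  have := h.2 hx hy ha hb hab
  simp only [smul_eq_mul] at this ⊢
  linarith


/-- the quasi-arithmetic aggregator `μ_φ = (φ')⁻¹(Σ κᵢ φ'(xᵢ))` is concave on
`I^m` if and only if the dual aggregator `μ_{φ⋆} = φ'(Σ κᵢ (φ')⁻¹(yᵢ))` is convex on `J^m`. -/
theorem statement_4 (m : ℕ) (hm : 1 ≤ m)
    (I J : Set ℝ) (hIo : IsOpen I) (hIc : Convex ℝ I) (hJo : IsOpen J) (hJc : Convex ℝ J)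
    (φ Dφ ψ : ℝ → ℝ)
    (hconv : StrictConvexOn ℝ I φ)
    (hder : ∀ t ∈ I, HasDerivAt φ (Dφ t) t)
    (hDcont : ContinuousOn Dφ I)
    (hbij : Set.BijOn Dφ I J)
    (hψmaps : Set.MapsTo ψ J I)
    (hψ1 : ∀ t ∈ I, ψ (Dφ t) = t)
    (hψ2 : ∀ y ∈ J, Dφ (ψ y) = y)
    (κ : Fin m → ℝ) (hκ : ∀ i, 0 < κ i) (hκ1 : (∑ i, κ i) = 1) :
    ConcaveOn ℝ {x : Fin m → ℝ | ∀ i, x i ∈ I} (fun x => ψ (∑ i, κ i * Dφ (x i)))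
      ↔ ConvexOn ℝ {y : Fin m → ℝ | ∀ i, y i ∈ J} (fun y => Dφ (∑ i, κ i * ψ (y i))) := by
  classical
  -- convexity of the product sets
  have hSIconv : Convex ℝ {x : Fin m → ℝ | ∀ i, x i ∈ I} := by
    intro x hx y hy a b ha hb hab i
    simpa using hIc (hx i) (hy i) ha hb hab
  have hSJconv : Convex ℝ {y : Fin m → ℝ | ∀ i, y i ∈ J} := by
    intro x hx y hy a b ha hb hab i
    simpa using hJc (hx i) (hy i) ha hb hab
  -- the case m = 1 is trivial: both aggregators are the identity
  rcases (by omega : m = 1 ∨ 2 ≤ m) with hm1 | hm2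
  · subst hm1
    have hk : κ 0 = 1 := by simpa using hκ1
    constructor
    · intro _
      refine ⟨hSJconv, ?_⟩
      intro y hy y' hy' a b ha hb hab
      have hmem : a * y 0 + b * y' 0 ∈ J := by simpa using hJc (hy 0) (hy' 0) ha hb hab
      have e : ∀ (w : Fin 1 → ℝ), w 0 ∈ J → Dφ (∑ i, κ i * ψ (w i)) = w 0 := fun w hw => by
        rw [Fin.sum_univ_one, hk, one_mul, hψ2 _ hw]
      show Dφ (∑ i, κ i * ψ ((a • y + b • y') i)) ≤
        a • Dφ (∑ i, κ i * ψ (y i)) + b • Dφ (∑ i, κ i * ψ (y' i))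
      rw [e y (hy 0), e y' (hy' 0), e (a • y + b • y') (by simpa using hmem)]
      simp
    · intro _
      refine ⟨hSIconv, ?_⟩
      intro x hx x' hx' a b ha hb hab
      have hmem : a * x 0 + b * x' 0 ∈ I := by simpa using hIc (hx 0) (hx' 0) ha hb hab
      have e : ∀ (w : Fin 1 → ℝ), w 0 ∈ I → ψ (∑ i, κ i * Dφ (w i)) = w 0 := fun w hw => by
        rw [Fin.sum_univ_one, hk, one_mul, hψ1 _ hw]
      show a • ψ (∑ i, κ i * Dφ (x i)) + b • ψ (∑ i, κ i * Dφ (x' i)) ≤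
        ψ (∑ i, κ i * Dφ ((a • x + b • x') i))
      rw [e x (hx 0), e x' (hx' 0), e (a • x + b • x') (by simpa using hmem)]
      simp
  -- main case : m ≥ 2
  -- basic monotonicity and continuity facts
  have hDm : StrictMonoOn Dφ I := fun x hx y hy hxy =>
    (hconv.lt_slope_of_hasDerivAt hx hy hxy (hder x hx)).trans
      (hconv.slope_lt_of_hasDerivAt hx hy hxy (hder y hy))
  have hDmono : MonotoneOn Dφ I := hDm.monotoneOn
  have hψm : MonotoneOn ψ J := by
    intro u hu v hv huv
    by_contra hlt
    push_neg at hlt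
    have := hDm (hψmaps hv) (hψmaps hu) hlt
    rw [hψ2 u hu, hψ2 v hv] at this
    exact absurd this (not_lt.2 huv)
  have hsurj : I ⊆ ψ '' J := fun t ht => ⟨Dφ t, hbij.mapsTo ht, hψ1 t ht⟩
  have hψcont : ContinuousOn ψ J := by
    intro y hy
    refine (continuousAt_of_monotoneOn_of_image_mem_nhds hψm (hJo.mem_nhds hy)
      ?_).continuousWithinAt
    exact Filter.mem_of_superset (hIo.mem_nhds (hψmaps hy)) hsurj
  -- weights
  have hκ0 : ∀ i, (0:ℝ) ≤ κ i := fun i => (hκ i).le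
  set i0 : Fin m := ⟨0, by omega⟩ with hi0def
  set i1 : Fin m := ⟨1, by omega⟩ with hi1def
  have hne : i1 ≠ i0 := by simp [hi0def, hi1def, Fin.ext_iff]
  have herase : ∑ i ∈ Finset.univ.erase i0, κ i = 1 - κ i0 := by
    have h := Finset.add_sum_erase Finset.univ κ (Finset.mem_univ i0)
    rw [hκ1] at h
    linarith
  have hκlt : κ i0 < 1 := by
    have h1 : κ i1 ≤ ∑ i ∈ Finset.univ.erase i0, κ i :=
      Finset.single_le_sum (fun i _ => hκ0 i) (Finset.mem_erase.2 ⟨hne, Finset.mem_univ i1⟩)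
    have := hκ i1
    rw [herase] at h1
    linarith
  -- generic decomposition of κ-sums of two-valued families
  have key : ∀ (E : Type) [AddCommMonoid E] [Module ℝ E], ∀ p q : E,
      (∑ i, κ i • (if i = i0 then p else q)) = κ i0 • p + (1 - κ i0) • q := by
    intro E _ _ p q
    rw [← Finset.add_sum_erase Finset.univ _ (Finset.mem_univ i0)]
    simp only [if_pos rfl]
    congr 1
    rw [Finset.sum_congr rfl (fun i hi => by rw [if_neg (Finset.ne_of_mem_erase hi)]),
      ← Finset.sum_smul, herase]
  -- from the κ-Jensen inequality to the t-inequality (t = κ i0), convex version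
  have tineq : ∀ (f : ℝ × ℝ → ℝ) (s : Set (ℝ × ℝ)),
      (∀ z : Fin m → ℝ × ℝ, (∀ i, z i ∈ s) → f (∑ i, κ i • z i) ≤ ∑ i, κ i * f (z i)) →
      ∀ p ∈ s, ∀ q ∈ s, f (κ i0 • p + (1 - κ i0) • q) ≤ κ i0 * f p + (1 - κ i0) * f q := by
    intro f s HJ p hp q hq
    have hz : ∀ i, (if i = i0 then p else q) ∈ s := fun i => by
      by_cases h : i = i0 <;> simp [h, hp, hq]
    have h := HJ (fun i => if i = i0 then p else q) hz
    simp only [apply_ite f] at h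
    have h2 : (∑ i, κ i * if i = i0 then f p else f q) = κ i0 * f p + (1 - κ i0) * f q := by
      have := key ℝ (f p) (f q)
      simpa [smul_eq_mul] using this
    rw [key (ℝ × ℝ) p q, h2] at h
    exact h
  -- concave version
  have tineqC : ∀ (f : ℝ × ℝ → ℝ) (s : Set (ℝ × ℝ)),
      (∀ z : Fin m → ℝ × ℝ, (∀ i, z i ∈ s) → ∑ i, κ i * f (z i) ≤ f (∑ i, κ i • z i)) →
      ∀ p ∈ s, ∀ q ∈ s, κ i0 * f p + (1 - κ i0) * f q ≤ f (κ i0 • p + (1 - κ i0) • q) := by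
    intro f s HJ p hp q hq
    have hz : ∀ i, (if i = i0 then p else q) ∈ s := fun i => by
      by_cases h : i = i0 <;> simp [h, hp, hq]
    have h := HJ (fun i => if i = i0 then p else q) hz
    simp only [apply_ite f] at h
    have h2 : (∑ i, κ i * if i = i0 then f p else f q) = κ i0 * f p + (1 - κ i0) * f q := by
      have := key ℝ (f p) (f q)
      simpa [smul_eq_mul] using this
    rw [key (ℝ × ℝ) p q, h2] at h
    exact h
  -- convexity of the product sets in ℝ × ℝ
  have hUc : Convex ℝ (J ×ˢ J) := hJc.prod hJc
  have hVc : Convex ℝ (I ×ˢ I) := hIc.prod hIc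
  -- membership helpers
  have hcombI : ∀ l : ℝ, 0 ≤ l → l ≤ 1 → ∀ a ∈ I, ∀ b ∈ I, l * a + (1 - l) * b ∈ I := by
    intro l h0 h1 a ha b hb
    simpa using hIc ha hb h0 (by linarith) (by ring)
  have hcombJ : ∀ l : ℝ, 0 ≤ l → l ≤ 1 → ∀ a ∈ J, ∀ b ∈ J, l * a + (1 - l) * b ∈ J := by
    intro l h0 h1 a ha b hb
    simpa using hJc ha hb h0 (by linarith) (by ring)
  have hsumJ : ∀ (v : Fin m → ℝ), (∀ i, v i ∈ J) → (∑ i, κ i * v i) ∈ J := by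
    intro v hv
    simpa [smul_eq_mul] using hJc.sum_mem (fun i _ => hκ0 i) hκ1 (fun i _ => hv i)
  have hsumI : ∀ (v : Fin m → ℝ), (∀ i, v i ∈ I) → (∑ i, κ i * v i) ∈ I := by
    intro v hv
    simpa [smul_eq_mul] using hIc.sum_mem (fun i _ => hκ0 i) hκ1 (fun i _ => hv i)
  -- continuity of the two-variable families
  have hNcont : ∀ l : ℝ, 0 ≤ l → l ≤ 1 →
      ContinuousOn (fun p : ℝ × ℝ => Dφ (l * ψ p.1 + (1 - l) * ψ p.2)) (J ×ˢ J) := by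
    intro l h0 h1
    have hinner : ContinuousOn (fun p : ℝ × ℝ => l * ψ p.1 + (1 - l) * ψ p.2) (J ×ˢ J) := by
      apply ContinuousOn.add
      · exact continuousOn_const.mul (hψcont.comp continuousOn_fst (fun p hp => hp.1))
      · exact continuousOn_const.mul (hψcont.comp continuousOn_snd (fun p hp => hp.2))
    exact hDcont.comp hinner
      (fun p hp => hcombI l h0 h1 _ (hψmaps hp.1) _ (hψmaps hp.2))
  have hMcont : ∀ l : ℝ, 0 ≤ l → l ≤ 1 →
      ContinuousOn (fun p : ℝ × ℝ => ψ (l * Dφ p.1 + (1 - l) * Dφ p.2)) (I ×ˢ I) := by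
    intro l h0 h1
    have hinner : ContinuousOn (fun p : ℝ × ℝ => l * Dφ p.1 + (1 - l) * Dφ p.2) (I ×ˢ I) := by
      apply ContinuousOn.add
      · exact continuousOn_const.mul (hDcont.comp continuousOn_fst (fun p hp => hp.1))
      · exact continuousOn_const.mul (hDcont.comp continuousOn_snd (fun p hp => hp.2))
    exact hψcont.comp hinner
      (fun p hp => hcombJ l h0 h1 _ (hbij.mapsTo hp.1) _ (hbij.mapsTo hp.2))
  constructor
  · -- forward direction
    intro hcc
    -- Step A : each N l is convex on J ×ˢ J
    have hNconv : ∀ l : ℝ, 0 ≤ l → l ≤ 1 →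
        ConvexOn ℝ (J ×ˢ J) (fun p : ℝ × ℝ => Dφ (l * ψ p.1 + (1 - l) * ψ p.2)) := by
      intro l h0 h1
      have hl1 : (0:ℝ) ≤ 1 - l := by linarith
      have HJ : ∀ z : Fin m → ℝ × ℝ, (∀ i, z i ∈ J ×ˢ J) →
          (fun p : ℝ × ℝ => Dφ (l * ψ p.1 + (1 - l) * ψ p.2)) (∑ i, κ i • z i) ≤
            ∑ i, κ i * (fun p : ℝ × ℝ => Dφ (l * ψ p.1 + (1 - l) * ψ p.2)) (z i) := by
        intro z hz
        have hz1 : ∀ i, (z i).1 ∈ J := fun i => (hz i).1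
        have hz2 : ∀ i, (z i).2 ∈ J := fun i => (hz i).2
        have hxI : ∀ i, ψ ((z i).1) ∈ I := fun i => hψmaps (hz1 i)
        have hx'I : ∀ i, ψ ((z i).2) ∈ I := fun i => hψmaps (hz2 i)
        have hkey := hcc.2 (x := fun i => ψ ((z i).1)) (y := fun i => ψ ((z i).2))
          hxI hx'I h0 hl1 (by ring)
        simp only [smul_eq_mul, Pi.add_apply, Pi.smul_apply] at hkey
        have e1 : (∑ i, κ i * Dφ (ψ ((z i).1))) = ∑ i, κ i * (z i).1 :=
          Finset.sum_congr rfl fun i _ => by rw [hψ2 _ (hz1 i)]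
        have e2 : (∑ i, κ i * Dφ (ψ ((z i).2))) = ∑ i, κ i * (z i).2 :=
          Finset.sum_congr rfl fun i _ => by rw [hψ2 _ (hz2 i)]
        rw [e1, e2] at hkey
        -- hkey : l * ψ A1 + (1-l) * ψ A2 ≤ ψ B
        have hA1 : (∑ i, κ i * (z i).1) ∈ J := hsumJ _ hz1
        have hA2 : (∑ i, κ i * (z i).2) ∈ J := hsumJ _ hz2
        have hBl : ∀ i, l * ψ ((z i).1) + (1 - l) * ψ ((z i).2) ∈ I :=
          fun i => hcombI l h0 h1 _ (hxI i) _ (hx'I i)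
        have hBJ : (∑ i, κ i * Dφ (l * ψ ((z i).1) + (1 - l) * ψ ((z i).2))) ∈ J :=
          hsumJ _ (fun i => hbij.mapsTo (hBl i))
        have hRI : l * ψ (∑ i, κ i * (z i).1) + (1 - l) * ψ (∑ i, κ i * (z i).2) ∈ I :=
          hcombI l h0 h1 _ (hψmaps hA1) _ (hψmaps hA2)
        have h4 := hDmono hRI (hψmaps hBJ) hkey
        rw [hψ2 _ hBJ] at h4
        have hc1 : (∑ i, κ i • z i).1 = ∑ i, κ i * (z i).1 := by simp [Prod.fst_sum]
        have hc2 : (∑ i, κ i • z i).2 = ∑ i, κ i * (z i).2 := by simp [Prod.snd_sum]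
        simp only []
        rw [hc1, hc2]
        exact h4
      exact tconvexOn_of_continuousOn hUc (hNcont l h0 h1) (hκ i0) hκlt
        (tineq (fun p : ℝ × ℝ => Dφ (l * ψ p.1 + (1 - l) * ψ p.2)) (J ×ˢ J) HJ)
    -- Step B : each M θ is concave on I ×ˢ I
    have hMconc : ∀ θ : ℝ, 0 ≤ θ → θ ≤ 1 →
        ConcaveOn ℝ (I ×ˢ I) (fun p : ℝ × ℝ => ψ (θ * Dφ p.1 + (1 - θ) * Dφ p.2)) := by
      intro θ h0 h1
      have h1' : (0:ℝ) ≤ 1 - θ := by linarith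
      refine ⟨hVc, ?_⟩
      intro p hp q hq a b ha hb hab
      have hb' : b = 1 - a := by linarith
      subst hb'
      have ha1 : a ≤ 1 := by linarith
      have hp1 : p.1 ∈ I := hp.1
      have hp2 : p.2 ∈ I := hp.2
      have hq1 : q.1 ∈ I := hq.1
      have hq2 : q.2 ∈ I := hq.2
      have hP : (Dφ p.1, Dφ q.1) ∈ J ×ˢ J :=
        Set.mem_prod.2 ⟨hbij.mapsTo hp1, hbij.mapsTo hq1⟩
      have hQ : (Dφ p.2, Dφ q.2) ∈ J ×ˢ J :=
        Set.mem_prod.2 ⟨hbij.mapsTo hp2, hbij.mapsTo hq2⟩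
      have hkey := (hNconv a ha ha1).2 hP hQ h0 h1' (by ring)
      simp only [Prod.smul_mk, Prod.mk_add_mk, smul_eq_mul] at hkey
      rw [hψ1 _ hp1, hψ1 _ hq1, hψ1 _ hp2, hψ1 _ hq2] at hkey
      -- hkey : Dφ (a * M θ p + (1-a) * M θ q) ≤ θ * Dφ (a p.1 + (1-a) q.1) + (1-θ) * Dφ (a p.2 + (1-a) q.2)
      have hMpI : ψ (θ * Dφ p.1 + (1 - θ) * Dφ p.2) ∈ I :=
        hψmaps (hcombJ θ h0 h1 _ (hbij.mapsTo hp1) _ (hbij.mapsTo hp2))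
      have hMqI : ψ (θ * Dφ q.1 + (1 - θ) * Dφ q.2) ∈ I :=
        hψmaps (hcombJ θ h0 h1 _ (hbij.mapsTo hq1) _ (hbij.mapsTo hq2))
      have hLI : a * ψ (θ * Dφ p.1 + (1 - θ) * Dφ p.2)
          + (1 - a) * ψ (θ * Dφ q.1 + (1 - θ) * Dφ q.2) ∈ I :=
        hcombI a ha ha1 _ hMpI _ hMqI
      have hcomb1 : a * p.1 + (1 - a) * q.1 ∈ I := hcombI a ha ha1 _ hp1 _ hq1
      have hcomb2 : a * p.2 + (1 - a) * q.2 ∈ I := hcombI a ha ha1 _ hp2 _ hq2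
      have hRJ : θ * Dφ (a * p.1 + (1 - a) * q.1) + (1 - θ) * Dφ (a * p.2 + (1 - a) * q.2) ∈ J :=
        hcombJ θ h0 h1 _ (hbij.mapsTo hcomb1) _ (hbij.mapsTo hcomb2)
      have h5 := hψm (hbij.mapsTo hLI) hRJ hkey
      rw [hψ1 _ hLI] at h5
      simp only [smul_eq_mul, Prod.fst_add, Prod.snd_add, Prod.smul_fst, Prod.smul_snd]
      exact h5
    -- Step C : conclude convexity of the dual aggregator
    refine ⟨hSJconv, ?_⟩
    intro y hy y' hy' a b ha hb hab
    have hb' : b = 1 - a := by linarith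
    subst hb'
    have ha1 : a ≤ 1 := by linarith
    have hzV : ∀ i, (ψ (y i), ψ (y' i)) ∈ I ×ˢ I :=
      fun i => Set.mem_prod.2 ⟨hψmaps (hy i), hψmaps (hy' i)⟩
    have hkey := (hMconc a ha ha1).le_map_sum (t := Finset.univ)
      (w := κ) (p := fun i => (ψ (y i), ψ (y' i)))
      (fun i _ => hκ0 i) hκ1 (fun i _ => hzV i)
    simp only [smul_eq_mul] at hkey
    have hc1 : (∑ i, κ i • (ψ (y i), ψ (y' i))).1 = ∑ i, κ i * ψ (y i) := by
      simp [Prod.fst_sum]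
    have hc2 : (∑ i, κ i • (ψ (y i), ψ (y' i))).2 = ∑ i, κ i * ψ (y' i) := by
      simp [Prod.snd_sum]
    rw [hc1, hc2] at hkey
    have e1 : (∑ i, κ i * ψ (a * Dφ (ψ (y i)) + (1 - a) * Dφ (ψ (y' i)))) =
        ∑ i, κ i * ψ (a * y i + (1 - a) * y' i) :=
      Finset.sum_congr rfl fun i _ => by rw [hψ2 _ (hy i), hψ2 _ (hy' i)]
    rw [e1] at hkey
    -- hkey : ∑ κ i * ψ (a y i + (1-a) y' i) ≤ ψ (a Dφ (Sy) + (1-a) Dφ (Sy'))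
    have hLmem : (∑ i, κ i * ψ (a * y i + (1 - a) * y' i)) ∈ I :=
      hsumI _ (fun i => hψmaps (hcombJ a ha ha1 _ (hy i) _ (hy' i)))
    have hSy : (∑ i, κ i * ψ (y i)) ∈ I := hsumI _ (fun i => hψmaps (hy i))
    have hSy' : (∑ i, κ i * ψ (y' i)) ∈ I := hsumI _ (fun i => hψmaps (hy' i))
    have hCJ : a * Dφ (∑ i, κ i * ψ (y i)) + (1 - a) * Dφ (∑ i, κ i * ψ (y' i)) ∈ J :=
      hcombJ a ha ha1 _ (hbij.mapsTo hSy) _ (hbij.mapsTo hSy')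
    have h6 := hDmono hLmem (hψmaps hCJ) hkey
    rw [hψ2 _ hCJ] at h6
    have e2 : (∑ i, κ i * ψ ((a • y + (1 - a) • y') i)) =
        ∑ i, κ i * ψ (a * y i + (1 - a) * y' i) :=
      Finset.sum_congr rfl fun i _ => by simp [smul_eq_mul]
    simp only [smul_eq_mul]
    rw [e2]
    exact h6
  · -- backward direction
    intro hcv
    -- Step A' : each M θ is concave on I ×ˢ I
    have hMconc : ∀ θ : ℝ, 0 ≤ θ → θ ≤ 1 →
        ConcaveOn ℝ (I ×ˢ I) (fun p : ℝ × ℝ => ψ (θ * Dφ p.1 + (1 - θ) * Dφ p.2)) := by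
      intro θ h0 h1
      have h1' : (0:ℝ) ≤ 1 - θ := by linarith
      have HJ : ∀ z : Fin m → ℝ × ℝ, (∀ i, z i ∈ I ×ˢ I) →
          ∑ i, κ i * (fun p : ℝ × ℝ => ψ (θ * Dφ p.1 + (1 - θ) * Dφ p.2)) (z i) ≤
            (fun p : ℝ × ℝ => ψ (θ * Dφ p.1 + (1 - θ) * Dφ p.2)) (∑ i, κ i • z i) := by
        intro z hz
        have hz1 : ∀ i, (z i).1 ∈ I := fun i => (hz i).1
        have hz2 : ∀ i, (z i).2 ∈ I := fun i => (hz i).2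
        have hyJ : ∀ i, Dφ ((z i).1) ∈ J := fun i => hbij.mapsTo (hz1 i)
        have hy'J : ∀ i, Dφ ((z i).2) ∈ J := fun i => hbij.mapsTo (hz2 i)
        have hkey := hcv.2 (x := fun i => Dφ ((z i).1)) (y := fun i => Dφ ((z i).2))
          hyJ hy'J h0 h1' (by ring)
        simp only [smul_eq_mul, Pi.add_apply, Pi.smul_apply] at hkey
        have e1 : (∑ i, κ i * ψ (Dφ ((z i).1))) = ∑ i, κ i * (z i).1 :=
          Finset.sum_congr rfl fun i _ => by rw [hψ1 _ (hz1 i)]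
        have e2 : (∑ i, κ i * ψ (Dφ ((z i).2))) = ∑ i, κ i * (z i).2 :=
          Finset.sum_congr rfl fun i _ => by rw [hψ1 _ (hz2 i)]
        rw [e1, e2] at hkey
        -- hkey : Dφ (∑ κ i * ψ (θ Dφ z1 + (1-θ) Dφ z2)) ≤ θ * Dφ (∑ κ z1) + (1-θ) * Dφ (∑ κ z2)
        have hSI : (∑ i, κ i * ψ (θ * Dφ ((z i).1) + (1 - θ) * Dφ ((z i).2))) ∈ I :=
          hsumI _ (fun i => hψmaps (hcombJ θ h0 h1 _ (hyJ i) _ (hy'J i)))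
        have hB1 : (∑ i, κ i * (z i).1) ∈ I := hsumI _ hz1
        have hB2 : (∑ i, κ i * (z i).2) ∈ I := hsumI _ hz2
        have hCJ : θ * Dφ (∑ i, κ i * (z i).1) + (1 - θ) * Dφ (∑ i, κ i * (z i).2) ∈ J :=
          hcombJ θ h0 h1 _ (hbij.mapsTo hB1) _ (hbij.mapsTo hB2)
        have h4 := hψm (hbij.mapsTo hSI) hCJ hkey
        rw [hψ1 _ hSI] at h4
        have hc1 : (∑ i, κ i • z i).1 = ∑ i, κ i * (z i).1 := by simp [Prod.fst_sum]
        have hc2 : (∑ i, κ i • z i).2 = ∑ i, κ i * (z i).2 := by simp [Prod.snd_sum]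
        simp only []
        rw [hc1, hc2]
        exact h4
      exact tconcaveOn_of_continuousOn hVc (hMcont θ h0 h1) (hκ i0) hκlt
        (tineqC (fun p : ℝ × ℝ => ψ (θ * Dφ p.1 + (1 - θ) * Dφ p.2)) (I ×ˢ I) HJ)
    -- Step B' : each N l is convex on J ×ˢ J
    have hNconv : ∀ l : ℝ, 0 ≤ l → l ≤ 1 →
        ConvexOn ℝ (J ×ˢ J) (fun p : ℝ × ℝ => Dφ (l * ψ p.1 + (1 - l) * ψ p.2)) := by
      intro l h0 h1
      have h1' : (0:ℝ) ≤ 1 - l := by linarith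
      refine ⟨hUc, ?_⟩
      intro p hp q hq a b ha hb hab
      have hb' : b = 1 - a := by linarith
      subst hb'
      have ha1 : a ≤ 1 := by linarith
      have hp1 : p.1 ∈ J := hp.1
      have hp2 : p.2 ∈ J := hp.2
      have hq1 : q.1 ∈ J := hq.1
      have hq2 : q.2 ∈ J := hq.2
      have hP : (ψ p.1, ψ q.1) ∈ I ×ˢ I :=
        Set.mem_prod.2 ⟨hψmaps hp1, hψmaps hq1⟩
      have hQ : (ψ p.2, ψ q.2) ∈ I ×ˢ I :=
        Set.mem_prod.2 ⟨hψmaps hp2, hψmaps hq2⟩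
      have hkey := (hMconc a ha ha1).2 hP hQ h0 h1' (by ring)
      simp only [Prod.smul_mk, Prod.mk_add_mk, smul_eq_mul] at hkey
      rw [hψ2 _ hp1, hψ2 _ hq1, hψ2 _ hp2, hψ2 _ hq2] at hkey
      -- hkey : a * ψ (l ψ p.1 + (1-l) ψ p.2)-type combo ≤ ψ (...)
      have hNpJ : Dφ (l * ψ p.1 + (1 - l) * ψ p.2) ∈ J :=
        hbij.mapsTo (hcombI l h0 h1 _ (hψmaps hp1) _ (hψmaps hp2))
      have hNqJ : Dφ (l * ψ q.1 + (1 - l) * ψ q.2) ∈ J :=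
        hbij.mapsTo (hcombI l h0 h1 _ (hψmaps hq1) _ (hψmaps hq2))
      have hRJ : a * Dφ (l * ψ p.1 + (1 - l) * ψ p.2)
          + (1 - a) * Dφ (l * ψ q.1 + (1 - l) * ψ q.2) ∈ J :=
        hcombJ a ha ha1 _ hNpJ _ hNqJ
      have hcomb1 : a * p.1 + (1 - a) * q.1 ∈ J := hcombJ a ha ha1 _ hp1 _ hq1
      have hcomb2 : a * p.2 + (1 - a) * q.2 ∈ J := hcombJ a ha ha1 _ hp2 _ hq2
      have hLI : l * ψ (a * p.1 + (1 - a) * q.1) + (1 - l) * ψ (a * p.2 + (1 - a) * q.2) ∈ I :=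
        hcombI l h0 h1 _ (hψmaps hcomb1) _ (hψmaps hcomb2)
      have h5 := hDmono hLI (hψmaps hRJ) hkey
      rw [hψ2 _ hRJ] at h5
      simp only [smul_eq_mul, Prod.fst_add, Prod.snd_add, Prod.smul_fst, Prod.smul_snd]
      exact h5
    -- Step C' : conclude concavity of the aggregator
    refine ⟨hSIconv, ?_⟩
    intro x hx x' hx' a b ha hb hab
    have hb' : b = 1 - a := by linarith
    subst hb'
    have ha1 : a ≤ 1 := by linarith
    have hzU : ∀ i, (Dφ (x i), Dφ (x' i)) ∈ J ×ˢ J :=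
      fun i => Set.mem_prod.2 ⟨hbij.mapsTo (hx i), hbij.mapsTo (hx' i)⟩
    have hkey := (hNconv a ha ha1).map_sum_le (t := Finset.univ)
      (w := κ) (p := fun i => (Dφ (x i), Dφ (x' i)))
      (fun i _ => hκ0 i) hκ1 (fun i _ => hzU i)
    simp only [smul_eq_mul] at hkey
    have hc1 : (∑ i, κ i • (Dφ (x i), Dφ (x' i))).1 = ∑ i, κ i * Dφ (x i) := by
      simp [Prod.fst_sum]
    have hc2 : (∑ i, κ i • (Dφ (x i), Dφ (x' i))).2 = ∑ i, κ i * Dφ (x' i) := by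
      simp [Prod.snd_sum]
    rw [hc1, hc2] at hkey
    have e1 : (∑ i, κ i * Dφ (a * ψ (Dφ (x i)) + (1 - a) * ψ (Dφ (x' i)))) =
        ∑ i, κ i * Dφ (a * x i + (1 - a) * x' i) :=
      Finset.sum_congr rfl fun i _ => by rw [hψ1 _ (hx i), hψ1 _ (hx' i)]
    rw [e1] at hkey
    -- hkey : Dφ (a ψ (SDx) + (1-a) ψ (SDx')) ≤ ∑ κ i * Dφ (a x i + (1-a) x' i)
    have hSDx : (∑ i, κ i * Dφ (x i)) ∈ J := hsumJ _ (fun i => hbij.mapsTo (hx i))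
    have hSDx' : (∑ i, κ i * Dφ (x' i)) ∈ J := hsumJ _ (fun i => hbij.mapsTo (hx' i))
    have hLI : a * ψ (∑ i, κ i * Dφ (x i)) + (1 - a) * ψ (∑ i, κ i * Dφ (x' i)) ∈ I :=
      hcombI a ha ha1 _ (hψmaps hSDx) _ (hψmaps hSDx')
    have hRJ : (∑ i, κ i * Dφ (a * x i + (1 - a) * x' i)) ∈ J :=
      hsumJ _ (fun i => hbij.mapsTo (hcombI a ha ha1 _ (hx i) _ (hx' i)))
    have h6 := hψm (hbij.mapsTo hLI) hRJ hkey
    rw [hψ1 _ hLI] at h6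
    have e2 : (∑ i, κ i * Dφ ((a • x + (1 - a) • x') i)) =
        ∑ i, κ i * Dφ (a * x i + (1 - a) * x' i) :=
      Finset.sum_congr rfl fun i _ => by simp [smul_eq_mul]
    simp only [smul_eq_mul]
    rw [e2]
    exact h6
end

section
/- Let x_⋆ be the LDA on (0,∞)^m with generator φ and weights γ_1,…,γ_m > 0, Γ = Σ_i γ_i. If x_⋆ is concave on (0,∞)^m, then x_⋆(x_1,…,x_m) ≤ Σ_{i=1}^m γ_i x_i for all (x_1,…,x_m) ∈ (0,∞)^m. If x_⋆ is convex on (0,∞)^m, then x_⋆(x_1,…,x_m) ≥ Σ_{i=1}^m γ_i x_i for all (x_1,…,x_m) ∈ (0,∞)^m. -/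
open scoped BigOperators
open Filter Topology Set

/-- if the LDA `x⋆(x) = Γ·(φ')⁻¹((1/Γ)·Σ γᵢ φ'(xᵢ))` is concave on `(0,∞)^m`
then it is bounded above by `Σ γᵢ xᵢ`; if it is convex, it is bounded below by `Σ γᵢ xᵢ`.
The LDA is encoded by its defining property: `x⋆(x)/Γ > 0` and
`φ'(x⋆(x)/Γ) = (1/Γ)·Σ γᵢ φ'(xᵢ)`. -/
theorem statement_5 (m : ℕ) (φ Dφ DDφ : ℝ → ℝ)
    (hconv : StrictConvexOn ℝ (Set.Ioi 0) φ)
    (hd1 : ∀ t ∈ Set.Ioi (0:ℝ), HasDerivAt φ (Dφ t) t)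
    (hd2 : ∀ t ∈ Set.Ioi (0:ℝ), HasDerivAt Dφ (DDφ t) t)
    (hc2 : ContinuousOn DDφ (Set.Ioi 0))
    (hpos : ∀ t ∈ Set.Ioi (0:ℝ), 0 < DDφ t)
    (γ : Fin m → ℝ) (hγ : ∀ i, 0 < γ i)
    (Γ : ℝ) (hΓ : Γ = ∑ i, γ i)
    (f : (Fin m → ℝ) → ℝ)
    (hf : ∀ x : Fin m → ℝ, (∀ i, 0 < x i) →
      0 < f x / Γ ∧ Dφ (f x / Γ) = (1 / Γ) * ∑ i, γ i * Dφ (x i)) :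
    (ConcaveOn ℝ {x : Fin m → ℝ | ∀ i, 0 < x i} f →
      ∀ x : Fin m → ℝ, (∀ i, 0 < x i) → f x ≤ ∑ i, γ i * x i)
    ∧ (ConvexOn ℝ {x : Fin m → ℝ | ∀ i, 0 < x i} f →
      ∀ x : Fin m → ℝ, (∀ i, 0 < x i) → (∑ i, γ i * x i) ≤ f x) := by
  rcases Nat.eq_zero_or_pos m with hm | hm
  · exfalso
    have h0 : Γ = 0 := by subst hm; simpa using hΓ
    have h1 := (hf (fun _ => 1) (fun _ => one_pos)).1
    rw [h0, div_zero] at h1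
    exact lt_irrefl 0 h1
  have hne : Nonempty (Fin m) := ⟨⟨0, hm⟩⟩
  have hΓpos : 0 < Γ := by
    rw [hΓ]; exact Finset.sum_pos (fun i _ => hγ i) Finset.univ_nonempty
  have hΓne : Γ ≠ 0 := ne_of_gt hΓpos
  -- Dφ is strictly monotone on (0,∞)
  have hmono : StrictMonoOn Dφ (Set.Ioi 0) := by
    apply strictMonoOn_of_deriv_pos (convex_Ioi 0)
    · exact fun s hs => ((hd2 s hs).differentiableAt).continuousAt.continuousWithinAt
    · intro s hs
      rw [interior_Ioi] at hs
      rw [(hd2 s hs).deriv]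
      exact hpos s hs
  -- f z / Γ lies between lower and upper bounds of the coordinates
  have hbound : ∀ z : Fin m → ℝ, (∀ i, 0 < z i) → ∀ a b : ℝ, 0 < a →
      (∀ i, a ≤ z i) → (∀ i, z i ≤ b) → a ≤ f z / Γ ∧ f z / Γ ≤ b := by
    intro z hz a b ha hza hzb
    obtain ⟨hfz, heq⟩ := hf z hz
    have hb : (0:ℝ) < b := lt_of_lt_of_le ha (le_trans (hza ⟨0, hm⟩) (hzb ⟨0, hm⟩))
    have hDa : Dφ a ≤ Dφ (f z / Γ) := by
      rw [heq]
      have hle : ∑ i, γ i * Dφ a ≤ ∑ i, γ i * Dφ (z i) :=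
        Finset.sum_le_sum fun i _ =>
          mul_le_mul_of_nonneg_left
            (hmono.monotoneOn ha (hz i) (hza i)) (hγ i).le
      have hconst : ∑ i, γ i * Dφ a = Γ * Dφ a := by
        rw [hΓ, ← Finset.sum_mul]
      calc Dφ a = (1/Γ) * (Γ * Dφ a) := by field_simp
        _ ≤ (1/Γ) * ∑ i, γ i * Dφ (z i) := by
            apply mul_le_mul_of_nonneg_left _ (by positivity)
            rw [← hconst]; exact hle
    have hDb : Dφ (f z / Γ) ≤ Dφ b := by
      rw [heq]
      have hle : ∑ i, γ i * Dφ (z i) ≤ ∑ i, γ i * Dφ b :=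
        Finset.sum_le_sum fun i _ =>
          mul_le_mul_of_nonneg_left
            (hmono.monotoneOn (hz i) hb (hzb i)) (hγ i).le
      have hconst : ∑ i, γ i * Dφ b = Γ * Dφ b := by
        rw [hΓ, ← Finset.sum_mul]
      calc (1/Γ) * ∑ i, γ i * Dφ (z i) ≤ (1/Γ) * (Γ * Dφ b) := by
            apply mul_le_mul_of_nonneg_left _ (by positivity)
            rw [← hconst]; exact hle
        _ = Dφ b := by field_simp
    exact ⟨(hmono.le_iff_le ha hfz).mp hDa, (hmono.le_iff_le hfz hb).mp hDb⟩
  -- value of f on the diagonal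
  have hdiag : ∀ s : ℝ, 0 < s → f (fun _ => s) = Γ * s := by
    intro s hs
    obtain ⟨hfz, heq⟩ := hf (fun _ => s) (fun _ => hs)
    have hconst : (1/Γ) * ∑ i : Fin m, γ i * Dφ s = Dφ s := by
      rw [show ∑ i : Fin m, γ i * Dφ s = Γ * Dφ s by rw [hΓ, ← Finset.sum_mul]]
      field_simp
    rw [hconst] at heq
    have := hmono.injOn hfz hs heq
    field_simp at this
    linarith [this]
  -- the key limiting construction
  have key : ∀ x : Fin m → ℝ, (∀ i, 0 < x i) →
      ∃ y : ℝ → Fin m → ℝ,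
        (∀ᶠ ε in 𝓝[>] (0:ℝ), (∀ i, 0 < y ε i) ∧
          (ε/(1+ε)) • x + (1/(1+ε)) • y ε = fun _ => (∑ i, γ i * x i)/Γ) ∧
        Filter.Tendsto (fun ε => (∑ i, γ i * x i) + ((∑ i, γ i * x i) - f (y ε))/ε)
          (𝓝[>] (0:ℝ)) (𝓝 (∑ i, γ i * x i)) := by
    intro x hx
    set S := ∑ i, γ i * x i with hS
    have hSpos : 0 < S := Finset.sum_pos (fun i _ => mul_pos (hγ i) (hx i)) Finset.univ_nonempty
    set t := S / Γ with ht
    have htpos : 0 < t := div_pos hSpos hΓpos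
    have hΓt : Γ * t = S := by rw [ht]; field_simp
    set v : Fin m → ℝ := fun i => t - x i with hv
    have hsumv : ∑ i, γ i * v i = 0 := by
      have : ∑ i, γ i * v i = (∑ i, γ i) * t - S := by
        simp only [hv, mul_sub, Finset.sum_sub_distrib, Finset.sum_mul, hS]
      rw [this, ← hΓ, hΓt]; ring
    set M : ℝ := 1 + ∑ i, |v i| with hM
    have hMge : ∀ i, |v i| ≤ M := by
      intro i
      have h1 : |v i| ≤ ∑ j, |v j| :=
        Finset.single_le_sum (fun j _ => abs_nonneg (v j)) (Finset.mem_univ i)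
      have h2 : (0:ℝ) ≤ ∑ j, |v j| := Finset.sum_nonneg fun j _ => abs_nonneg (v j)
      simp only [hM]; linarith
    have hMpos : 0 < M := by
      have h2 : (0:ℝ) ≤ ∑ j, |v j| := Finset.sum_nonneg fun j _ => abs_nonneg (v j)
      simp only [hM]; linarith
    set δ : ℝ := t / (2 * M) with hδ
    have hδpos : 0 < δ := by positivity
    set y : ℝ → Fin m → ℝ := fun ε i => t + ε * v i with hy
    -- basic estimates for ε ∈ Ioo 0 δ
    have hyIcc : ∀ ε ∈ Set.Ioo (0:ℝ) δ, ∀ i, t/2 ≤ y ε i ∧ y ε i ≤ t/2 + t := by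
      intro ε hε i
      have h1 : |ε * v i| ≤ t/2 := by
        rw [abs_mul, abs_of_pos hε.1]
        calc ε * |v i| ≤ δ * M := by
              apply mul_le_mul hε.2.le (hMge i) (abs_nonneg _) hδpos.le
          _ = t/2 := by rw [hδ]; field_simp
      have h2 := abs_le.mp h1
      constructor
      · simp only [hy]; linarith [h2.1]
      · simp only [hy]; linarith [h2.2]
    have hypos : ∀ ε ∈ Set.Ioo (0:ℝ) δ, ∀ i, 0 < y ε i := by
      intro ε hε i
      exact lt_of_lt_of_le (half_pos htpos) (hyIcc ε hε i).1
    have hIoo : Set.Ioo (0:ℝ) δ ∈ 𝓝[>] (0:ℝ) := Ioo_mem_nhdsGT_of_mem ⟨le_refl 0, hδpos⟩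
    refine ⟨y, ?_, ?_⟩
    · filter_upwards [hIoo] with ε hε
      refine ⟨hypos ε hε, ?_⟩
      funext i
      have h1p : (0:ℝ) < 1 + ε := by linarith [hε.1]
      simp only [Pi.add_apply, Pi.smul_apply, smul_eq_mul, hy, hv]
      field_simp
      ring
    · -- the tendsto statement
      have hsub : Set.Icc (t/2) (t/2+t) ⊆ Set.Ioi (0:ℝ) := by
        intro s hs
        have := hs.1
        simp only [Set.mem_Ioi]
        linarith
      obtain ⟨s₀, hs₀mem, hs₀min⟩ :=
        isCompact_Icc.exists_isMinOn (Set.nonempty_Icc.2 (by linarith)) (hc2.mono hsub)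
      set c := DDφ s₀ with hc
      have hcpos : 0 < c := hpos s₀ (hsub hs₀mem)
      -- ψ = Dφ - c • id monotone on the interval
      have hψ : MonotoneOn (fun s => Dφ s - c * s) (Set.Icc (t/2) (t/2+t)) := by
        apply monotoneOn_of_deriv_nonneg (convex_Icc _ _)
        · apply ContinuousOn.sub
          · exact fun s hs => ((hd2 s (hsub hs)).differentiableAt).continuousAt.continuousWithinAt
          · exact (continuous_const.mul continuous_id).continuousOn
        · intro s hs
          rw [interior_Icc] at hs
          have hs' : s ∈ Set.Icc (t/2) (t/2+t) := Set.Ioo_subset_Icc_self hs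
          exact ((hd2 s (hsub hs')).sub ((hasDerivAt_id s).const_mul c)).differentiableAt
            |>.differentiableWithinAt
        · intro s hs
          rw [interior_Icc] at hs
          have hs' : s ∈ Set.Icc (t/2) (t/2+t) := Set.Ioo_subset_Icc_self hs
          have hd : HasDerivAt (fun s => Dφ s - c * s) (DDφ s - c) s := by
            have h := (hd2 s (hsub hs')).sub ((hasDerivAt_id s).const_mul c); rw [mul_one] at h; exact h
          rw [hd.deriv]
          have hmin := isMinOn_iff.mp hs₀min s hs'
          simp only [hc] at hmin ⊢
          linarith [hmin]
      -- the mean-value type estimate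
      have hMVT : ∀ u ∈ Set.Icc (t/2) (t/2+t), c * |t - u| ≤ |Dφ t - Dφ u| := by
        intro u hu
        have htmem : t ∈ Set.Icc (t/2) (t/2+t) := ⟨by linarith, by linarith⟩
        rcases le_total t u with h | h
        · have h1 := hψ htmem hu h
          have h2 := hmono.monotoneOn (hsub htmem) (hsub hu) h
          rw [abs_of_nonpos (by linarith), abs_of_nonpos (by linarith)]
          simp only at h1
          nlinarith
        · have h1 := hψ hu htmem h
          have h2 := hmono.monotoneOn (hsub hu) (hsub htmem) h
          rw [abs_of_nonneg (by linarith), abs_of_nonneg (by linarith)]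
          simp only at h1
          nlinarith
      -- derivative of the averaged function H at 0 is 0
      set H : ℝ → ℝ := fun ε => (1/Γ) * ∑ i, γ i * Dφ (t + ε * v i) with hH
      have hH0 : H 0 = Dφ t := by
        simp only [hH, zero_mul, add_zero]
        rw [show ∑ i : Fin m, γ i * Dφ t = Γ * Dφ t by rw [hΓ, ← Finset.sum_mul]]
        field_simp
      have hHd : HasDerivAt H 0 0 := by
        have h1 : ∀ i : Fin m, HasDerivAt (fun ε => Dφ (t + ε * v i)) (DDφ t * v i) 0 := by
          intro i
          have ha : HasDerivAt (fun ε : ℝ => t + ε * v i) (v i) 0 := by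
            simpa using ((hasDerivAt_id (0:ℝ)).mul_const (v i)).const_add t
          have hb' : HasDerivAt Dφ (DDφ t) ((fun ε : ℝ => t + ε * v i) 0) := by
            simpa using hd2 t htpos
          have hcomp := HasDerivAt.comp (0:ℝ) hb' ha
          exact hcomp
        have h2 : HasDerivAt H ((1/Γ) * ∑ i, γ i * (DDφ t * v i)) 0 := by
          apply HasDerivAt.const_mul
          exact HasDerivAt.fun_sum fun i _ => (h1 i).const_mul (γ i)
        have h3 : (1/Γ) * ∑ i, γ i * (DDφ t * v i) = 0 := by
          have : ∑ i, γ i * (DDφ t * v i) = DDφ t * ∑ i, γ i * v i := by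
            rw [Finset.mul_sum]
            apply Finset.sum_congr rfl
            intro i _
            ring
          rw [this, hsumv]
          ring
        rwa [h3] at h2
      have hslope : Filter.Tendsto (slope H 0) (𝓝[≠] (0:ℝ)) (𝓝 0) :=
        hasDerivAt_iff_tendsto_slope.mp hHd
      have hslope' : Filter.Tendsto (slope H 0) (𝓝[>] (0:ℝ)) (𝓝 0) :=
        hslope.mono_left (nhdsWithin_mono 0 fun x hx => ne_of_gt hx)
      -- squeeze
      have hsq : Filter.Tendsto (fun ε => (S - f (y ε))/ε) (𝓝[>] (0:ℝ)) (𝓝 0) := by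
        apply squeeze_zero_norm' (a := fun ε => (Γ/c) * |slope H 0 ε|)
        · filter_upwards [hIoo] with ε hε
          set u := f (y ε) / Γ with hu
          have hyp := hypos ε hε
          obtain ⟨hfu, hequ⟩ := hf (y ε) hyp
          have huIcc : u ∈ Set.Icc (t/2) (t/2+t) := by
            have := hbound (y ε) hyp (t/2) (t/2+t) (by linarith)
              (fun i => (hyIcc ε hε i).1) (fun i => (hyIcc ε hε i).2)
            exact ⟨this.1, this.2⟩
          have hDu : Dφ u = H ε := hequ
          have hest := hMVT u huIcc
          rw [hDu, ← hH0] at hest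
          have hslope_eq : |slope H 0 ε| = |H ε - H 0| / ε := by
            rw [slope_def_field, sub_zero, abs_div, abs_of_pos hε.1]
          have hfyv : f (y ε) = Γ * u := by
            rw [hu]; field_simp
          have hfy : S - f (y ε) = Γ * (t - u) := by
            rw [hfyv, ← hΓt]; ring
          rw [Real.norm_eq_abs, hfy, hslope_eq, abs_div, abs_mul,
            abs_of_pos hε.1, abs_of_pos hΓpos]
          have hnum : Γ * |t - u| ≤ Γ / c * |H ε - H 0| := by
            rw [abs_sub_comm (H ε)]
            rw [div_mul_eq_mul_div, le_div_iff₀ hcpos]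
            nlinarith [hest, abs_nonneg (t - u), hΓpos.le]
          calc Γ * |t - u| / ε ≤ (Γ / c * |H ε - H 0|) / ε := by
                exact div_le_div_of_nonneg_right hnum hε.1.le |>.trans_eq rfl
            _ = Γ / c * (|H ε - H 0| / ε) := by ring
        · have : Filter.Tendsto (fun ε => (Γ/c) * |slope H 0 ε|) (𝓝[>] (0:ℝ)) (𝓝 ((Γ/c) * |0|)) :=
            (hslope'.abs).const_mul _
          simpa using this
      have : Filter.Tendsto (fun ε => S + (S - f (y ε))/ε) (𝓝[>] (0:ℝ)) (𝓝 (S + 0)) :=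
        tendsto_const_nhds.add hsq
      simpa using this
  -- conclude both statements
  constructor
  · intro hcon x hx
    obtain ⟨y, hev, htend⟩ := key x hx
    refine ge_of_tendsto htend ?_
    filter_upwards [hev, self_mem_nhdsWithin] with ε hev' hε
    obtain ⟨hyp, hcombo⟩ := hev'
    have hεpos : 0 < ε := hε
    have h1p : (0:ℝ) < 1 + ε := by linarith
    have ha : (0:ℝ) ≤ ε/(1+ε) := by positivity
    have hb : (0:ℝ) ≤ 1/(1+ε) := by positivity
    have hab : ε/(1+ε) + 1/(1+ε) = 1 := by
      rw [← add_div, add_comm, div_self (ne_of_gt h1p)]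
    have hineq := hcon.2 (Set.mem_setOf.mpr hx) (Set.mem_setOf.mpr hyp) ha hb hab
    rw [hcombo] at hineq
    have hSpos : 0 < ∑ i, γ i * x i :=
      Finset.sum_pos (fun i _ => mul_pos (hγ i) (hx i)) Finset.univ_nonempty
    rw [hdiag _ (div_pos hSpos hΓpos)] at hineq
    have hΓS : Γ * ((∑ i, γ i * x i) / Γ) = ∑ i, γ i * x i := by field_simp
    rw [hΓS] at hineq
    simp only [smul_eq_mul] at hineq
    rw [div_mul_eq_mul_div, div_mul_eq_mul_div, ← add_div, div_le_iff₀ h1p] at hineq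
    -- hineq : ε * f x + 1 * f (y ε) ≤ (∑ i, γ i * x i) * (1 + ε)
    have hgoal : (f x - ∑ i, γ i * x i) * ε ≤ (∑ i, γ i * x i) - f (y ε) := by linarith
    have := (le_div_iff₀ hεpos).mpr hgoal
    linarith
  · intro hcon x hx
    obtain ⟨y, hev, htend⟩ := key x hx
    refine le_of_tendsto htend ?_
    filter_upwards [hev, self_mem_nhdsWithin] with ε hev' hε
    obtain ⟨hyp, hcombo⟩ := hev'
    have hεpos : 0 < ε := hε
    have h1p : (0:ℝ) < 1 + ε := by linarith
    have ha : (0:ℝ) ≤ ε/(1+ε) := by positivity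
    have hb : (0:ℝ) ≤ 1/(1+ε) := by positivity
    have hab : ε/(1+ε) + 1/(1+ε) = 1 := by
      rw [← add_div, add_comm, div_self (ne_of_gt h1p)]
    have hineq := hcon.2 (Set.mem_setOf.mpr hx) (Set.mem_setOf.mpr hyp) ha hb hab
    rw [hcombo] at hineq
    have hSpos : 0 < ∑ i, γ i * x i :=
      Finset.sum_pos (fun i _ => mul_pos (hγ i) (hx i)) Finset.univ_nonempty
    rw [hdiag _ (div_pos hSpos hΓpos)] at hineq
    have hΓS : Γ * ((∑ i, γ i * x i) / Γ) = ∑ i, γ i * x i := by field_simp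
    rw [hΓS] at hineq
    simp only [smul_eq_mul] at hineq
    rw [div_mul_eq_mul_div, div_mul_eq_mul_div, ← add_div, le_div_iff₀ h1p] at hineq
    have hgoal : (∑ i, γ i * x i) - f (y ε) ≤ (f x - ∑ i, γ i * x i) * ε := by linarith
    have := (div_le_iff₀ hεpos).mpr hgoal
    linarith
end

section
/- Let m ≥ 2 and let x_⋆ be the LDA on (0,∞)^m with generator φ and weights γ_1,…,γ_m > 0, Γ = Σ_i γ_i. If x_⋆ is concave on (0,∞)^m, then φ' is concave on (0,∞) and (φ')^{-1} is convex on its domain. If x_⋆ is convex on (0,∞)^m, then φ' is convex on (0,∞) and (φ')^{-1} is concave on its domain. -/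
open scoped BigOperators

open Set Filter Topology

lemma slope_trans {h : ℝ → ℝ} {u w v : ℝ} (huw : u < w) (hwv : w < v)
    (H : slope h w v ≤ slope h u w) : slope h w v ≤ slope h u v ∧ slope h u v ≤ slope h u w := by
  simp only [slope_def_field] at H ⊢
  rw [div_le_div_iff₀ (by linarith) (by linarith)] at H
  constructor
  · rw [div_le_div_iff₀ (by linarith) (by linarith)]
    nlinarith
  · rw [div_le_div_iff₀ (by linarith) (by linarith)]
    nlinarith

lemma aux_antitone {h h' : ℝ → ℝ} (hd : ∀ t ∈ Set.Ioi (0:ℝ), HasDerivAt h (h' t) t)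
    {α : ℝ} (hα0 : 0 < α) (hα1 : α < 1)
    (key : ∀ u v : ℝ, 0 < u → u < v → α * h u + (1-α) * h v ≤ h (α*u+(1-α)*v)) :
    AntitoneOn h' (Set.Ioi 0) := by
  intro a ha b hb hab
  rcases hab.eq_or_lt with rfl | hlt
  · exact le_rfl
  rw [Set.mem_Ioi] at ha hb
  -- key rewritten in slope form
  have key' : ∀ u v : ℝ, 0 < u → u < v →
      slope h (u + (1-α)*(v-u)) v ≤ slope h u (u + (1-α)*(v-u)) := by
    intro u v hu huv
    have hc := key u v hu huv
    have hceq : α*u+(1-α)*v = u + (1-α)*(v-u) := by ring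
    rw [hceq] at hc
    simp only [slope_def_field]
    rw [div_le_div_iff₀ (by nlinarith) (by nlinarith)]
    nlinarith
  set A : ℕ → ℝ := fun n => a + (1-α)^(n+1) * (b-a) with hA
  set B : ℕ → ℝ := fun n => b - α^(n+1) * (b-a) with hB
  have h1α0 : (0:ℝ) < 1 - α := by linarith
  have hbma : (0:ℝ) < b - a := by linarith
  have hAlt : ∀ n, a < A n ∧ A n < b := by
    intro n
    constructor
    · have := mul_pos (pow_pos h1α0 (n+1)) hbma; simp [hA]; nlinarith
    · have h1 : (1-α)^(n+1) < 1 := pow_lt_one₀ h1α0.le (by linarith) (Nat.succ_ne_zero n)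
      simp [hA]; nlinarith
  have hBlt : ∀ n, a < B n ∧ B n < b := by
    intro n
    constructor
    · have h1 : α^(n+1) < 1 := pow_lt_one₀ hα0.le hα1 (Nat.succ_ne_zero n)
      simp [hB]; nlinarith
    · have := mul_pos (pow_pos hα0 (n+1)) hbma; simp [hB]; nlinarith
  have hAs : ∀ n, A (n+1) < A n := by
    intro n
    have : (1-α)^(n+1+1) < (1-α)^(n+1) := pow_lt_pow_right_of_lt_one₀ h1α0 (by linarith) (by omega)
    simp only [hA]; nlinarith
  have hBs : ∀ n, B n < B (n+1) := by
    intro n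
    have : α^(n+1+1) < α^(n+1) := pow_lt_pow_right_of_lt_one₀ hα0 hα1 (by omega)
    simp only [hB]; nlinarith
  have P : ∀ n, slope h (B n) b ≤ slope h a (A n) := by
    intro n
    induction n with
    | zero =>
      have h0 := key' a b ha hlt
      have e1 : a + (1-α)*(b-a) = A 0 := by simp only [hA]; ring
      have e2 : B 0 = A 0 := by simp only [hA, hB]; ring
      rw [e1] at h0
      rw [e2]
      exact h0
    | succ n ih =>
      -- left refinement
      have hkL := key' a (A n) ha (hAlt n).1
      have eL : a + (1-α)*(A n - a) = A (n+1) := by simp only [hA]; ring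
      rw [eL] at hkL
      have hLtrans := (slope_trans (by exact (hAlt (n+1)).1) (hAs n) hkL).2
      -- right refinement
      have hkR := key' (B n) b (lt_trans ha (hBlt n).1) (hBlt n).2
      have eR : B n + (1-α)*(b - B n) = B (n+1) := by simp only [hA, hB]; ring
      rw [eR] at hkR
      have hRtrans := (slope_trans (hBs n) (hBlt (n+1)).2 hkR).1
      exact hRtrans.trans (ih.trans hLtrans)
  -- limits
  have hpowA : Tendsto (fun n : ℕ => (1-α)^(n+1)) atTop (𝓝 0) :=
    (tendsto_pow_atTop_nhds_zero_of_lt_one h1α0.le (by linarith)).comp (tendsto_add_atTop_nat 1)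
  have hpowB : Tendsto (fun n : ℕ => α^(n+1)) atTop (𝓝 0) :=
    (tendsto_pow_atTop_nhds_zero_of_lt_one hα0.le hα1).comp (tendsto_add_atTop_nat 1)
  have hAtend : Tendsto A atTop (𝓝 a) := by
    have := (hpowA.mul_const (b-a)).const_add a
    simpa using this
  have hBtend : Tendsto B atTop (𝓝 b) := by
    have := (hpowB.mul_const (b-a)).const_sub b  -- b - x
    simpa using this
  have hLtend : Tendsto (fun n => slope h a (A n)) atTop (𝓝 (h' a)) := by
    have hda := hasDerivAt_iff_tendsto_slope.mp (hd a ha)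
    refine hda.comp ?_
    rw [tendsto_nhdsWithin_iff]
    exact ⟨hAtend, Filter.Eventually.of_forall fun n => (hAlt n).1.ne'⟩
  have hRtend : Tendsto (fun n => slope h (B n) b) atTop (𝓝 (h' b)) := by
    have hdb := hasDerivAt_iff_tendsto_slope.mp (hd b hb)
    have : Tendsto (fun n => slope h b (B n)) atTop (𝓝 (h' b)) := by
      refine hdb.comp ?_
      rw [tendsto_nhdsWithin_iff]
      exact ⟨hBtend, Filter.Eventually.of_forall fun n => (hBlt n).2.ne⟩
    simpa [slope_comm] using this
  exact le_of_tendsto_of_tendsto' hRtend hLtend P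

/-- if the LDA `x⋆` (with generator `φ`) is concave on `(0,∞)^m` then `φ'` is
concave on `(0,∞)` and `(φ')⁻¹` is convex on its domain `φ' '' (0,∞)`; if `x⋆` is convex,
the regimes are reversed. The LDA is encoded by its defining property. -/
theorem statement_6 (m : ℕ) (hm : 2 ≤ m) (φ Dφ DDφ ψ : ℝ → ℝ)
    (hconv : StrictConvexOn ℝ (Set.Ioi 0) φ)
    (hd1 : ∀ t ∈ Set.Ioi (0:ℝ), HasDerivAt φ (Dφ t) t)
    (hd2 : ∀ t ∈ Set.Ioi (0:ℝ), HasDerivAt Dφ (DDφ t) t)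
    (hc2 : ContinuousOn DDφ (Set.Ioi 0))
    (hpos : ∀ t ∈ Set.Ioi (0:ℝ), 0 < DDφ t)
    (hψ : ∀ t ∈ Set.Ioi (0:ℝ), ψ (Dφ t) = t)
    (γ : Fin m → ℝ) (hγ : ∀ i, 0 < γ i)
    (Γ : ℝ) (hΓ : Γ = ∑ i, γ i)
    (f : (Fin m → ℝ) → ℝ)
    (hf : ∀ x : Fin m → ℝ, (∀ i, 0 < x i) →
      0 < f x / Γ ∧ Dφ (f x / Γ) = (1 / Γ) * ∑ i, γ i * Dφ (x i)) :
    (ConcaveOn ℝ {x : Fin m → ℝ | ∀ i, 0 < x i} f →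
      ConcaveOn ℝ (Set.Ioi 0) Dφ ∧ ConvexOn ℝ (Dφ '' Set.Ioi 0) ψ)
    ∧ (ConvexOn ℝ {x : Fin m → ℝ | ∀ i, 0 < x i} f →
      ConvexOn ℝ (Set.Ioi 0) Dφ ∧ ConcaveOn ℝ (Dφ '' Set.Ioi 0) ψ) := by
  -- basic positivity
  have hΓpos : 0 < Γ := by
    rw [hΓ]
    exact Finset.sum_pos (fun i _ => hγ i) ⟨⟨0, by omega⟩, Finset.mem_univ _⟩
  set i₀ : Fin m := ⟨0, by omega⟩ with hi₀
  set i₁ : Fin m := ⟨1, by omega⟩ with hi₁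
  have hne01 : i₀ ≠ i₁ := by simp [hi₀, hi₁, Fin.ext_iff]
  set α : ℝ := γ i₀ / Γ with hα
  have hα0 : 0 < α := div_pos (hγ i₀) hΓpos
  have hα1 : α < 1 := by
    rw [hα, div_lt_one hΓpos, hΓ]
    have hsub : ({i₀, i₁} : Finset (Fin m)) ⊆ Finset.univ := Finset.subset_univ _
    have := Finset.sum_le_sum_of_subset_of_nonneg hsub (fun i _ _ => (hγ i).le)
    rw [Finset.sum_pair hne01] at this
    have := hγ i₁
    linarith
  -- strict monotonicity of Dφ on (0, ∞)
  have hcontD : ContinuousOn Dφ (Set.Ioi 0) := fun t ht =>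
    ((hd2 t ht).differentiableAt).continuousAt.continuousWithinAt
  have hmono : StrictMonoOn Dφ (Set.Ioi 0) := by
    apply strictMonoOn_of_deriv_pos (convex_Ioi 0) hcontD
    intro t ht
    rw [interior_Ioi] at ht
    rw [(hd2 t ht).deriv]
    exact hpos t ht
  -- derivative of ψ at Dφ 1
  have hψd : HasDerivAt ψ (DDφ 1)⁻¹ (Dφ 1) := by
    have hstrict : HasStrictDerivAt Dφ (DDφ 1) 1 := by
      apply hasStrictDerivAt_of_hasDerivAt_of_continuousAt
      · filter_upwards [Ioi_mem_nhds one_pos] with t ht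
        exact hd2 t ht
      · exact hc2.continuousAt (Ioi_mem_nhds one_pos)
    have hev : ∀ᶠ t in 𝓝 (1:ℝ), ψ (Dφ t) = t := by
      filter_upwards [Ioi_mem_nhds one_pos] with t ht
      exact hψ t ht
    exact (hstrict.to_local_left_inverse (ne_of_gt (hpos 1 (Set.mem_Ioi.mpr one_pos))) hev).hasDerivAt
  -- value of f at the all-ones vector
  have hf1 : f (fun _ => (1:ℝ)) = Γ := by
    obtain ⟨hp, he⟩ := hf (fun _ => (1:ℝ)) (fun _ => one_pos)
    have hsum : (1/Γ) * ∑ i, γ i * Dφ 1 = Dφ 1 := by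
      rw [← Finset.sum_mul, ← hΓ]
      field_simp
    rw [hsum] at he
    have := hmono.injOn (Set.mem_Ioi.mpr hp) (Set.mem_Ioi.mpr one_pos) he
    field_simp at this
    linarith
  -- the derivative of the LDA along segments through the all-ones vector
  have hderiv : ∀ x : Fin m → ℝ, (∀ i, 0 < x i) →
      HasDerivAt (fun ε : ℝ => f (fun i => 1 + ε * (x i - 1))) ((∑ i, γ i * x i) - Γ) 0 := by
    intro x hx
    set S : ℝ → ℝ := fun ε => (1/Γ) * ∑ i, γ i * Dφ (1 + ε * (x i - 1)) with hS
    have hSd : HasDerivAt S ((1/Γ) * ∑ i, γ i * (DDφ 1 * (x i - 1))) 0 := by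
      apply HasDerivAt.const_mul
      apply HasDerivAt.fun_sum
      intro i _
      apply HasDerivAt.const_mul
      have hu : HasDerivAt (fun ε : ℝ => 1 + ε * (x i - 1)) (x i - 1) 0 := by
        simpa using ((hasDerivAt_id (0:ℝ)).mul_const (x i - 1)).const_add 1
      have houter : HasDerivAt Dφ (DDφ 1) ((fun ε : ℝ => 1 + ε * (x i - 1)) 0) := by
        simpa using hd2 1 (Set.mem_Ioi.mpr one_pos)
      exact houter.comp 0 hu
    have hS0 : S 0 = Dφ 1 := by
      simp only [hS]
      norm_num
      rw [← Finset.sum_mul, ← hΓ]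
      field_simp
    have hψS : HasDerivAt ψ (DDφ 1)⁻¹ (S 0) := hS0 ▸ hψd
    have hcomp := (hψS.comp 0 hSd).const_mul Γ
    have hev : (fun ε : ℝ => f (fun i => 1 + ε * (x i - 1))) =ᶠ[𝓝 0]
        (fun ε : ℝ => Γ * ψ (S ε)) := by
      have hposev : ∀ᶠ ε : ℝ in 𝓝 0, ∀ i, 0 < 1 + ε * (x i - 1) := by
        rw [eventually_all]
        intro i
        have hcont : Tendsto (fun ε : ℝ => 1 + ε * (x i - 1)) (𝓝 0) (𝓝 1) := by
          have : Continuous (fun ε : ℝ => 1 + ε * (x i - 1)) := by continuity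
          simpa using this.tendsto 0
        exact hcont.eventually (eventually_gt_nhds one_pos)
      filter_upwards [hposev] with ε hε
      obtain ⟨hp, he⟩ := hf (fun i => 1 + ε * (x i - 1)) hε
      have : ψ (S ε) = f (fun i => 1 + ε * (x i - 1)) / Γ := by
        simp only [hS]
        rw [← he]
        exact hψ _ (Set.mem_Ioi.mpr hp)
      rw [this]
      field_simp
    have := hcomp.congr_of_eventuallyEq hev
    refine this.congr_deriv (Eq.symm ?_)
    have hsum : ∑ i, γ i * (DDφ 1 * (x i - 1)) = DDφ 1 * ((∑ i, γ i * x i) - Γ) := by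
      rw [hΓ, ← Finset.sum_sub_distrib, Finset.mul_sum]
      apply Finset.sum_congr rfl
      intro i _
      ring
    rw [hsum]
    have hD := (hpos 1 (Set.mem_Ioi.mpr one_pos)).ne'
    field_simp
    try ring
  -- the two tangent-line inequalities
  have htan_le : ConcaveOn ℝ {x : Fin m → ℝ | ∀ i, 0 < x i} f →
      ∀ x : Fin m → ℝ, (∀ i, 0 < x i) → f x ≤ ∑ i, γ i * x i := by
    intro hconc x hx
    have hg := hderiv x hx
    set g : ℝ → ℝ := fun ε => f (fun i => 1 + ε * (x i - 1)) with hgdef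
    have hg0 : g 0 = Γ := by
      simp only [hgdef]
      have : (fun i : Fin m => 1 + (0:ℝ) * (x i - 1)) = fun _ => (1:ℝ) := by
        funext i; ring
      rw [this, hf1]
    have hslope : Tendsto (slope g 0) (𝓝[>] 0) (𝓝 ((∑ i, γ i * x i) - Γ)) :=
      (hasDerivAt_iff_tendsto_slope.mp hg).mono_left
        (nhdsWithin_mono 0 (fun ε hε => ne_of_gt hε))
    have hev : ∀ᶠ ε in 𝓝[>] (0:ℝ), f x - Γ ≤ slope g 0 ε := by
      filter_upwards [Ioo_mem_nhdsGT_of_mem (Set.mem_Ico.mpr ⟨le_refl (0:ℝ), one_pos⟩)]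
        with ε hε
      have hcomb := hconc.2 (show (fun _ => (1:ℝ)) ∈ {x : Fin m → ℝ | ∀ i, 0 < x i} from fun _ => one_pos)
        (show x ∈ {x : Fin m → ℝ | ∀ i, 0 < x i} from hx)
        (show (0:ℝ) ≤ 1 - ε by linarith [hε.2]) hε.1.le (by ring : (1 - ε) + ε = 1)
      have hcombeq : (1-ε) • (fun _ => (1:ℝ)) + ε • x = fun i => 1 + ε * (x i - 1) := by
        funext i
        simp [smul_eq_mul]
        ring
      rw [hcombeq, hf1] at hcomb
      rw [slope_def_field, hg0, sub_zero]
      rw [le_div_iff₀ hε.1]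
      simp only [hgdef] at hcomb ⊢
      simp only [smul_eq_mul] at hcomb
      nlinarith [hcomb]
    have := ge_of_tendsto hslope hev
    linarith
  have htan_ge : ConvexOn ℝ {x : Fin m → ℝ | ∀ i, 0 < x i} f →
      ∀ x : Fin m → ℝ, (∀ i, 0 < x i) → ∑ i, γ i * x i ≤ f x := by
    intro hcvx x hx
    have hg := hderiv x hx
    set g : ℝ → ℝ := fun ε => f (fun i => 1 + ε * (x i - 1)) with hgdef
    have hg0 : g 0 = Γ := by
      simp only [hgdef]
      have : (fun i : Fin m => 1 + (0:ℝ) * (x i - 1)) = fun _ => (1:ℝ) := by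
        funext i; ring
      rw [this, hf1]
    have hslope : Tendsto (slope g 0) (𝓝[>] 0) (𝓝 ((∑ i, γ i * x i) - Γ)) :=
      (hasDerivAt_iff_tendsto_slope.mp hg).mono_left
        (nhdsWithin_mono 0 (fun ε hε => ne_of_gt hε))
    have hev : ∀ᶠ ε in 𝓝[>] (0:ℝ), slope g 0 ε ≤ f x - Γ := by
      filter_upwards [Ioo_mem_nhdsGT_of_mem (Set.mem_Ico.mpr ⟨le_refl (0:ℝ), one_pos⟩)]
        with ε hε
      have hcomb := hcvx.2 (show (fun _ => (1:ℝ)) ∈ {x : Fin m → ℝ | ∀ i, 0 < x i} from fun _ => one_pos)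
        (show x ∈ {x : Fin m → ℝ | ∀ i, 0 < x i} from hx)
        (show (0:ℝ) ≤ 1 - ε by linarith [hε.2]) hε.1.le (by ring : (1 - ε) + ε = 1)
      have hcombeq : (1-ε) • (fun _ => (1:ℝ)) + ε • x = fun i => 1 + ε * (x i - 1) := by
        funext i
        simp [smul_eq_mul]
        ring
      rw [hcombeq, hf1] at hcomb
      rw [slope_def_field, hg0, sub_zero]
      rw [div_le_iff₀ hε.1]
      simp only [hgdef] at hcomb ⊢
      simp only [smul_eq_mul] at hcomb
      nlinarith [hcomb]
    have := le_of_tendsto hslope hev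
    linarith
  -- evaluating the LDA at the two-value vector
  have htwo : ∀ u v : ℝ, 0 < u → 0 < v →
      (∑ i, γ i * (if i = i₀ then u else v) = Γ * (α * u + (1-α) * v)) ∧
      ((1/Γ) * ∑ i, γ i * Dφ ((fun i => if i = i₀ then u else v) i)
        = α * Dφ u + (1-α) * Dφ v) := by
    intro u v hu hv
    have key : ∀ w z : ℝ, ∑ i, γ i * (if i = i₀ then w else z) = γ i₀ * w + (Γ - γ i₀) * z := by
      intro w z
      have : ∀ i : Fin m, γ i * (if i = i₀ then w else z)
          = γ i * z + (if i = i₀ then γ i₀ * (w - z) else 0) := by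
        intro i
        by_cases h : i = i₀
        · subst h; simp; ring
        · simp [h]
      rw [Finset.sum_congr rfl (fun i _ => this i), Finset.sum_add_distrib,
        Finset.sum_ite_eq' Finset.univ i₀ (fun _ => γ i₀ * (w - z)),
        ← Finset.sum_mul, ← hΓ]
      simp only [Finset.mem_univ, if_true]
      ring
    constructor
    · rw [key u v]
      rw [hα]
      field_simp
      try ring
    · have : ∑ i, γ i * Dφ ((fun i => if i = i₀ then u else v) i)
          = ∑ i, γ i * (if i = i₀ then Dφ u else Dφ v) := by
        apply Finset.sum_congr rfl
        intro i _
        by_cases h : i = i₀ <;> simp [h]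
      rw [this, key (Dφ u) (Dφ v), hα]
      field_simp
      try ring
  -- the key inequalities for Dφ
  have hkey_conc : ConcaveOn ℝ {x : Fin m → ℝ | ∀ i, 0 < x i} f →
      ∀ u v : ℝ, 0 < u → u < v → α * Dφ u + (1-α) * Dφ v ≤ Dφ (α*u+(1-α)*v) := by
    intro hconc u v hu huv
    have hv : 0 < v := lt_trans hu huv
    set x : Fin m → ℝ := fun i => if i = i₀ then u else v with hxdef
    have hx : ∀ i, 0 < x i := by
      intro i
      by_cases h : i = i₀ <;> simp [hxdef, h, hu, hv]
    obtain ⟨hs1, hs2⟩ := htwo u v hu hv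
    obtain ⟨hp, he⟩ := hf x hx
    rw [hs2] at he
    have hle := htan_le hconc x hx
    rw [hs1] at hle
    have hcle : f x / Γ ≤ α * u + (1-α) * v := by
      rw [div_le_iff₀ hΓpos]
      calc f x ≤ Γ * (α * u + (1-α) * v) := hle
        _ = (α * u + (1-α) * v) * Γ := mul_comm _ _
    have hcpos : (0:ℝ) < α * u + (1-α) * v := by
      have h1 := mul_pos hα0 hu
      have h2 := mul_pos (show (0:ℝ) < 1-α by linarith) hv
      linarith
    have := hmono.monotoneOn hp (Set.mem_Ioi.mpr hcpos) hcle
    rw [he] at this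
    exact this
  have hkey_cvx : ConvexOn ℝ {x : Fin m → ℝ | ∀ i, 0 < x i} f →
      ∀ u v : ℝ, 0 < u → u < v → Dφ (α*u+(1-α)*v) ≤ α * Dφ u + (1-α) * Dφ v := by
    intro hcvx u v hu huv
    have hv : 0 < v := lt_trans hu huv
    set x : Fin m → ℝ := fun i => if i = i₀ then u else v with hxdef
    have hx : ∀ i, 0 < x i := by
      intro i
      by_cases h : i = i₀ <;> simp [hxdef, h, hu, hv]
    obtain ⟨hs1, hs2⟩ := htwo u v hu hv
    obtain ⟨hp, he⟩ := hf x hx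
    rw [hs2] at he
    have hge := htan_ge hcvx x hx
    rw [hs1] at hge
    have hcle : α * u + (1-α) * v ≤ f x / Γ := by
      rw [le_div_iff₀ hΓpos]
      calc (α * u + (1-α) * v) * Γ = Γ * (α * u + (1-α) * v) := mul_comm _ _
        _ ≤ f x := hge
    have hcpos : (0:ℝ) < α * u + (1-α) * v := by
      have h1 := mul_pos hα0 hu
      have h2 := mul_pos (show (0:ℝ) < 1-α by linarith) hv
      linarith
    have := hmono.monotoneOn (Set.mem_Ioi.mpr hcpos) hp hcle
    rw [he] at this
    exact this
  -- convexity of the image set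
  have himage : Convex ℝ (Dφ '' Set.Ioi 0) := by
    rw [convex_iff_ordConnected]
    constructor
    rintro p ⟨a, ha, rfl⟩ q ⟨b, hb, rfl⟩ z hz
    rcases le_total a b with hab | hab
    · have hIcc : Set.Icc a b ⊆ Set.Ioi 0 := fun t ht => lt_of_lt_of_le ha ht.1
      have := intermediate_value_Icc hab (hcontD.mono hIcc) hz
      exact Set.image_mono hIcc this
    · have hIcc : Set.Icc b a ⊆ Set.Ioi 0 := fun t ht => lt_of_lt_of_le hb ht.1
      have := intermediate_value_Icc' hab (hcontD.mono hIcc) hz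
      exact Set.image_mono hIcc this
  constructor
  · intro hconc
    have hant : AntitoneOn DDφ (Set.Ioi 0) :=
      aux_antitone hd2 hα0 hα1 (hkey_conc hconc)
    have hconcD : ConcaveOn ℝ (Set.Ioi 0) Dφ := by
      apply AntitoneOn.concaveOn_of_deriv (convex_Ioi 0) hcontD
      · rw [interior_Ioi]
        exact fun t ht => (hd2 t ht).differentiableAt.differentiableWithinAt
      · rw [interior_Ioi]
        intro a ha b hb hab
        rw [(hd2 a ha).deriv, (hd2 b hb).deriv]
        exact hant ha hb hab
    refine ⟨hconcD, himage, ?_⟩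
    rintro p ⟨a, ha, rfl⟩ q ⟨b, hb, rfl⟩ lam mu hl hm hlm
    have hcombmem : lam • a + mu • b ∈ Set.Ioi (0:ℝ) := (convex_Ioi 0) ha hb hl hm hlm
    have hz : lam • Dφ a + mu • Dφ b ∈ Dφ '' Set.Ioi 0 :=
      himage (Set.mem_image_of_mem Dφ ha) (Set.mem_image_of_mem Dφ hb) hl hm hlm
    obtain ⟨s, hs, hzs⟩ := hz
    have hDineq := hconcD.2 ha hb hl hm hlm
    rw [← hzs] at hDineq
    have : s ≤ lam • a + mu • b := (hmono.le_iff_le hs hcombmem).mp hDineq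
    calc ψ (lam • Dφ a + mu • Dφ b) = ψ (Dφ s) := by rw [hzs]
      _ = s := hψ s hs
      _ ≤ lam • a + mu • b := this
      _ = lam • ψ (Dφ a) + mu • ψ (Dφ b) := by rw [hψ a ha, hψ b hb]
  · intro hcvx
    have hmonD : MonotoneOn DDφ (Set.Ioi 0) := by
      have hant : AntitoneOn (fun t => -DDφ t) (Set.Ioi 0) := by
        apply aux_antitone (h := fun t => -Dφ t) (fun t ht => (hd2 t ht).neg) hα0 hα1
        intro u v hu huv
        have := hkey_cvx hcvx u v hu huv
        show α * (-Dφ u) + (1 - α) * (-Dφ v) ≤ -Dφ (α * u + (1 - α) * v)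
        linarith
      intro a ha b hb hab
      have := hant ha hb hab
      simpa using this
    have hcvxD : ConvexOn ℝ (Set.Ioi 0) Dφ := by
      apply MonotoneOn.convexOn_of_deriv (convex_Ioi 0) hcontD
      · rw [interior_Ioi]
        exact fun t ht => (hd2 t ht).differentiableAt.differentiableWithinAt
      · rw [interior_Ioi]
        intro a ha b hb hab
        rw [(hd2 a ha).deriv, (hd2 b hb).deriv]
        exact hmonD ha hb hab
    refine ⟨hcvxD, himage, ?_⟩
    rintro p ⟨a, ha, rfl⟩ q ⟨b, hb, rfl⟩ lam mu hl hm hlm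
    have hcombmem : lam • a + mu • b ∈ Set.Ioi (0:ℝ) := (convex_Ioi 0) ha hb hl hm hlm
    have hz : lam • Dφ a + mu • Dφ b ∈ Dφ '' Set.Ioi 0 :=
      himage (Set.mem_image_of_mem Dφ ha) (Set.mem_image_of_mem Dφ hb) hl hm hlm
    obtain ⟨s, hs, hzs⟩ := hz
    have hDineq := hcvxD.2 ha hb hl hm hlm
    rw [← hzs] at hDineq
    have : lam • a + mu • b ≤ s := (hmono.le_iff_le hcombmem hs).mp hDineq
    calc lam • ψ (Dφ a) + mu • ψ (Dφ b) = lam • a + mu • b := by rw [hψ a ha, hψ b hb]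
      _ ≤ s := this
      _ = ψ (Dφ s) := (hψ s hs).symm
      _ = ψ (lam • Dφ a + mu • Dφ b) := by rw [hzs]
end

section
/- Let σ ∈ ℝ with σ ∉ {0, 1/2, 1}, let β_1,…,β_m > 0 with B = Σ_i β_i, let a ∈ ℝ∖{0} be any constant such that a·(2 − 1/σ)·(1 − 1/σ) > 0 (so that φ(x) = a·x^{2−1/σ} is strictly convex on (0,∞)), and set γ_i = β_i·B^{1/(σ−1)} for each i, Γ = Σ_i γ_i. Then for all (x_1,…,x_m) ∈ (0,∞)^m, the LDA with generator φ and weights γ_1,…,γ_m equals the CES aggregator: Γ·(φ')^{-1}((1/Γ)·Σ_i γ_i φ'(x_i)) = (Σ_{i=1}^m β_i x_i^{(σ−1)/σ})^{σ/(σ−1)}. -/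
open scoped BigOperators

/-- Lemma 1 of the paper: the CES aggregator
`(Σ βᵢ xᵢ^((σ−1)/σ))^(σ/(σ−1))` is the LDA with generator `φ(x) = a·x^(2−1/σ)` and
weights `γᵢ = βᵢ·B^(1/(σ−1))`. Here `ψ` is any left inverse of `φ'` on `(0,∞)`, and
`φ'(t) = a·(2−1/σ)·t^(1−1/σ)`. -/
theorem statement_7 (m : ℕ) (σ a : ℝ) (hσ0 : σ ≠ 0) (hσh : σ ≠ 1 / 2) (hσ1 : σ ≠ 1)
    (ha : a ≠ 0) (hstrict : 0 < a * (2 - 1 / σ) * (1 - 1 / σ))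
    (β : Fin m → ℝ) (hβ : ∀ i, 0 < β i)
    (B : ℝ) (hB : B = ∑ i, β i)
    (γ : Fin m → ℝ) (hγ : ∀ i, γ i = β i * B ^ (1 / (σ - 1)))
    (Γ : ℝ) (hΓ : Γ = ∑ i, γ i)
    (ψ : ℝ → ℝ)
    (hψ : ∀ t ∈ Set.Ioi (0:ℝ), ψ (a * (2 - 1 / σ) * t ^ (1 - 1 / σ)) = t)
    (hder : ∀ t ∈ Set.Ioi (0:ℝ), HasDerivAt (fun s : ℝ => a * s ^ (2 - 1 / σ))
      (a * (2 - 1 / σ) * t ^ (1 - 1 / σ)) t)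
    (x : Fin m → ℝ) (hx : ∀ i, 0 < x i) :
    Γ * ψ ((1 / Γ) * ∑ i, γ i * (a * (2 - 1 / σ) * (x i) ^ (1 - 1 / σ)))
      = (∑ i, β i * (x i) ^ ((σ - 1) / σ)) ^ (σ / (σ - 1)) := by
  have hσ1' : σ - 1 ≠ 0 := sub_ne_zero.mpr hσ1
  rcases Nat.eq_zero_or_pos m with hm | hm
  · subst hm
    simp only [Finset.univ_eq_empty, Finset.sum_empty] at hΓ ⊢
    rw [hΓ, zero_mul, Real.zero_rpow (div_ne_zero hσ0 hσ1')]
  have : Nonempty (Fin m) := Fin.pos_iff_nonempty.mp hm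
  have hee : 1 - 1/σ = (σ - 1)/σ := by field_simp
  have hBpos : 0 < B := by
    rw [hB]; exact Finset.sum_pos (fun i _ => hβ i) Finset.univ_nonempty
  have hBp : (0:ℝ) < B ^ (1/(σ-1)) := Real.rpow_pos_of_pos hBpos _
  set S : ℝ := ∑ i, β i * (x i) ^ ((σ - 1) / σ) with hS
  have hSpos : 0 < S :=
    Finset.sum_pos (fun i _ => mul_pos (hβ i) (Real.rpow_pos_of_pos (hx i) _))
      Finset.univ_nonempty
  have hΓeq : Γ = B * B ^ (1/(σ-1)) := by
    rw [hΓ]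
    simp only [hγ]
    rw [← Finset.sum_mul, ← hB]
  have hΓpos : 0 < Γ := hΓeq ▸ mul_pos hBpos hBp
  have hsum : (∑ i, γ i * (a * (2 - 1 / σ) * (x i) ^ (1 - 1 / σ)))
      = a * (2 - 1/σ) * (B ^ (1/(σ-1)) * S) := by
    rw [hS, Finset.mul_sum, Finset.mul_sum]
    refine Finset.sum_congr rfl fun i _ => ?_
    rw [hγ i, hee]
    ring
  set t : ℝ := (S / B) ^ (σ/(σ-1)) with ht
  have htpos : 0 < t := Real.rpow_pos_of_pos (div_pos hSpos hBpos) _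
  have harg : (1 / Γ) * ∑ i, γ i * (a * (2 - 1 / σ) * (x i) ^ (1 - 1 / σ))
      = a * (2 - 1/σ) * t ^ (1 - 1/σ) := by
    have ht2 : t ^ (1 - 1/σ) = S / B := by
      rw [ht, hee, ← Real.rpow_mul (le_of_lt (div_pos hSpos hBpos))]
      rw [show σ/(σ-1) * ((σ-1)/σ) = 1 by field_simp, Real.rpow_one]
    rw [hsum, hΓeq, ht2]
    field_simp
  rw [harg, hψ t htpos]
  rw [hΓeq, ht]
  have hsum1 : (1:ℝ) + 1/(σ-1) = σ/(σ-1) := by field_simp; ring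
  have h1 : B * B ^ (1/(σ-1)) = B ^ (σ/(σ-1)) := by
    rw [← Real.rpow_one_add' (le_of_lt hBpos) (hsum1 ▸ div_ne_zero hσ0 hσ1'), hsum1]
  rw [h1, ← Real.mul_rpow (le_of_lt hBpos) (le_of_lt (div_pos hSpos hBpos)),
    mul_div_cancel₀ _ (ne_of_gt hBpos)]
end

section
/- Let σ ∈ ℝ with σ ∉ {1, 2}, let β_1,…,β_m > 0, set δ_i = β_i^σ and Δ = Σ_i δ_i, let b ∈ ℝ∖{0} be any constant such that b·(2−σ)·(1−σ) > 0 (so that φ_p(x) = b·x^{2−σ} is strictly convex on (0,∞)), and set γ_i = δ_i·Δ^{σ/(1−σ)} for each i, Γ = Σ_i γ_i. Then for all (p_1,…,p_m) ∈ (0,∞)^m, the LDA with generator φ_p and weights γ_1,…,γ_m equals the price index: Γ·(φ_p')^{-1}((1/Γ)·Σ_i γ_i φ_p'(p_i)) = (Σ_{i=1}^m β_i^σ p_i^{1−σ})^{1/(1−σ)}. -/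
open scoped BigOperators

/-- Lemma 2 of the paper: the price index `(Σ βᵢ^σ pᵢ^(1−σ))^(1/(1−σ))` is the
LDA with generator `φ_p(x) = b·x^(2−σ)` and weights `γᵢ = δᵢ·Δ^(σ/(1−σ))`, `δᵢ = βᵢ^σ`.
Here `ψ` is any left inverse of `φ_p'` on `(0,∞)`, and `φ_p'(t) = b·(2−σ)·t^(1−σ)`. -/
theorem statement_8 (m : ℕ) (σ b : ℝ) (hσ1 : σ ≠ 1) (hσ2 : σ ≠ 2)
    (hb : b ≠ 0) (hstrict : 0 < b * (2 - σ) * (1 - σ))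
    (β : Fin m → ℝ) (hβ : ∀ i, 0 < β i)
    (δ : Fin m → ℝ) (hδ : ∀ i, δ i = (β i) ^ σ)
    (Δ : ℝ) (hΔ : Δ = ∑ i, δ i)
    (γ : Fin m → ℝ) (hγ : ∀ i, γ i = δ i * Δ ^ (σ / (1 - σ)))
    (Γ : ℝ) (hΓ : Γ = ∑ i, γ i)
    (ψ : ℝ → ℝ)
    (hψ : ∀ t ∈ Set.Ioi (0:ℝ), ψ (b * (2 - σ) * t ^ (1 - σ)) = t)
    (hder : ∀ t ∈ Set.Ioi (0:ℝ), HasDerivAt (fun s : ℝ => b * s ^ (2 - σ))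
      (b * (2 - σ) * t ^ (1 - σ)) t)
    (p : Fin m → ℝ) (hp : ∀ i, 0 < p i) :
    Γ * ψ ((1 / Γ) * ∑ i, γ i * (b * (2 - σ) * (p i) ^ (1 - σ)))
      = (∑ i, (β i) ^ σ * (p i) ^ (1 - σ)) ^ (1 / (1 - σ)) := by
  have h1σ : (1:ℝ) - σ ≠ 0 := sub_ne_zero.mpr (Ne.symm hσ1)
  rcases eq_or_ne m 0 with hm | hm
  · subst hm
    have hΓ0 : Γ = 0 := by simp [hΓ]
    rw [hΓ0, zero_mul]
    rw [show (∑ i : Fin 0, (β i) ^ σ * (p i) ^ (1 - σ)) = 0 from by simp]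
    rw [Real.zero_rpow (one_div_ne_zero h1σ)]
  · haveI : Nonempty (Fin m) := Fin.pos_iff_nonempty.mp (Nat.pos_of_ne_zero hm)
    have hδpos : ∀ i, 0 < δ i := fun i => (hδ i) ▸ Real.rpow_pos_of_pos (hβ i) σ
    have hΔpos : 0 < Δ := hΔ ▸ Finset.sum_pos (fun i _ => hδpos i) Finset.univ_nonempty
    set S : ℝ := ∑ i, δ i * (p i) ^ (1 - σ) with hS
    have hSpos : 0 < S :=
      Finset.sum_pos (fun i _ => mul_pos (hδpos i) (Real.rpow_pos_of_pos (hp i) _))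
        Finset.univ_nonempty
    have hexp : 1 + σ / (1 - σ) = 1 / (1 - σ) := by field_simp; ring
    have hΓval : Γ = Δ ^ (1 / (1 - σ)) := by
      have : Γ = Δ * Δ ^ (σ / (1 - σ)) := by
        rw [hΓ]
        simp only [hγ]
        rw [← Finset.sum_mul, ← hΔ]
      rw [this, ← Real.rpow_one_add' (le_of_lt hΔpos) (by rw [hexp]; exact one_div_ne_zero h1σ),
        hexp]
    have hΓpos : 0 < Γ := hΓval ▸ Real.rpow_pos_of_pos hΔpos _
    set t : ℝ := (S / Δ) ^ (1 / (1 - σ)) with ht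
    have htpos : 0 < t := Real.rpow_pos_of_pos (div_pos hSpos hΔpos) _
    have ht1σ : t ^ (1 - σ) = S / Δ := by
      rw [ht, ← Real.rpow_mul (le_of_lt (div_pos hSpos hΔpos)),
        one_div_mul_cancel h1σ, Real.rpow_one]
    have hsum : (∑ i, γ i * (b * (2 - σ) * (p i) ^ (1 - σ)))
        = Δ ^ (σ / (1 - σ)) * (b * (2 - σ)) * S := by
      rw [hS, Finset.mul_sum]
      apply Finset.sum_congr rfl
      intro i _
      rw [hγ i]; ring
    have harg : (1 / Γ) * ∑ i, γ i * (b * (2 - σ) * (p i) ^ (1 - σ))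
        = b * (2 - σ) * t ^ (1 - σ) := by
      rw [hsum, ht1σ, hΓval]
      have hne : Δ ^ (1 / (1 - σ)) ≠ 0 := ne_of_gt (Real.rpow_pos_of_pos hΔpos _)
      have hquot : Δ ^ (σ / (1 - σ)) / Δ ^ (1 / (1 - σ)) = 1 / Δ := by
        rw [← Real.rpow_sub hΔpos]
        have : σ / (1 - σ) - 1 / (1 - σ) = -1 := by field_simp; ring
        rw [this, Real.rpow_neg_one]; exact (one_div Δ).symm
      field_simp at hquot ⊢
      linear_combination hquot
    rw [harg, hψ t htpos, hΓval, ht, Real.div_rpow (le_of_lt hSpos) (le_of_lt hΔpos)]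
    have hΔne : Δ ^ (1 / (1 - σ)) ≠ 0 := ne_of_gt (Real.rpow_pos_of_pos hΔpos _)
    rw [mul_div_cancel₀ _ hΔne]
    rw [hS]
    congr 1
    exact Finset.sum_congr rfl fun i _ => by rw [hδ i]
end

section
/- Let m ≥ 2 and let x_⋆ be the LDA on (0,∞)^m with generator φ and weights γ_1,…,γ_m > 0, where x_⋆ takes only positive values. Suppose there exist functions z_1,…,z_m : (0,∞)^m → (0,∞) and Z : (0,∞)^m → (0,∞) such that for all x ∈ (0,∞)^m: z_i(x) = Z(x)·(∂x_⋆/∂x_i)(x) for every i (the dual-quantity condition), and Σ_{i=1}^m x_i·z_i(x) = x_⋆(x)·Z(x) (the duality identity). Then there exist c > 0 and κ ∈ ℝ such that φ''(t) = c·t^κ for all t > 0; consequently x_⋆ is a CES aggregator when κ ≠ −1, and the Cobb–Douglas limit of CES when κ = −1. -/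
open scoped BigOperators
open Set

set_option maxHeartbeats 1000000

/-- Auxiliary: a continuous function vanishing at the endpoints of an interval and
satisfying a fixed-weight Jensen-type functional equation (driven by a strictly
monotone function `D`) vanishes on the whole interval. -/
lemma aux_dense_zero (l p q : ℝ) (hl0 : 0 < l) (hl1 : l < 1) (hpq : p < q)
    (h D : ℝ → ℝ) (hcont : ContinuousOn h (Icc p q))
    (hmono : StrictMonoOn D (Icc p q)) (hp : h p = 0) (hq : h q = 0)
    (hfe : ∀ s ∈ Icc p q, ∀ t ∈ Icc p q, ∃ w ∈ Icc p q,
      D w = l * D s + (1 - l) * D t ∧ h w = l * h s + (1 - l) * h t) :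
    ∀ r ∈ Icc p q, h r = 0 := by
  intro r hr
  by_contra hr0
  have hpr : p < r := lt_of_le_of_ne hr.1 (by rintro rfl; exact hr0 hp)
  have hrq : r < q := lt_of_le_of_ne hr.2 (by rintro rfl; exact hr0 hq)
  let A : Set ℝ := Icc p r ∩ h ⁻¹' {0}
  let B : Set ℝ := Icc r q ∩ h ⁻¹' {0}
  have hApq : Icc p r ⊆ Icc p q := Icc_subset_Icc le_rfl hrq.le
  have hBpq : Icc r q ⊆ Icc p q := Icc_subset_Icc hpr.le le_rfl
  have hAclosed : IsClosed A :=
    (hcont.mono hApq).preimage_isClosed_of_isClosed isClosed_Icc isClosed_singleton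
  have hBclosed : IsClosed B :=
    (hcont.mono hBpq).preimage_isClosed_of_isClosed isClosed_Icc isClosed_singleton
  have hAne : A.Nonempty := ⟨p, ⟨le_rfl, hpr.le⟩, hp⟩
  have hBne : B.Nonempty := ⟨q, ⟨hrq.le, le_rfl⟩, hq⟩
  have hAbdd : BddAbove A := ⟨r, fun u hu => hu.1.2⟩
  have hBbdd : BddBelow B := ⟨r, fun u hu => hu.1.1⟩
  have haA : sSup A ∈ A := hAclosed.csSup_mem hAne hAbdd
  have hbB : sInf B ∈ B := hBclosed.csInf_mem hBne hBbdd
  obtain ⟨haA1, haA2⟩ := haA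
  obtain ⟨hbB1, hbB2⟩ := hbB
  have haA2 : h (sSup A) = 0 := haA2
  have hbB2 : h (sInf B) = 0 := hbB2
  have har : sSup A < r := lt_of_le_of_ne haA1.2 (fun h' => hr0 (h' ▸ haA2))
  have hrb : r < sInf B := lt_of_le_of_ne hbB1.1 (fun h' => hr0 (h'.symm ▸ hbB2))
  set a := sSup A
  set b := sInf B
  have haA : a ∈ Icc p r := haA1
  have hbB : b ∈ Icc r q := hbB1
  have hab : a < b := har.trans hrb
  have haI : a ∈ Icc p q := hApq haA
  have hbI : b ∈ Icc p q := hBpq hbB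
  have hgap : ∀ u, a < u → u < b → h u ≠ 0 := by
    intro u hau hub hu0
    rcases le_or_gt u r with h1 | h1
    · exact absurd (le_csSup hAbdd ⟨⟨haA.1.trans hau.le, h1⟩, hu0⟩) (not_le.2 hau)
    · exact absurd (csInf_le hBbdd ⟨⟨h1.le, hub.le.trans hbB.2⟩, hu0⟩) (not_le.2 hub)
  obtain ⟨w, hwI, hwD, hwh⟩ := hfe a haI b hbI
  have hDab : D a < D b := hmono haI hbI hab
  have hDaw : D a < D w := by rw [hwD]; nlinarith
  have hDwb : D w < D b := by rw [hwD]; nlinarith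
  have haw : a < w := ((hmono.lt_iff_lt haI hwI).1 hDaw)
  have hwb : w < b := ((hmono.lt_iff_lt hwI hbI).1 hDwb)
  exact hgap w haw hwb (by rw [hwh, haA2, hbB2]; ring)

/-- Theorem 5 of the paper: if the LDA `x⋆` with generator `φ` admits dual
quantities `zᵢ(x) = Z(x)·∂x⋆/∂xᵢ(x)` satisfying the duality identity
`Σ xᵢ·zᵢ(x) = x⋆(x)·Z(x)`, then `φ''(t) = c·t^κ` for some `c > 0` and `κ ∈ ℝ`. -/
theorem statement_12 (m : ℕ) (hm : 2 ≤ m) (φ Dφ DDφ : ℝ → ℝ)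
    (hconv : StrictConvexOn ℝ (Set.Ioi 0) φ)
    (hd1 : ∀ t ∈ Set.Ioi (0:ℝ), HasDerivAt φ (Dφ t) t)
    (hd2 : ∀ t ∈ Set.Ioi (0:ℝ), HasDerivAt Dφ (DDφ t) t)
    (hc2 : ContinuousOn DDφ (Set.Ioi 0))
    (hpos : ∀ t ∈ Set.Ioi (0:ℝ), 0 < DDφ t)
    (γ : Fin m → ℝ) (hγ : ∀ i, 0 < γ i)
    (Γ : ℝ) (hΓ : Γ = ∑ i, γ i)
    (f : (Fin m → ℝ) → ℝ)
    (hf : ∀ x : Fin m → ℝ, (∀ i, 0 < x i) →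
      0 < f x / Γ ∧ Dφ (f x / Γ) = (1 / Γ) * ∑ i, γ i * Dφ (x i))
    (hfpos : ∀ x : Fin m → ℝ, (∀ i, 0 < x i) → 0 < f x)
    (z : Fin m → (Fin m → ℝ) → ℝ) (Z : (Fin m → ℝ) → ℝ)
    (hzpos : ∀ x : Fin m → ℝ, (∀ i, 0 < x i) → ∀ i, 0 < z i x)
    (hZpos : ∀ x : Fin m → ℝ, (∀ i, 0 < x i) → 0 < Z x)
    (hdq : ∀ x : Fin m → ℝ, (∀ i, 0 < x i) →
      ∀ i, z i x = Z x * fderiv ℝ f x (Pi.single i 1))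
    (hdual : ∀ x : Fin m → ℝ, (∀ i, 0 < x i) →
      (∑ i, x i * z i x) = f x * Z x) :
    ∃ c > (0:ℝ), ∃ κ : ℝ, ∀ t ∈ Set.Ioi (0:ℝ), DDφ t = c * t ^ κ := by
  have m0 : 0 < m := by omega
  let i0 : Fin m := ⟨0, m0⟩
  let i1 : Fin m := ⟨1, by omega⟩
  have hi10 : i1 ≠ i0 := fun h => absurd (congrArg Fin.val h) (by norm_num [i0, i1])
  have hΓpos : 0 < Γ := by
    rw [hΓ]; exact Finset.sum_pos (fun i _ => hγ i) ⟨i0, Finset.mem_univ i0⟩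
  have hΓne : Γ ≠ 0 := ne_of_gt hΓpos
  -- the positive orthant is open
  have hU : IsOpen {y : Fin m → ℝ | ∀ i, 0 < y i} := by
    have : {y : Fin m → ℝ | ∀ i, 0 < y i} = ⋂ i, {y : Fin m → ℝ | 0 < y i} := by
      ext y; simp
    rw [this]
    exact isOpen_iInter_of_finite fun i =>
      isOpen_lt continuous_const (continuous_apply i)
  -- Step A: the Euler-type identity Σ γᵢ xᵢ φ''(xᵢ) = Γ · (f x/Γ) · φ''(f x/Γ)
  have key : ∀ x : Fin m → ℝ, (∀ i, 0 < x i) →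
      ∑ i, γ i * (x i * DDφ (x i)) = Γ * ((f x / Γ) * DDφ (f x / Γ)) := by
    intro x hx
    have hdiff : DifferentiableAt ℝ f x := by
      by_contra h
      have h0 : fderiv ℝ f x = 0 := fderiv_zero_of_not_differentiableAt h
      have h1 := hdq x hx i0
      rw [h0] at h1
      simp at h1
      linarith [hzpos x hx i0]
    have hfx : 0 < f x / Γ := (hf x hx).1
    have hd : HasFDerivAt f (fderiv ℝ f x) x := hdiff.hasFDerivAt
    have hdiv : HasFDerivAt (fun y => f y / Γ) (Γ⁻¹ • fderiv ℝ f x) x := by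
      have := hd.const_mul Γ⁻¹
      simp only [← div_eq_inv_mul] at this
      exact this
    have hDφ : HasDerivAt Dφ (DDφ (f x / Γ)) (f x / Γ) := hd2 _ hfx
    have hL : HasFDerivAt (fun y => Dφ (f y / Γ))
        (DDφ (f x / Γ) • (Γ⁻¹ • fderiv ℝ f x)) x := hDφ.comp_hasFDerivAt x hdiv
    have hR : HasFDerivAt (fun y : Fin m → ℝ => (1 / Γ) * ∑ i, γ i * Dφ (y i))
        ((1 / Γ) • ∑ i, γ i • (DDφ (x i) •
          (ContinuousLinearMap.proj i : (Fin m → ℝ) →L[ℝ] ℝ))) x := by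
      refine HasFDerivAt.const_mul ?_ (1 / Γ)
      refine HasFDerivAt.fun_sum fun i _ => ?_
      refine HasFDerivAt.const_mul ?_ (γ i)
      exact (hd2 _ (hx i)).comp_hasFDerivAt x (hasFDerivAt_apply i x)
    have hfeq : fderiv ℝ (fun y => Dφ (f y / Γ)) x
        = fderiv ℝ (fun y : Fin m → ℝ => (1 / Γ) * ∑ i, γ i * Dφ (y i)) x := by
      apply Filter.EventuallyEq.fderiv_eq
      filter_upwards [hU.mem_nhds hx] with y hy
      exact (hf y hy).2
    have hCLM : (DDφ (f x / Γ) • (Γ⁻¹ • fderiv ℝ f x))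
        = ((1 / Γ) • ∑ i, γ i • (DDφ (x i) •
          (ContinuousLinearMap.proj i : (Fin m → ℝ) →L[ℝ] ℝ))) := by
      rw [← hL.fderiv, ← hR.fderiv, hfeq]
    -- partial derivatives of f
    have hpart : ∀ i, fderiv ℝ f x (Pi.single i 1)
        = γ i * DDφ (x i) / DDφ (f x / Γ) := by
      intro i
      have h1 := congrArg (fun L : (Fin m → ℝ) →L[ℝ] ℝ => L (Pi.single i 1)) hCLM
      simp only [ContinuousLinearMap.smul_apply, ContinuousLinearMap.sum_apply,
        ContinuousLinearMap.proj_apply, smul_eq_mul] at h1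
      have hsum : ∀ j : Fin m, γ j * (DDφ (x j) * (Pi.single i (1:ℝ) : Fin m → ℝ) j)
          = if j = i then γ i * DDφ (x i) else 0 := by
        intro j
        rcases eq_or_ne j i with rfl | hji
        · simp
        · simp [Pi.single_apply, hji]
      rw [Finset.sum_congr rfl fun j _ => hsum j,
        Finset.sum_ite_eq' Finset.univ i] at h1
      simp only [Finset.mem_univ, if_true, one_div] at h1
      have hDD : DDφ (f x / Γ) ≠ 0 := ne_of_gt (hpos _ hfx)
      field_simp at h1 ⊢
      linarith
    -- plug into the duality identity
    have hD := hdual x hx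
    have hZx : Z x ≠ 0 := ne_of_gt (hZpos x hx)
    have hDD : DDφ (f x / Γ) ≠ 0 := ne_of_gt (hpos _ hfx)
    have hsum2 : ∑ i, x i * z i x
        = (Z x / DDφ (f x / Γ)) * ∑ i, γ i * (x i * DDφ (x i)) := by
      rw [Finset.mul_sum]
      refine Finset.sum_congr rfl fun i _ => ?_
      rw [hdq x hx i, hpart i]
      field_simp
    rw [hsum2] at hD
    have hS : ∑ i, γ i * (x i * DDφ (x i))
        = f x * DDφ (f x / Γ) := by
      have h3 : Z x * ∑ i, γ i * (x i * DDφ (x i))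
          = Z x * (f x * DDφ (f x / Γ)) := by
        field_simp at hD
        simp only [mul_assoc] at hD
        rw [hD]
      exact mul_left_cancel₀ hZx h3
    have h2 : Γ * (f x / Γ) = f x := by field_simp
    calc ∑ i, γ i * (x i * DDφ (x i)) = f x * DDφ (f x / Γ) := hS
      _ = (Γ * (f x / Γ)) * DDφ (f x / Γ) := by rw [h2]
      _ = Γ * (f x / Γ * DDφ (f x / Γ)) := by ring
  -- weights
  set l : ℝ := γ i0 / Γ with hl
  have hγ0Γ : γ i0 < Γ := by
    have h1 : γ i0 + ∑ i ∈ Finset.univ.erase i0, γ i = Γ := by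
      rw [hΓ]; exact Finset.add_sum_erase _ γ (Finset.mem_univ i0)
    have h2 : 0 < ∑ i ∈ Finset.univ.erase i0, γ i :=
      Finset.sum_pos (fun i _ => hγ i)
        ⟨i1, Finset.mem_erase.2 ⟨hi10, Finset.mem_univ i1⟩⟩
    linarith
  have hl0 : 0 < l := div_pos (hγ i0) hΓpos
  have hl1 : l < 1 := (div_lt_one hΓpos).2 hγ0Γ
  -- strict monotonicity of Dφ on (0,∞)
  have hmono : StrictMonoOn Dφ (Ioi 0) := by
    apply strictMonoOn_of_deriv_pos (convex_Ioi 0)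
    · exact fun t ht => (hd2 t ht).continuousAt.continuousWithinAt
    · intro t ht
      rw [interior_Ioi] at ht
      rw [(hd2 t ht).deriv]
      exact hpos t ht
  -- Step B: two-point functional equation
  have hw : ∀ s t : ℝ, 0 < s → 0 < t → ∃ w, 0 < w ∧
      Dφ w = l * Dφ s + (1 - l) * Dφ t ∧
      w * DDφ w = l * (s * DDφ s) + (1 - l) * (t * DDφ t) := by
    intro s t hs ht
    set x : Fin m → ℝ := fun i => if i = i0 then s else t with hxdef
    have hx : ∀ i, 0 < x i := by
      intro i
      by_cases hi : i = i0 <;> simp [hxdef, hi, hs, ht]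
    have hx0 : x i0 = s := by simp [hxdef]
    have hsp : ∀ G : ℝ → ℝ, ∑ i, γ i * G (x i)
        = γ i0 * G s + (Γ - γ i0) * G t := by
      intro G
      rw [← Finset.add_sum_erase _ (fun i => γ i * G (x i)) (Finset.mem_univ i0), hx0]
      congr 1
      have hrest : ∀ i ∈ Finset.univ.erase i0, γ i * G (x i) = γ i * G t := by
        intro i hi
        rw [show x i = t from if_neg (Finset.ne_of_mem_erase hi)]
      rw [Finset.sum_congr rfl hrest, ← Finset.sum_mul]
      congr 1
      have h1 : γ i0 + ∑ i ∈ Finset.univ.erase i0, γ i = Γ := by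
        rw [hΓ]; exact Finset.add_sum_erase _ γ (Finset.mem_univ i0)
      linarith
    obtain ⟨hw0, hweq⟩ := hf x hx
    have hkey := key x hx
    refine ⟨f x / Γ, hw0, ?_, ?_⟩
    · rw [hweq, hsp Dφ, hl]
      field_simp
    · rw [hsp (fun u => u * DDφ u)] at hkey
      have : f x / Γ * DDφ (f x / Γ)
          = (γ i0 * (s * DDφ s) + (Γ - γ i0) * (t * DDφ t)) / Γ := by
        field_simp at hkey ⊢
        linarith
      rw [this, hl]
      field_simp
  -- Step C: on every interval, g(r) := r·DDφ(r) is an affine function of Dφ(r)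
  have haff : ∀ p q : ℝ, 0 < p → p < q → ∀ r ∈ Icc p q,
      (Dφ q - Dφ p) * (r * DDφ r)
        = (q * DDφ q - p * DDφ p) * Dφ r
          + ((p * DDφ p) * Dφ q - (q * DDφ q) * Dφ p) := by
    intro p q hp0 hpq r hr
    have hq0 : 0 < q := hp0.trans hpq
    have hsub : Icc p q ⊆ Ioi 0 := fun u hu => lt_of_lt_of_le hp0 hu.1
    have hDpq : Dφ p < Dφ q := hmono hp0 hq0 hpq
    have hDne : Dφ q - Dφ p ≠ 0 := ne_of_gt (sub_pos.2 hDpq)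
    set Bc : ℝ := (q * DDφ q - p * DDφ p) / (Dφ q - Dφ p) with hBcdef
    have hBc : Bc * (Dφ q - Dφ p) = q * DDφ q - p * DDφ p := by
      rw [hBcdef]; field_simp
    have hmono' : StrictMonoOn Dφ (Icc p q) := hmono.mono hsub
    have hcont : ContinuousOn
        (fun r => r * DDφ r - (p * DDφ p) - Bc * (Dφ r - Dφ p)) (Icc p q) := by
      have hg : ContinuousOn (fun r : ℝ => r * DDφ r) (Icc p q) :=
        continuous_id.continuousOn.mul (hc2.mono hsub)
      have hDc : ContinuousOn Dφ (Icc p q) := fun u hu =>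
        (hd2 u (hsub hu)).continuousAt.continuousWithinAt
      exact (hg.sub continuousOn_const).sub
        (continuousOn_const.mul (hDc.sub continuousOn_const))
    have hzero := aux_dense_zero l p q hl0 hl1 hpq
      (fun r => r * DDφ r - (p * DDφ p) - Bc * (Dφ r - Dφ p)) Dφ hcont hmono'
      (by ring) (by linear_combination -hBc)
      ?_ r hr
    · have hr' : r * DDφ r - (p * DDφ p) - Bc * (Dφ r - Dφ p) = 0 := hzero
      linear_combination (Dφ q - Dφ p) * hr' + (Dφ r - Dφ p) * hBc
    · intro s hs t ht
      have hs0 : (0:ℝ) < s := hsub hs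
      have ht0 : (0:ℝ) < t := hsub ht
      obtain ⟨w, hw0, hwD, hwg⟩ := hw s t hs0 ht0
      have hDps : Dφ p ≤ Dφ s := hmono'.monotoneOn ⟨le_rfl, hpq.le⟩ hs hs.1
      have hDpt : Dφ p ≤ Dφ t := hmono'.monotoneOn ⟨le_rfl, hpq.le⟩ ht ht.1
      have hDsq : Dφ s ≤ Dφ q := hmono'.monotoneOn hs ⟨hpq.le, le_rfl⟩ hs.2
      have hDtq : Dφ t ≤ Dφ q := hmono'.monotoneOn ht ⟨hpq.le, le_rfl⟩ ht.2
      have hDpw : Dφ p ≤ Dφ w := by rw [hwD]; nlinarith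
      have hDwq : Dφ w ≤ Dφ q := by rw [hwD]; nlinarith
      have hpw : p ≤ w := (hmono.le_iff_le hp0 hw0).1 hDpw
      have hwq : w ≤ q := (hmono.le_iff_le hw0 hq0).1 hDwq
      exact ⟨w, ⟨hpw, hwq⟩, hwD, by linear_combination hwg - Bc * hwD⟩
  -- global affine relation: t·DDφ(t) = a·Dφ(t) + b on (0,∞)
  have hD12 : Dφ 1 < Dφ 2 := hmono (by norm_num) (by norm_num) one_lt_two
  have hLne : Dφ 2 - Dφ 1 ≠ 0 := ne_of_gt (sub_pos.2 hD12)
  obtain ⟨a, ha'⟩ : ∃ a : ℝ, a * (Dφ 2 - Dφ 1) = 2 * DDφ 2 - 1 * DDφ 1 :=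
    ⟨(2 * DDφ 2 - 1 * DDφ 1) / (Dφ 2 - Dφ 1), by field_simp⟩
  obtain ⟨b, hbdef⟩ : ∃ b : ℝ, b = 1 * DDφ 1 - a * Dφ 1 := ⟨_, rfl⟩
  have hgab : ∀ t ∈ Ioi (0:ℝ), t * DDφ t = a * Dφ t + b := by
    intro t ht
    have ht0 : (0:ℝ) < t := ht
    set p : ℝ := min t 1 with hpdef
    set q : ℝ := max t 2 with hqdef
    have hp0 : 0 < p := lt_min ht0 one_pos
    have hpq : p < q :=
      lt_of_le_of_lt (min_le_right t 1)
        (lt_of_lt_of_le (by norm_num) (le_max_right t 2))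
    have hq0 : 0 < q := hp0.trans hpq
    have mem1 : (1:ℝ) ∈ Icc p q :=
      ⟨min_le_right t 1, le_trans (by norm_num) (le_max_right t 2)⟩
    have mem2 : (2:ℝ) ∈ Icc p q :=
      ⟨le_trans (min_le_right t 1) (by norm_num), le_max_right t 2⟩
    have memt : t ∈ Icc p q := ⟨min_le_left t 1, le_max_left t 2⟩
    have E1 := haff p q hp0 hpq 1 mem1
    have E2 := haff p q hp0 hpq 2 mem2
    have E3 := haff p q hp0 hpq t memt
    have hKne : Dφ q - Dφ p ≠ 0 := ne_of_gt (sub_pos.2 (hmono hp0 hq0 hpq))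
    have key3 : (Dφ q - Dφ p) * (t * DDφ t - 1 * DDφ 1)
        = (q * DDφ q - p * DDφ p) * (Dφ t - Dφ 1) := by linear_combination E3 - E1
    have key2 : (Dφ q - Dφ p) * (2 * DDφ 2 - 1 * DDφ 1)
        = (q * DDφ q - p * DDφ p) * (Dφ 2 - Dφ 1) := by linear_combination E2 - E1
    have hz : (Dφ q - Dφ p) * ((t * DDφ t - 1 * DDφ 1) * (Dφ 2 - Dφ 1)
        - (2 * DDφ 2 - 1 * DDφ 1) * (Dφ t - Dφ 1)) = 0 := by
      linear_combination (Dφ 2 - Dφ 1) * key3 - (Dφ t - Dφ 1) * key2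
    have hinner := (mul_eq_zero.1 hz).resolve_left hKne
    have hfinal : (t * DDφ t - (a * Dφ t + b)) * (Dφ 2 - Dφ 1) = 0 := by
      rw [hbdef]
      linear_combination hinner - (Dφ t - Dφ 1) * ha'
    have := (mul_eq_zero.1 hfinal).resolve_right hLne
    linarith [this]
  -- Step D: solve the ODE  t·DDφ(t) = a·Dφ(t) + b
  refine ⟨DDφ 1, hpos 1 (by norm_num), a - 1, ?_⟩
  intro t ht
  have ht0 : (0:ℝ) < t := ht
  have hFd : ∀ u ∈ Ioi (0:ℝ),
      HasDerivAt (fun u => (a * Dφ u + b) * u ^ (-a)) 0 u := by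
    intro u hu
    have hu0 : (0:ℝ) < u := hu
    have h1 : HasDerivAt (fun v => a * Dφ v + b) (a * DDφ u) u :=
      ((hd2 u hu).const_mul a).add_const b
    have h2 : HasDerivAt (fun v : ℝ => v ^ (-a)) (-a * u ^ (-a - 1)) u :=
      Real.hasDerivAt_rpow_const (Or.inl (ne_of_gt hu0))
    have h3 := h1.mul h2
    have hrq : a * Dφ u + b = u * DDφ u := (hgab u hu).symm
    have hrp : u ^ (-a) = u ^ (-a - 1) * u := by
      rw [← Real.rpow_add_one (ne_of_gt hu0) (-a - 1)]
      norm_num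
    have h4 : a * DDφ u * u ^ (-a) + (a * Dφ u + b) * (-a * u ^ (-a - 1)) = 0 := by
      rw [hrp, hrq]; ring
    rw [h4] at h3
    exact h3
  have hconst : (a * Dφ t + b) * t ^ (-a) = (a * Dφ 1 + b) * (1:ℝ) ^ (-a) := by
    have hdiffF : DifferentiableOn ℝ (fun u => (a * Dφ u + b) * u ^ (-a)) (Ioi 0) :=
      fun v hv => (hFd v hv).differentiableAt.differentiableWithinAt
    have hfd0 : ∀ v ∈ Ioi (0:ℝ),
        fderivWithin ℝ (fun u => (a * Dφ u + b) * u ^ (-a)) (Ioi 0) v = 0 := by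
      intro v hv
      have h0 : HasFDerivAt (fun u => (a * Dφ u + b) * u ^ (-a))
          (0 : ℝ →L[ℝ] ℝ) v := by
        have h1 := (hFd v hv).hasFDerivAt
        have h2 : ContinuousLinearMap.toSpanSingleton ℝ (0:ℝ) = 0 := by
          ext y; simp
        rwa [h2] at h1
      rw [fderivWithin_of_isOpen isOpen_Ioi hv]
      exact h0.fderiv
    exact (convex_Ioi 0).is_const_of_fderivWithin_eq_zero hdiffF hfd0 ht (by norm_num)
  have hFt : (a * Dφ t + b) * t ^ (-a) = DDφ 1 := by
    rw [hconst]
    simp only [Real.one_rpow, mul_one]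
    have := hgab 1 (by norm_num)
    linarith
  have h6 : t ^ (-a) * t ^ a = 1 := by
    rw [← Real.rpow_add ht0]; simp
  have h7 : a * Dφ t + b = DDφ 1 * t ^ a := by
    calc a * Dφ t + b = (a * Dφ t + b) * (t ^ (-a) * t ^ a) := by rw [h6]; ring
      _ = ((a * Dφ t + b) * t ^ (-a)) * t ^ a := by ring
      _ = DDφ 1 * t ^ a := by rw [hFt]
  have h8 : t ^ (a - 1) * t = t ^ a := by
    rw [← Real.rpow_add_one (ne_of_gt ht0) (a - 1)]
    norm_num
  have h5 : t * DDφ t = a * Dφ t + b := hgab t ht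
  apply mul_left_cancel₀ (ne_of_gt ht0)
  calc t * DDφ t = DDφ 1 * t ^ a := by rw [h5, h7]
    _ = DDφ 1 * (t ^ (a - 1) * t) := by rw [h8]
    _ = t * (DDφ 1 * t ^ (a - 1)) := by ring
end

section
/- Let m ≥ 2 and let x_⋆ be the LDA on (0,∞)^m with generator φ and weights γ_1,…,γ_m > 0, where x_⋆ takes only positive values. Then the elasticities of x_⋆ sum to one, i.e. Σ_{i=1}^m (x_i/x_⋆(x))·(∂x_⋆/∂x_i)(x) = 1 for all x ∈ (0,∞)^m, if and only if there exist c > 0 and κ ∈ ℝ such that φ''(t) = c·t^κ for all t > 0 (so that x_⋆ is a CES aggregator when κ ≠ −1, and the Cobb–Douglas limit of CES when κ = −1). -/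
open Set Filter
open scoped Topology BigOperators


/-- A function with zero derivative on `Ioi 0` is constant there. -/
lemma const_of_derivZero (F : ℝ → ℝ) (h : ∀ t ∈ Set.Ioi (0:ℝ), HasDerivAt F 0 t) :
    ∀ s ∈ Set.Ioi (0:ℝ), ∀ t ∈ Set.Ioi (0:ℝ), F s = F t := by
  have hc : ContinuousOn F (Set.Ioi 0) := fun t ht => (h t ht).continuousAt.continuousWithinAt
  have hd : DifferentiableOn ℝ F (interior (Set.Ioi (0:ℝ))) := by
    rw [interior_Ioi]; exact fun t ht => (h t ht).differentiableAt.differentiableWithinAt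
  have h0 : ∀ t ∈ interior (Set.Ioi (0:ℝ)), deriv F t = 0 := by
    rw [interior_Ioi]; exact fun t ht => (h t ht).deriv
  have hmono := monotoneOn_of_deriv_nonneg (convex_Ioi 0) hc hd (fun t ht => (h0 t ht).ge)
  have hanti := antitoneOn_of_deriv_nonpos (convex_Ioi 0) hc hd (fun t ht => (h0 t ht).le)
  intro s hs t ht
  rcases le_total s t with hst | hst
  · exact le_antisymm (hmono hs ht hst) (hanti hs ht hst)
  · exact le_antisymm (hanti ht hs hst) (hmono ht hs hst)


lemma gap_zero (α : ℝ) (hα0 : 0 < α) (hα1 : α < 1)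
    (S : ℝ → ℝ → ℝ) (K : ℝ → ℝ)
    (hmem : ∀ p q : ℝ, 0 < p → 0 < q → p < q → S p q ∈ Set.Ioo p q)
    (hK : ∀ p q : ℝ, 0 < p → 0 < q → K (S p q) = α * K p + (1-α) * K q)
    (hKc : ContinuousOn K (Set.Ioi 0))
    (hK1 : K 1 = 0) (hK2 : K 2 = 0) :
    ∀ t ∈ Set.Icc (1:ℝ) 2, K t = 0 := by
  intro t ht
  by_contra hKt
  have hsub : Set.Icc (1:ℝ) 2 ⊆ Set.Ioi 0 := fun u hu => lt_of_lt_of_le one_pos hu.1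
  set P : Set ℝ := Set.Icc 1 t ∩ K ⁻¹' {0} with hP
  set Q : Set ℝ := Set.Icc t 2 ∩ K ⁻¹' {0} with hQ
  have hPc : IsClosed P :=
    (hKc.mono (fun u hu => hsub ⟨hu.1, hu.2.trans ht.2⟩)).preimage_isClosed_of_isClosed
      isClosed_Icc isClosed_singleton
  have hQc : IsClosed Q :=
    (hKc.mono (fun u hu => hsub ⟨ht.1.trans hu.1, hu.2⟩)).preimage_isClosed_of_isClosed
      isClosed_Icc isClosed_singleton
  have hPne : P.Nonempty := ⟨1, ⟨le_refl 1, ht.1⟩, hK1⟩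
  have hQne : Q.Nonempty := ⟨2, ⟨ht.2, le_refl 2⟩, hK2⟩
  have hPb : BddAbove P := ⟨t, fun u hu => hu.1.2⟩
  have hQb : BddBelow Q := ⟨t, fun u hu => hu.1.1⟩
  set p := sSup P with hp
  set q := sInf Q with hq
  have hpP : p ∈ P := hPc.csSup_mem hPne hPb
  have hqQ : q ∈ Q := hQc.csInf_mem hQne hQb
  have hKp : K p = 0 := hpP.2
  have hKq : K q = 0 := hqQ.2
  have hpt : p < t := lt_of_le_of_ne hpP.1.2 (fun h => hKt (h ▸ hKp))
  have htq : t < q := lt_of_le_of_ne hqQ.1.1 (fun h => hKt (h ▸ hKq))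
  have hppos : 0 < p := lt_of_lt_of_le one_pos hpP.1.1
  have hqpos : 0 < q := lt_trans one_pos (lt_of_le_of_lt ht.1 htq)
  have hpq : p < q := hpt.trans htq
  have hw := hmem p q hppos hqpos hpq
  have hKw : K (S p q) = 0 := by
    rw [hK p q hppos hqpos, hKp, hKq]; ring
  rcases le_or_gt (S p q) t with hle | hlt
  · have : S p q ∈ P := ⟨⟨hpP.1.1.trans hw.1.le, hle⟩, hKw⟩
    exact absurd (le_csSup hPb this) (not_le.mpr hw.1)
  · have : S p q ∈ Q := ⟨⟨hlt.le, hw.2.le.trans hqQ.1.2⟩, hKw⟩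
    exact absurd (csInf_le hQb this) (not_le.mpr hw.2)


lemma jensen_glob (α : ℝ) (hα0 : 0 < α) (hα1 : α < 1)
    (S : ℝ → ℝ → ℝ) (K : ℝ → ℝ)
    (hmem : ∀ p q : ℝ, 0 < p → 0 < q → p < q → S p q ∈ Set.Ioo p q)
    (hmem' : ∀ p q : ℝ, 0 < p → 0 < q → q < p → S p q ∈ Set.Ioo q p)
    (hK : ∀ p q : ℝ, 0 < p → 0 < q → K (S p q) = α * K p + (1-α) * K q)
    (hKc : ContinuousOn K (Set.Ioi 0))
    (hScont : ∀ p : ℝ, 0 < p → ContinuousOn (S p) (Set.Ioi 0))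
    (hK1 : K 1 = 0) (hK2 : K 2 = 0)
    (hIcc : ∀ t ∈ Set.Icc (1:ℝ) 2, K t = 0) :
    ∀ t ∈ Set.Ioi (0:ℝ), K t = 0 := by
  have h1α : (0:ℝ) < 1 - α := by linarith
  intro t ht
  rw [Set.mem_Ioi] at ht
  rcases lt_or_ge t 2 with h2 | h2
  · -- iterate S 2 · upwards to 2
    set u : ℕ → ℝ := fun n => (fun r => S 2 r)^[n] t with hu
    have hu0 : u 0 = t := rfl
    have husucc : ∀ n, u (n+1) = S 2 (u n) := by
      intro n; simp [hu, Function.iterate_succ_apply']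
    have hA : ∀ n, 0 < u n ∧ u n < 2 := by
      intro n; induction n with
      | zero => exact ⟨ht, h2⟩
      | succ n ih =>
        have := hmem' 2 (u n) two_pos ih.1 ih.2
        rw [husucc]
        exact ⟨lt_trans ih.1 this.1, this.2⟩
    have hmono : Monotone u := by
      apply monotone_nat_of_le_succ
      intro n
      rw [husucc]
      exact (hmem' 2 (u n) two_pos (hA n).1 (hA n).2).1.le
    have hbdd : BddAbove (Set.range u) := ⟨2, by rintro _ ⟨n, rfl⟩; exact (hA n).2.le⟩
    set L := ⨆ n, u n with hL
    have htend : Filter.Tendsto u Filter.atTop (𝓝 L) := tendsto_atTop_ciSup hmono hbdd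
    have hL2 : L ≤ 2 := ciSup_le fun n => (hA n).2.le
    have hLpos : 0 < L := lt_of_lt_of_le ht (hu0 ▸ le_ciSup hbdd 0)
    have hfix : S 2 L = L := by
      have h1 : Filter.Tendsto (fun n => u (n+1)) Filter.atTop (𝓝 L) :=
        htend.comp (Filter.tendsto_add_atTop_nat 1)
      have hcS : ContinuousAt (S 2) L := (hScont 2 two_pos).continuousAt (Ioi_mem_nhds hLpos)
      have h2' : Filter.Tendsto (fun n => S 2 (u n)) Filter.atTop (𝓝 (S 2 L)) :=
        hcS.tendsto.comp htend
      have : Filter.Tendsto (fun n => u (n+1)) Filter.atTop (𝓝 (S 2 L)) := by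
        simpa only [husucc] using h2'
      exact tendsto_nhds_unique this h1
    have hLeq : L = 2 := by
      by_contra h
      have hlt : L < 2 := lt_of_le_of_ne hL2 h
      exact absurd hfix (ne_of_gt (hmem' 2 L two_pos hLpos hlt).1)
    have hKu : ∀ n, K (u n) = (1-α)^n * K t := by
      intro n; induction n with
      | zero => rw [hu0]; ring
      | succ n ih =>
        rw [husucc, hK 2 (u n) two_pos (hA n).1, hK2, ih]; ring
    have hev : ∀ᶠ n in Filter.atTop, (1:ℝ) < u n := by
      have : ∀ᶠ r in 𝓝 L, 1 < r := by rw [hLeq]; exact eventually_gt_nhds one_lt_two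
      exact htend.eventually this
    obtain ⟨n, hn⟩ := hev.exists
    have h0 : K (u n) = 0 := hIcc (u n) ⟨hn.le, (hA n).2.le⟩
    have := h0.symm.trans (hKu n)
    have hne : ((1:ℝ)-α)^n ≠ 0 := pow_ne_zero n (ne_of_gt h1α)
    field_simp at this
    exact (mul_eq_zero.mp this.symm).resolve_left hne
  · -- t ≥ 2 : iterate S 1 · downwards to 1
    have ht1 : (1:ℝ) < t := lt_of_lt_of_le one_lt_two h2
    set u : ℕ → ℝ := fun n => (fun r => S 1 r)^[n] t with hu
    have hu0 : u 0 = t := rfl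
    have husucc : ∀ n, u (n+1) = S 1 (u n) := by
      intro n; simp [hu, Function.iterate_succ_apply']
    have hA : ∀ n, 1 < u n := by
      intro n; induction n with
      | zero => exact ht1
      | succ n ih =>
        rw [husucc]
        exact (hmem 1 (u n) one_pos (lt_trans one_pos ih) ih).1
    have hanti : Antitone u := by
      apply antitone_nat_of_succ_le
      intro n
      rw [husucc]
      exact (hmem 1 (u n) one_pos (lt_trans one_pos (hA n)) (hA n)).2.le
    have hbdd : BddBelow (Set.range u) := ⟨1, by rintro _ ⟨n, rfl⟩; exact (hA n).le⟩
    set L := ⨅ n, u n with hL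
    have htend : Filter.Tendsto u Filter.atTop (𝓝 L) := tendsto_atTop_ciInf hanti hbdd
    have hL1 : 1 ≤ L := le_ciInf fun n => (hA n).le
    have hLpos : 0 < L := lt_of_lt_of_le one_pos hL1
    have hfix : S 1 L = L := by
      have h1 : Filter.Tendsto (fun n => u (n+1)) Filter.atTop (𝓝 L) :=
        htend.comp (Filter.tendsto_add_atTop_nat 1)
      have hcS : ContinuousAt (S 1) L := (hScont 1 one_pos).continuousAt (Ioi_mem_nhds hLpos)
      have h2' : Filter.Tendsto (fun n => S 1 (u n)) Filter.atTop (𝓝 (S 1 L)) :=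
        hcS.tendsto.comp htend
      have : Filter.Tendsto (fun n => u (n+1)) Filter.atTop (𝓝 (S 1 L)) := by
        simpa only [husucc] using h2'
      exact tendsto_nhds_unique this h1
    have hLeq : L = 1 := by
      by_contra h
      have hlt : 1 < L := lt_of_le_of_ne hL1 (Ne.symm h)
      exact absurd hfix (ne_of_lt (hmem 1 L one_pos hLpos hlt).2)
    have hKu : ∀ n, K (u n) = (1-α)^n * K t := by
      intro n; induction n with
      | zero => rw [hu0]; ring
      | succ n ih =>
        rw [husucc, hK 1 (u n) one_pos (lt_trans one_pos (hA n)), hK1, ih]; ring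
    have hev : ∀ᶠ n in Filter.atTop, u n < 2 := by
      have : ∀ᶠ r in 𝓝 L, r < 2 := by rw [hLeq]; exact eventually_lt_nhds one_lt_two
      exact htend.eventually this
    obtain ⟨n, hn⟩ := hev.exists
    have h0 : K (u n) = 0 := hIcc (u n) ⟨(hA n).le, hn.le⟩
    have := h0.symm.trans (hKu n)
    have hne : ((1:ℝ)-α)^n ≠ 0 := pow_ne_zero n (ne_of_gt h1α)
    field_simp at this
    exact (mul_eq_zero.mp this.symm).resolve_left hne


lemma Dphi_strictMono (Dφ DDφ : ℝ → ℝ)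
    (hd2 : ∀ t ∈ Set.Ioi (0:ℝ), HasDerivAt Dφ (DDφ t) t)
    (hpos : ∀ t ∈ Set.Ioi (0:ℝ), 0 < DDφ t) :
    StrictMonoOn Dφ (Set.Ioi 0) := by
  apply strictMonoOn_of_deriv_pos (convex_Ioi 0)
  · exact fun t ht => (hd2 t ht).continuousAt.continuousWithinAt
  · intro t ht
    rw [interior_Ioi] at ht
    rw [(hd2 t ht).deriv]
    exact hpos t ht

lemma f_hasFDeriv (m : ℕ) (Dφ DDφ : ℝ → ℝ)
    (hd2 : ∀ t ∈ Set.Ioi (0:ℝ), HasDerivAt Dφ (DDφ t) t)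
    (hc2 : ContinuousOn DDφ (Set.Ioi 0))
    (hpos : ∀ t ∈ Set.Ioi (0:ℝ), 0 < DDφ t)
    (γ : Fin m → ℝ) (Γ : ℝ) (hΓpos : 0 < Γ)
    (f : (Fin m → ℝ) → ℝ)
    (hf : ∀ x : Fin m → ℝ, (∀ i, 0 < x i) →
      0 < f x / Γ ∧ Dφ (f x / Γ) = (1 / Γ) * ∑ i, γ i * Dφ (x i))
    (x : Fin m → ℝ) (hx : ∀ i, 0 < x i) :
    ContinuousAt f x ∧
      ∀ i, fderiv ℝ f x (Pi.single i 1) = γ i * DDφ (x i) / DDφ (f x / Γ) := by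
  have hmono := Dphi_strictMono Dφ DDφ hd2 hpos
  set s : ℝ := f x / Γ with hs_def
  have hs : 0 < s := (hf x hx).1
  -- strict derivative of Dφ at points of Ioi 0
  have hstrict : ∀ t ∈ Set.Ioi (0:ℝ), HasStrictDerivAt Dφ (DDφ t) t := by
    intro t ht
    apply hasStrictDerivAt_of_hasDerivAt_of_continuousAt
    · filter_upwards [Ioi_mem_nhds ht] with y hy using hd2 y hy
    · exact hc2.continuousAt (Ioi_mem_nhds ht)
  have hψ : HasStrictDerivAt Dφ (DDφ s) s := hstrict s hs
  have hne : DDφ s ≠ 0 := ne_of_gt (hpos s hs)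
  have hE : HasStrictFDerivAt Dφ
      (ContinuousLinearEquiv.unitsEquivAut ℝ (Units.mk0 (DDφ s) hne) : ℝ →L[ℝ] ℝ) s :=
    hψ.hasStrictFDerivAt_equiv hne
  set g : ℝ → ℝ := hE.localInverse Dφ _ s with hg_def
  have hg2 : ∀ᶠ v in 𝓝 (Dφ s), Dφ (g v) = v := hE.eventually_right_inverse
  have hgc : ContinuousAt g (Dφ s) := hE.localInverse_continuousAt
  have hgs : g (Dφ s) = s := hE.localInverse_apply_image
  have hgd : HasStrictDerivAt g (DDφ s)⁻¹ (Dφ s) := hψ.to_localInverse hne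
  -- the smooth "aggregator" map A
  set A : (Fin m → ℝ) → ℝ := fun y => (1 / Γ) * ∑ i, γ i * Dφ (y i) with hA_def
  set A' : (Fin m → ℝ) →L[ℝ] ℝ :=
    (1 / Γ) • (∑ i, (γ i * DDφ (x i)) • (ContinuousLinearMap.proj i : (Fin m → ℝ) →L[ℝ] ℝ))
    with hA'_def
  have hAder : HasFDerivAt A A' x := by
    have h1 : ∀ i : Fin m, HasFDerivAt (fun y : Fin m → ℝ => γ i * Dφ (y i))
        ((γ i * DDφ (x i)) • (ContinuousLinearMap.proj i : (Fin m → ℝ) →L[ℝ] ℝ)) x := by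
      intro i
      have hproj : HasFDerivAt (fun y : Fin m → ℝ => y i)
          (ContinuousLinearMap.proj i : (Fin m → ℝ) →L[ℝ] ℝ) x :=
        (ContinuousLinearMap.proj i : (Fin m → ℝ) →L[ℝ] ℝ).hasFDerivAt
      have hcomp := (hd2 (x i) (hx i)).comp_hasFDerivAt x hproj
      have := hcomp.const_mul (γ i)
      simpa [smul_smul, mul_comm] using this
    have hsum := HasFDerivAt.fun_sum (fun i (_ : i ∈ Finset.univ) => h1 i)
    exact hsum.const_mul (1 / Γ)
  have hAx : A x = Dφ s := ((hf x hx).2).symm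
  have hAcont : ContinuousAt A x := hAder.continuousAt
  -- locally f y = Γ * g (A y)
  have hevpos : ∀ᶠ y in 𝓝 x, ∀ i, 0 < y i := by
    have hopen : IsOpen {y : Fin m → ℝ | ∀ i, 0 < y i} := by
      have := isOpen_set_pi (Set.finite_univ (α := Fin m)) (fun i _ => isOpen_Ioi (a := (0:ℝ)))
      convert this using 1
      ext y
      simp [Set.mem_pi]
    exact hopen.mem_nhds (by exact hx)
  have htendA : Filter.Tendsto A (𝓝 x) (𝓝 (Dφ s)) := hAx ▸ hAcont.tendsto
  have hev2 : ∀ᶠ y in 𝓝 x, Dφ (g (A y)) = A y := htendA.eventually hg2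
  have htendgA : Filter.Tendsto (fun y => g (A y)) (𝓝 x) (𝓝 s) := by
    have := hgc.tendsto.comp htendA
    rwa [hgs] at this
  have hev3 : ∀ᶠ y in 𝓝 x, 0 < g (A y) := htendgA.eventually (eventually_gt_nhds hs)
  have hloc : ∀ᶠ y in 𝓝 x, f y = Γ * g (A y) := by
    filter_upwards [hevpos, hev2, hev3] with y hy1 hy2 hy3
    have h1 : 0 < f y / Γ := (hf y hy1).1
    have h2 : Dφ (f y / Γ) = A y := (hf y hy1).2
    have h3 : Dφ (f y / Γ) = Dφ (g (A y)) := h2.trans hy2.symm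
    have h4 : f y / Γ = g (A y) := hmono.injOn h1 hy3 h3
    field_simp at h4 ⊢
    linarith [h4]
  have hgd' : HasDerivAt g (DDφ s)⁻¹ (A x) := by rw [hAx]; exact hgd.hasDerivAt
  have hcomp : HasFDerivAt (fun y => g (A y)) ((DDφ s)⁻¹ • A') x :=
    hgd'.comp_hasFDerivAt x hAder
  have hfd : HasFDerivAt f (Γ • ((DDφ s)⁻¹ • A')) x :=
    (hcomp.const_mul Γ).congr_of_eventuallyEq hloc
  refine ⟨hfd.continuousAt, fun i => ?_⟩
  rw [hfd.fderiv]
  have hproj : A' (Pi.single i 1) = (1/Γ) * (γ i * DDφ (x i)) := by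
    simp only [hA'_def, ContinuousLinearMap.smul_apply, ContinuousLinearMap.coe_sum',
      Finset.sum_apply, ContinuousLinearMap.proj_apply, smul_eq_mul]
    rw [Finset.sum_eq_single i]
    · simp
    · intro j _ hj
      simp [Pi.single_eq_of_ne hj]
    · intro h
      exact absurd (Finset.mem_univ i) h
  simp only [ContinuousLinearMap.smul_apply, smul_eq_mul, hproj]
  field_simp

/-- Theorem 6 of the paper: the elasticities of the LDA `x⋆` with generator
`φ` sum to one on `(0,∞)^m` if and only if `φ''(t) = c·t^κ` for some `c > 0` and `κ ∈ ℝ`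
(CES when `κ ≠ −1`, the Cobb–Douglas limit when `κ = −1`). -/
theorem statement_13 (m : ℕ) (hm : 2 ≤ m) (φ Dφ DDφ : ℝ → ℝ)
    (hconv : StrictConvexOn ℝ (Set.Ioi 0) φ)
    (hd1 : ∀ t ∈ Set.Ioi (0:ℝ), HasDerivAt φ (Dφ t) t)
    (hd2 : ∀ t ∈ Set.Ioi (0:ℝ), HasDerivAt Dφ (DDφ t) t)
    (hc2 : ContinuousOn DDφ (Set.Ioi 0))
    (hpos : ∀ t ∈ Set.Ioi (0:ℝ), 0 < DDφ t)
    (γ : Fin m → ℝ) (hγ : ∀ i, 0 < γ i)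
    (Γ : ℝ) (hΓ : Γ = ∑ i, γ i)
    (f : (Fin m → ℝ) → ℝ)
    (hf : ∀ x : Fin m → ℝ, (∀ i, 0 < x i) →
      0 < f x / Γ ∧ Dφ (f x / Γ) = (1 / Γ) * ∑ i, γ i * Dφ (x i))
    (hfpos : ∀ x : Fin m → ℝ, (∀ i, 0 < x i) → 0 < f x) :
    (∀ x : Fin m → ℝ, (∀ i, 0 < x i) →
        (∑ i, (x i / f x) * fderiv ℝ f x (Pi.single i 1)) = 1)
      ↔ ∃ c > (0:ℝ), ∃ κ : ℝ, ∀ t ∈ Set.Ioi (0:ℝ), DDφ t = c * t ^ κ := by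
  have hm0 : 0 < m := by omega
  have huniv : (Finset.univ : Finset (Fin m)).Nonempty := by
    have : Nonempty (Fin m) := Fin.pos_iff_nonempty.mp hm0
    exact Finset.univ_nonempty
  have hΓpos : 0 < Γ := hΓ ▸ Finset.sum_pos (fun i _ => hγ i) huniv
  have hΓne : Γ ≠ 0 := ne_of_gt hΓpos
  have hmono := Dphi_strictMono Dφ DDφ hd2 hpos
  have hkey := fun x hx => f_hasFDeriv m Dφ DDφ hd2 hc2 hpos γ Γ hΓpos f hf x hx
  -- the elasticity sum in closed form
  have hsumform : ∀ x : Fin m → ℝ, (∀ i, 0 < x i) →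
      (∑ i, (x i / f x) * fderiv ℝ f x (Pi.single i 1)) =
      (∑ i, γ i * (x i * DDφ (x i))) / (f x * DDφ (f x / Γ)) := by
    intro x hx
    have hfx : 0 < f x := hfpos x hx
    have hDs : 0 < DDφ (f x / Γ) := hpos _ (hf x hx).1
    rw [Finset.sum_div]
    apply Finset.sum_congr rfl
    intro i _
    rw [(hkey x hx).2 i]
    field_simp
  constructor
  · -- forward direction
    intro hEl
    have hfe : ∀ x : Fin m → ℝ, (∀ i, 0 < x i) →
        (∑ i, γ i * (x i * DDφ (x i))) = f x * DDφ (f x / Γ) := by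
      intro x hx
      have h1 := hEl x hx
      rw [hsumform x hx] at h1
      have hfx : (f x) ≠ 0 := ne_of_gt (hfpos x hx)
      have hDs : DDφ (f x / Γ) ≠ 0 := ne_of_gt (hpos _ (hf x hx).1)
      field_simp at h1
      linarith [h1, Finset.sum_congr rfl (fun i (_ : i ∈ Finset.univ) => (mul_assoc (γ i) (x i) (DDφ (x i))))]
    set i0 : Fin m := ⟨0, hm0⟩ with hi0
    set i1 : Fin m := ⟨1, by omega⟩ with hi1
    have hi01 : i1 ≠ i0 := by simp [hi0, hi1, Fin.ext_iff]
    have hγΓ : γ i0 < Γ := by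
      rw [hΓ]
      exact Finset.single_lt_sum hi01 (Finset.mem_univ i0) (Finset.mem_univ i1) (hγ i1)
        (fun i _ _ => (hγ i).le)
    set α : ℝ := γ i0 / Γ with hα
    have hα0 : 0 < α := div_pos (hγ i0) hΓpos
    have hα1 : α < 1 := (div_lt_one hΓpos).mpr hγΓ
    set X : ℝ → ℝ → (Fin m → ℝ) := fun p q => Function.update (fun _ => q) i0 p with hX
    have hXpos : ∀ p q : ℝ, 0 < p → 0 < q → ∀ i, 0 < X p q i := by
      intro p q hp hq i
      by_cases h : i = i0 <;> simp [hX, Function.update_apply, h, hp, hq]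
    have hXsum : ∀ (F : ℝ → ℝ) (p q : ℝ),
        ∑ i, γ i * F (X p q i) = γ i0 * F p + (Γ - γ i0) * F q := by
      intro F p q
      have hterm : ∀ i : Fin m, γ i * F (X p q i) =
          γ i * F q + (if i = i0 then γ i0 * (F p - F q) else 0) := by
        intro i
        by_cases h : i = i0 <;> simp [hX, Function.update_apply, h] <;> ring
      rw [Finset.sum_congr rfl (fun i _ => hterm i), Finset.sum_add_distrib,
        ← Finset.sum_mul, ← hΓ, Finset.sum_ite_eq' Finset.univ i0
          (fun _ => γ i0 * (F p - F q))]
      simp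
      ring
    set S : ℝ → ℝ → ℝ := fun p q => f (X p q) / Γ with hSdef
    have hSpos : ∀ p q : ℝ, 0 < p → 0 < q → 0 < S p q := by
      intro p q hp hq
      exact (hf (X p q) (hXpos p q hp hq)).1
    have hSψ : ∀ p q : ℝ, 0 < p → 0 < q →
        Dφ (S p q) = α * Dφ p + (1 - α) * Dφ q := by
      intro p q hp hq
      have h := (hf (X p q) (hXpos p q hp hq)).2
      rw [hXsum Dφ p q] at h
      have hSval : S p q = f (X p q) / Γ := rfl
      rw [hSval, h, hα]
      field_simp
    have hSh : ∀ p q : ℝ, 0 < p → 0 < q →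
        S p q * DDφ (S p q) = α * (p * DDφ p) + (1 - α) * (q * DDφ q) := by
      intro p q hp hq
      have h := hfe (X p q) (hXpos p q hp hq)
      rw [hXsum (fun t => t * DDφ t) p q] at h
      have harg : f (X p q) / Γ = S p q := rfl
      have hfX : f (X p q) = Γ * S p q := by
        rw [← harg]; field_simp
      rw [harg, hfX] at h
      have h2 : γ i0 * (p * DDφ p) + (Γ - γ i0) * (q * DDφ q)
          = Γ * S p q * DDφ (S p q) := by simpa using h
      rw [hα]
      field_simp
      nlinarith [h2]
    have hmemS : ∀ p q : ℝ, 0 < p → 0 < q → p < q → S p q ∈ Set.Ioo p q := by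
      intro p q hp hq hpq
      have hDpq : Dφ p < Dφ q := hmono hp hq hpq
      have h1 : Dφ p < Dφ (S p q) := by
        rw [hSψ p q hp hq]; nlinarith
      have h2 : Dφ (S p q) < Dφ q := by
        rw [hSψ p q hp hq]; nlinarith
      exact ⟨(hmono.lt_iff_lt hp (hSpos p q hp hq)).mp h1,
        (hmono.lt_iff_lt (hSpos p q hp hq) hq).mp h2⟩
    have hmemS' : ∀ p q : ℝ, 0 < p → 0 < q → q < p → S p q ∈ Set.Ioo q p := by
      intro p q hp hq hqp
      have hDqp : Dφ q < Dφ p := hmono hq hp hqp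
      have h1 : Dφ q < Dφ (S p q) := by
        rw [hSψ p q hp hq]; nlinarith
      have h2 : Dφ (S p q) < Dφ p := by
        rw [hSψ p q hp hq]; nlinarith
      exact ⟨(hmono.lt_iff_lt hq (hSpos p q hp hq)).mp h1,
        (hmono.lt_iff_lt (hSpos p q hp hq) hp).mp h2⟩
    have hScont : ∀ p : ℝ, 0 < p → ContinuousOn (S p) (Set.Ioi 0) := by
      intro p hp q hq
      have hXcont : Continuous (fun r : ℝ => X p r) := by
        apply continuous_pi
        intro i
        by_cases h : i = i0 <;> simp [hX, Function.update_apply, h] <;> fun_prop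
      have hfc : ContinuousAt f (X p q) := (hkey (X p q) (hXpos p q hp hq)).1
      exact ((hfc.comp hXcont.continuousAt).div_const Γ).continuousWithinAt
    -- affine relation for h(t) = t * DDφ t in terms of Dφ
    have hD12 : Dφ 1 < Dφ 2 := hmono (by norm_num) (by norm_num) one_lt_two
    have hD12ne : Dφ 2 - Dφ 1 ≠ 0 := by linarith
    set hv : ℝ → ℝ := fun t => t * DDφ t with hhv
    set a : ℝ := (hv 2 - hv 1) / (Dφ 2 - Dφ 1) with ha
    set b : ℝ := hv 1 - a * Dφ 1 with hb
    set K : ℝ → ℝ := fun t => hv t - a * Dφ t - b with hK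
    have hK1 : K 1 = 0 := by simp [hK, hb]
    have hK2 : K 2 = 0 := by
      simp only [hK, hb, ha]
      field_simp
      ring
    have hKrel : ∀ p q : ℝ, 0 < p → 0 < q → K (S p q) = α * K p + (1 - α) * K q := by
      intro p q hp hq
      simp only [hK, hhv]
      rw [hSh p q hp hq, hSψ p q hp hq]
      ring
    have hKc : ContinuousOn K (Set.Ioi 0) := by
      apply ContinuousOn.sub
      apply ContinuousOn.sub
      · exact continuousOn_id.mul hc2
      · exact (continuousOn_const.mul
          (fun t ht => (hd2 t ht).continuousAt.continuousWithinAt))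
      · exact continuousOn_const
    have hIcc := gap_zero α hα0 hα1 S K hmemS hKrel hKc hK1 hK2
    have hKz := jensen_glob α hα0 hα1 S K hmemS hmemS' hKrel hKc hScont hK1 hK2 hIcc
    -- solve the ODE: t * DDφ t = a * Dφ t + b  on Ioi 0
    have hAff : ∀ t ∈ Set.Ioi (0:ℝ), t * DDφ t = a * Dφ t + b := by
      intro t ht
      have := hKz t ht
      simp only [hK, hhv] at this
      linarith
    have hDD' : ∀ t ∈ Set.Ioi (0:ℝ), HasDerivAt DDφ ((a - 1) * DDφ t / t) t := by
      intro t ht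
      have htne : t ≠ 0 := ne_of_gt ht
      have hG : HasDerivAt (fun u : ℝ => (a * Dφ u + b) / u)
          (((a * DDφ t) * t - (a * Dφ t + b) * 1) / t ^ 2) t :=
        (((hd2 t ht).const_mul a).add_const b).div (hasDerivAt_id t) htne
      have heq : ((a * DDφ t) * t - (a * Dφ t + b) * 1) / t ^ 2 = (a - 1) * DDφ t / t := by
        rw [← hAff t ht]
        field_simp
      rw [heq] at hG
      apply hG.congr_of_eventuallyEq
      filter_upwards [Ioi_mem_nhds ht] with u hu
      have hKu := hAff u hu
      have hune : u ≠ 0 := ne_of_gt hu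
      rw [← hKu]
      field_simp
    set F : ℝ → ℝ := fun t => DDφ t * t ^ (1 - a) with hF
    have hF' : ∀ t ∈ Set.Ioi (0:ℝ), HasDerivAt F 0 t := by
      intro t ht
      have htne : t ≠ 0 := ne_of_gt ht
      have hr : HasDerivAt (fun u : ℝ => u ^ (1 - a)) ((1 - a) * t ^ (1 - a - 1)) t :=
        Real.hasDerivAt_rpow_const (Or.inl htne)
      have hmul := (hDD' t ht).mul hr
      have hval : (a - 1) * DDφ t / t * t ^ (1 - a) + DDφ t * ((1 - a) * t ^ (1 - a - 1)) = 0 := by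
        rw [Real.rpow_sub_one htne]
        field_simp
        ring
      rw [hval] at hmul
      exact hmul
    have hconst := const_of_derivZero F hF'
    have hc1 : 0 < DDφ 1 := hpos 1 (Set.mem_Ioi.mpr one_pos)
    refine ⟨DDφ 1, hc1, a - 1, ?_⟩
    intro t ht
    have h := hconst t ht 1 (Set.mem_Ioi.mpr one_pos)
    have hF1 : F 1 = DDφ 1 := by simp [hF, Real.one_rpow]
    rw [hF1] at h
    have hmul1 : t ^ (1 - a) * t ^ (a - 1) = 1 := by
      rw [← Real.rpow_add ht]
      norm_num
    calc DDφ t = DDφ t * (t ^ (1 - a) * t ^ (a - 1)) := by rw [hmul1, mul_one]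
      _ = (DDφ t * t ^ (1 - a)) * t ^ (a - 1) := by ring
      _ = DDφ 1 * t ^ (a - 1) := by
          have hFt : DDφ t * t ^ (1 - a) = F t := rfl
          rw [hFt, h]
  · -- backward direction
    rintro ⟨c, hc, κ, hDD⟩ x hx
    rw [hsumform x hx]
    have hfx : 0 < f x := hfpos x hx
    set s : ℝ := f x / Γ with hs_def
    have hs : 0 < s := (hf x hx).1
    have hDs : 0 < DDφ s := hpos s hs
    have hfxs : f x = Γ * s := by rw [hs_def]; field_simp
    -- key power-mean identity
    have hkeyid : ∑ i, γ i * (x i) ^ (κ + 1) = Γ * s ^ (κ + 1) := by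
      by_cases hκ : κ = -1
      · subst hκ
        simp only [neg_add_cancel, Real.rpow_zero, mul_one]
        rw [hΓ]
      · have hκ1 : κ + 1 ≠ 0 := fun h => hκ (by linarith)
        set W : ℝ → ℝ := fun t => Dφ t - c * t ^ (κ + 1) / (κ + 1) with hW
        have hW' : ∀ t ∈ Set.Ioi (0:ℝ), HasDerivAt W 0 t := by
          intro t ht
          have htne : t ≠ 0 := ne_of_gt ht
          have hr : HasDerivAt (fun u : ℝ => u ^ (κ + 1)) ((κ + 1) * t ^ (κ + 1 - 1)) t :=
            Real.hasDerivAt_rpow_const (Or.inl htne)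
          have h2 := ((hr.const_mul c).div_const (κ + 1))
          have h3 := (hd2 t ht).sub h2
          have hval : DDφ t - c * ((κ + 1) * t ^ (κ + 1 - 1)) / (κ + 1) = 0 := by
            have : κ + 1 - 1 = κ := by ring
            rw [this, hDD t ht]
            field_simp
            ring
          rw [hval] at h3
          exact h3
        have hWconst := const_of_derivZero W hW'
        set d : ℝ := W 1 with hd
        have hDφ : ∀ t ∈ Set.Ioi (0:ℝ), Dφ t = c * t ^ (κ + 1) / (κ + 1) + d := by
          intro t ht
          have := hWconst t ht 1 (Set.mem_Ioi.mpr one_pos)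
          rw [← hd] at this
          simp only [hW] at this
          linarith
        have heq := (hf x hx).2
        rw [hDφ s (Set.mem_Ioi.mpr hs)] at heq
        have hsum2 : ∑ i, γ i * Dφ (x i)
            = (c / (κ + 1)) * (∑ i, γ i * (x i) ^ (κ + 1)) + Γ * d := by
          have hterm : ∀ i : Fin m, γ i * Dφ (x i)
              = (c / (κ + 1)) * (γ i * (x i) ^ (κ + 1)) + γ i * d := by
            intro i
            rw [hDφ (x i) (Set.mem_Ioi.mpr (hx i))]
            ring
          rw [Finset.sum_congr rfl (fun i _ => hterm i), Finset.sum_add_distrib,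
            ← Finset.mul_sum, ← Finset.sum_mul, ← hΓ]
        rw [hsum2] at heq
        have hcne : c ≠ 0 := ne_of_gt hc
        field_simp at heq
        have hcκ : c * (κ + 1) ≠ 0 := mul_ne_zero hcne hκ1
        apply mul_left_cancel₀ hcκ
        linear_combination -(κ + 1) * heq
    -- conclude the elasticity sum
    have hnum : ∑ i, γ i * (x i * DDφ (x i)) = f x * DDφ s := by
      have hterm : ∀ i : Fin m, γ i * (x i * DDφ (x i)) = c * (γ i * (x i) ^ (κ + 1)) := by
        intro i
        rw [hDD (x i) (hx i), Real.rpow_add_one (ne_of_gt (hx i)) κ]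
        ring
      rw [Finset.sum_congr rfl (fun i _ => hterm i), ← Finset.mul_sum, hkeyid,
        hfxs, hDD s hs, Real.rpow_add_one (ne_of_gt hs) κ]
      ring
    rw [hnum]
    exact div_self (by positivity)
end

section
/- Let x_⋆ be the LDA on (0,∞)^m with generator φ and weights γ_1,…,γ_m > 0. Then for all i, j ∈ {1,…,m} and all x ∈ (0,∞)^m, the marginal rate of substitution of x_i for x_j satisfies S_{ij}(x) = (∂x_⋆/∂x_i)(x) / (∂x_⋆/∂x_j)(x) = (γ_i·φ''(x_i)) / (γ_j·φ''(x_j)); in particular it depends only on x_i and x_j. -/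
open scoped BigOperators

/-- for any LDA `x⋆` with generator `φ` and weights `γᵢ`, the marginal rate
of substitution of `xᵢ` for `xⱼ` satisfies
`S_ij(x) = (∂x⋆/∂xᵢ)/(∂x⋆/∂xⱼ) = (γᵢ·φ''(xᵢ))/(γⱼ·φ''(xⱼ))`;
in particular it depends only on `xᵢ` and `xⱼ`. -/
theorem statement_14 (m : ℕ) (φ Dφ DDφ : ℝ → ℝ)
    (hconv : StrictConvexOn ℝ (Set.Ioi 0) φ)
    (hd1 : ∀ t ∈ Set.Ioi (0:ℝ), HasDerivAt φ (Dφ t) t)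
    (hd2 : ∀ t ∈ Set.Ioi (0:ℝ), HasDerivAt Dφ (DDφ t) t)
    (hc2 : ContinuousOn DDφ (Set.Ioi 0))
    (hpos : ∀ t ∈ Set.Ioi (0:ℝ), 0 < DDφ t)
    (γ : Fin m → ℝ) (hγ : ∀ i, 0 < γ i)
    (Γ : ℝ) (hΓ : Γ = ∑ i, γ i)
    (f : (Fin m → ℝ) → ℝ)
    (hf : ∀ x : Fin m → ℝ, (∀ i, 0 < x i) →
      0 < f x / Γ ∧ Dφ (f x / Γ) = (1 / Γ) * ∑ i, γ i * Dφ (x i)) :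
    ∀ i j : Fin m, ∀ x : Fin m → ℝ, (∀ k, 0 < x k) →
      fderiv ℝ f x (Pi.single i 1) / fderiv ℝ f x (Pi.single j 1)
        = (γ i * DDφ (x i)) / (γ j * DDφ (x j)) := by
  intro i j x hx
  have : Nonempty (Fin m) := ⟨i⟩
  have hΓpos : 0 < Γ := hΓ ▸ Finset.sum_pos (fun k _ => hγ k) Finset.univ_nonempty
  have hΓne : Γ ≠ 0 := ne_of_gt hΓpos
  -- strict monotonicity of Dφ on Ioi 0
  have hsm : StrictMonoOn Dφ (Set.Ioi 0) := by
    apply strictMonoOn_of_deriv_pos (convex_Ioi 0)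
      (fun t ht => (hd2 t ht).continuousAt.continuousWithinAt)
    intro t ht
    rw [interior_Ioi] at ht
    rw [(hd2 t ht).deriv]
    exact hpos t ht
  -- set up at the point x
  set y0 : ℝ := f x / Γ with hy0def
  obtain ⟨hy0pos, hy0eq⟩ := hf x hx
  have hy0 : y0 ∈ Set.Ioi (0:ℝ) := hy0pos
  -- strict derivative of Dφ at y0
  have hsd : HasStrictDerivAt Dφ (DDφ y0) y0 :=
    hasStrictDerivAt_of_hasDerivAt_of_continuousAt
      (((isOpen_Ioi).eventually_mem hy0).mono (fun t ht => hd2 t ht))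
      (hc2.continuousAt (isOpen_Ioi.mem_nhds hy0))
  have hDDne : DDφ y0 ≠ 0 := ne_of_gt (hpos y0 hy0)
  -- local inverse g of Dφ near y0
  set g : ℝ → ℝ := hsd.localInverse Dφ (DDφ y0) y0 hDDne with hgdef
  have hg : HasStrictDerivAt g (DDφ y0)⁻¹ (Dφ y0) := hsd.to_localInverse (hf' := hDDne)
  have hginv : ∀ᶠ y in nhds (Dφ y0), Dφ (g y) = y :=
    (hsd.hasStrictFDerivAt_equiv hDDne).eventually_right_inverse
  have hgval : g (Dφ y0) = y0 :=
    (hsd.hasStrictFDerivAt_equiv hDDne).localInverse_apply_image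
  -- the aggregated function u
  set u : (Fin m → ℝ) → ℝ := fun z => (1 / Γ) * ∑ k, γ k * Dφ (z k) with hudef
  have hux : u x = Dφ y0 := hy0eq.symm
  -- derivative of u at x
  set S : (Fin m → ℝ) →L[ℝ] ℝ :=
    ∑ k, γ k • (DDφ (x k) • (ContinuousLinearMap.proj k : (Fin m → ℝ) →L[ℝ] ℝ)) with hSdef
  have hu : HasFDerivAt u ((1 / Γ) • S) x := by
    apply HasFDerivAt.const_mul
    apply HasFDerivAt.fun_sum
    intro k _
    exact ((hd2 (x k) (hx k)).comp_hasFDerivAt x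
      (ContinuousLinearMap.proj k : (Fin m → ℝ) →L[ℝ] ℝ).hasFDerivAt).const_mul (γ k)
  -- derivative of z ↦ Γ * g (u z) at x
  have hgu : HasDerivAt g (DDφ y0)⁻¹ (u x) := by rw [hux]; exact hg.hasDerivAt
  have hcomp : HasFDerivAt (fun z => Γ * g (u z))
      (Γ • ((DDφ y0)⁻¹ • ((1 / Γ) • S))) x :=
    (hgu.comp_hasFDerivAt x hu).const_mul Γ
  -- f agrees with z ↦ Γ * g (u z) near x
  have ev1 : ∀ᶠ z in nhds x, ∀ k, 0 < z k := by
    rw [Filter.eventually_all]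
    exact fun k => ((continuous_apply k).tendsto x).eventually (eventually_gt_nhds (hx k))
  have ucont : Filter.Tendsto u (nhds x) (nhds (u x)) := hu.continuousAt
  have ev2 : ∀ᶠ z in nhds x, Dφ (g (u z)) = u z := ucont.eventually (hux ▸ hginv)
  have gcont : Filter.Tendsto g (nhds (u x)) (nhds (g (u x))) := by
    rw [hux]; exact hg.hasDerivAt.continuousAt
  have ev3 : ∀ᶠ z in nhds x, 0 < g (u z) := by
    refine (gcont.comp ucont).eventually ?_
    rw [hux, hgval]
    exact eventually_gt_nhds hy0pos
  have hev : f =ᶠ[nhds x] fun z => Γ * g (u z) := by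
    filter_upwards [ev1, ev2, ev3] with z h1 h2 h3
    obtain ⟨hz1, hz2⟩ := hf z h1
    have : Dφ (f z / Γ) = Dφ (g (u z)) := by rw [hz2, h2]
    have := hsm.injOn hz1 (Set.mem_Ioi.mpr h3) this
    field_simp at this
    linarith [this]
  have hF : HasFDerivAt f (Γ • ((DDφ y0)⁻¹ • ((1 / Γ) • S))) x :=
    hcomp.congr_of_eventuallyEq hev
  -- compute the partial derivatives
  have key : ∀ k : Fin m, fderiv ℝ f x (Pi.single k 1)
      = (DDφ y0)⁻¹ * (γ k * DDφ (x k)) := by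
    intro k
    rw [hF.fderiv]
    simp only [ContinuousLinearMap.smul_apply, ContinuousLinearMap.coe_sum',
      Finset.sum_apply, ContinuousLinearMap.proj_apply, smul_eq_mul, hSdef]
    rw [Finset.sum_eq_single k]
    · simp only [Pi.single_eq_same]
      field_simp
    · intro b _ hb
      simp [Pi.single_eq_of_ne hb]
    · simp
  rw [key i, key j, mul_div_mul_left _ _ (inv_ne_zero hDDne)]
end

section
/- Let m ≥ 2 and let x_⋆ be the LDA on (0,∞)^m with generator φ and weights γ_1,…,γ_m > 0. Then the following are equivalent: (a) there exist indices i ≠ j and a constant κ > 0 such that the marginal rate of substitution satisfies S_{ij}(x) = κ·(x_j/x_i) for all x ∈ (0,∞)^m (i.e. the substitution elasticity of x_i for x_j is identically one); (b) there exists b > 0 such that φ''(t) = b/t for all t > 0 (so that φ is, up to an affine term, the Cobb–Douglas generator b·(t·log t − t), and x_⋆ is a Cobb–Douglas aggregator). -/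
open scoped BigOperators

set_option maxHeartbeats 1000000

/-- Theorem 7 of the paper: for an LDA `x⋆` with generator `φ`, the marginal
rate of substitution `S_ij` is proportional (with positive constant) to `xⱼ/xᵢ` for some pair
of distinct indices — i.e. the substitution elasticity of `xᵢ` for `xⱼ` is identically one —
if and only if `φ''(t) = b/t` for some `b > 0` (Cobb–Douglas generator). -/
theorem statement_15 (m : ℕ) (hm : 2 ≤ m) (φ Dφ DDφ : ℝ → ℝ)
    (hconv : StrictConvexOn ℝ (Set.Ioi 0) φ)
    (hd1 : ∀ t ∈ Set.Ioi (0:ℝ), HasDerivAt φ (Dφ t) t)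
    (hd2 : ∀ t ∈ Set.Ioi (0:ℝ), HasDerivAt Dφ (DDφ t) t)
    (hc2 : ContinuousOn DDφ (Set.Ioi 0))
    (hpos : ∀ t ∈ Set.Ioi (0:ℝ), 0 < DDφ t)
    (γ : Fin m → ℝ) (hγ : ∀ i, 0 < γ i)
    (Γ : ℝ) (hΓ : Γ = ∑ i, γ i)
    (f : (Fin m → ℝ) → ℝ)
    (hf : ∀ x : Fin m → ℝ, (∀ i, 0 < x i) →
      0 < f x / Γ ∧ Dφ (f x / Γ) = (1 / Γ) * ∑ i, γ i * Dφ (x i)) :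
    (∃ i j : Fin m, i ≠ j ∧ ∃ κ > (0:ℝ), ∀ x : Fin m → ℝ, (∀ k, 0 < x k) →
        fderiv ℝ f x (Pi.single i 1) / fderiv ℝ f x (Pi.single j 1)
          = κ * (x j / x i))
      ↔ ∃ b > (0:ℝ), ∀ t ∈ Set.Ioi (0:ℝ), DDφ t = b / t := by
  have hmpos : 0 < m := lt_of_lt_of_le (by norm_num) hm
  haveI : NeZero m := ⟨by omega⟩
  have hΓpos : 0 < Γ := by
    rw [hΓ]
    exact Finset.sum_pos (fun i _ => hγ i) (Finset.univ_nonempty)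
  have hΓne : Γ ≠ 0 := ne_of_gt hΓpos
  -- the open positive orthant
  set U : Set (Fin m → ℝ) := {x | ∀ k, 0 < x k} with hUdef
  have hUopen : IsOpen U := by
    have : U = Set.pi Set.univ (fun _ : Fin m => Set.Ioi (0:ℝ)) := by
      ext x; simp [hUdef, Set.mem_pi]
    rw [this]
    exact isOpen_set_pi Set.finite_univ (fun _ _ => isOpen_Ioi)
  constructor
  · -- forward direction
    rintro ⟨i, j, hij, κ, hκ, hS⟩
    -- key: implicit differentiation
    have key : ∀ x : Fin m → ℝ, (∀ k, 0 < x k) → DifferentiableAt ℝ f x →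
        ∀ k, DDφ (f x / Γ) * ((1/Γ) * fderiv ℝ f x (Pi.single k 1))
          = (1/Γ) * (γ k * DDφ (x k)) := by
      intro x hx hdiff k
      have hc : 0 < f x / Γ := (hf x hx).1
      set Df := fderiv ℝ f x with hDf
      have h1 : HasFDerivAt (fun y => (1/Γ) * f y) ((1/Γ) • Df) x :=
        hdiff.hasFDerivAt.const_mul _
      have h2 : HasDerivAt Dφ (DDφ (f x / Γ)) (f x / Γ) := hd2 _ hc
      have hp : HasFDerivAt (fun y => Dφ ((1/Γ) * f y))
          (DDφ (f x / Γ) • ((1/Γ) • Df)) x := by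
        have := h2.comp_hasFDerivAt_of_eq x h1 (by rw [div_eq_inv_mul, ← one_div])
        exact this
      -- RHS derivative
      have hqterm : ∀ l : Fin m, HasFDerivAt (fun y : Fin m → ℝ => γ l * Dφ (y l))
          ((γ l) • ((DDφ (x l)) • (ContinuousLinearMap.proj l : (Fin m → ℝ) →L[ℝ] ℝ))) x := by
        intro l
        have hpl : HasFDerivAt (fun y : Fin m → ℝ => y l)
            (ContinuousLinearMap.proj l : (Fin m → ℝ) →L[ℝ] ℝ) x :=
          (ContinuousLinearMap.proj l : (Fin m → ℝ) →L[ℝ] ℝ).hasFDerivAt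
        exact ((hd2 (x l) (hx l)).comp_hasFDerivAt x hpl).const_mul _
      have hq : HasFDerivAt (fun y : Fin m → ℝ => (1/Γ) * ∑ l, γ l * Dφ (y l))
          ((1/Γ) • ∑ l, (γ l) • ((DDφ (x l)) •
            (ContinuousLinearMap.proj l : (Fin m → ℝ) →L[ℝ] ℝ))) x := by
        have hsum : HasFDerivAt (fun y : Fin m → ℝ => ∑ l, γ l * Dφ (y l))
            (∑ l, (γ l) • ((DDφ (x l)) •
              (ContinuousLinearMap.proj l : (Fin m → ℝ) →L[ℝ] ℝ))) x :=
          HasFDerivAt.fun_sum (fun l _ => hqterm l)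
        exact hsum.const_mul _
      -- the two functions agree near x
      have heq : (fun y : Fin m → ℝ => (1/Γ) * ∑ l, γ l * Dφ (y l)) =ᶠ[nhds x]
          (fun y => Dφ ((1/Γ) * f y)) := by
        filter_upwards [hUopen.mem_nhds hx] with y hy
        have := (hf y hy).2
        rw [div_eq_inv_mul, ← one_div] at this
        exact this.symm
      have hp' : HasFDerivAt (fun y : Fin m → ℝ => (1/Γ) * ∑ l, γ l * Dφ (y l))
          (DDφ (f x / Γ) • ((1/Γ) • Df)) x := hp.congr_of_eventuallyEq heq
      have hLeq := hq.unique hp'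
      have := congrArg (fun (L : (Fin m → ℝ) →L[ℝ] ℝ) => L (Pi.single k 1)) hLeq
      simp only [ContinuousLinearMap.smul_apply, ContinuousLinearMap.sum_apply,
        ContinuousLinearMap.proj_apply, smul_eq_mul] at this
      rw [Finset.sum_eq_single k] at this
      · simp only [Pi.single_eq_same] at this
        rw [← this]; ring
      · intro l _ hlk
        simp [Pi.single_apply, hlk]
      · intro h; exact absurd (Finset.mem_univ k) h
    -- now specialize
    have hDD1 : 0 < DDφ 1 := hpos 1 (Set.mem_Ioi.mpr one_pos)
    refine ⟨κ * γ j * DDφ 1 / γ i, div_pos (mul_pos (mul_pos hκ (hγ j)) hDD1) (hγ i), ?_⟩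
    intro t ht
    have ht' : (0:ℝ) < t := ht
    set x : Fin m → ℝ := fun k => if k = i then t else 1 with hxdef
    have hx : ∀ k, 0 < x k := by
      intro k; by_cases h : k = i <;> simp [hxdef, h, ht']
    have hxi : x i = t := by simp [hxdef]
    have hxj : x j = 1 := by simp [hxdef, hij.symm]
    have hc : 0 < f x / Γ := (hf x hx).1
    have hDDc : 0 < DDφ (f x / Γ) := hpos _ hc
    have hxt : (0:ℝ) < t := ht
    have hSx := hS x hx
    rw [hxi, hxj] at hSx
    -- f must be differentiable at x
    have hdiff : DifferentiableAt ℝ f x := by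
      by_contra hnd
      rw [fderiv_zero_of_not_differentiableAt hnd] at hSx
      simp only [ContinuousLinearMap.zero_apply, zero_div] at hSx
      have : 0 < κ * (1 / t) := by positivity
      rw [← hSx] at this
      exact lt_irrefl _ this
    have hki := key x hx hdiff i
    have hkj := key x hx hdiff j
    rw [hxi] at hki
    rw [hxj] at hkj
    have hDi : fderiv ℝ f x (Pi.single i 1) = γ i * DDφ t / DDφ (f x / Γ) := by
      field_simp at hki ⊢
      linarith [hki]
    have hDj : fderiv ℝ f x (Pi.single j 1) = γ j * DDφ 1 / DDφ (f x / Γ) := by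
      field_simp at hkj ⊢
      linarith [hkj]
    rw [hDi, hDj] at hSx
    have hγi := hγ i
    have hγj := hγ j
    have hDDt : 0 < DDφ t := hpos t ht
    field_simp at hSx ⊢
    nlinarith [hSx, mul_pos hγi hDDt]
  · -- backward direction
    rintro ⟨b, hb, hDD⟩
    have hbne : b ≠ 0 := ne_of_gt hb
    -- Dφ t = b * log t + Dφ 1 on Ioi 0
    have hDφ : ∀ t ∈ Set.Ioi (0:ℝ), Dφ t = b * Real.log t + Dφ 1 := by
      have hψ : ∀ t ∈ Set.Ioi (0:ℝ),
          HasDerivAt (fun s => Dφ s - b * Real.log s) 0 t := by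
        intro t ht
        have h1 := (hd2 t ht).sub ((Real.hasDerivAt_log (ne_of_gt ht)).const_mul b)
        have : DDφ t - b * t⁻¹ = 0 := by
          rw [hDD t ht]; field_simp; simp
        rwa [this] at h1
      have hconst : ∀ t ∈ Set.Ioi (0:ℝ),
          (fun s => Dφ s - b * Real.log s) t = (fun s => Dφ s - b * Real.log s) 1 := by
        intro t ht
        refine (convex_Ioi (0:ℝ)).is_const_of_fderivWithin_eq_zero
          (fun z hz => ((hψ z hz).differentiableAt).differentiableWithinAt) ?_ ht
          (by norm_num)
        intro z hz
        rw [fderivWithin_of_isOpen isOpen_Ioi hz, ((hψ z hz).hasFDerivAt).fderiv]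
        ext; simp
      intro t ht
      have := hconst t ht
      simp only [Real.log_one, mul_zero, sub_zero] at this
      linarith [this]
    -- f is Cobb-Douglas on U
    set g : (Fin m → ℝ) → ℝ := fun y => (1/Γ) * ∑ k, γ k * Real.log (y k) with hgdef
    have hfF : ∀ x ∈ U, f x = Γ * Real.exp (g x) := by
      intro x hx
      have h1 := (hf x hx).2
      have hc : 0 < f x / Γ := (hf x hx).1
      rw [hDφ _ hc] at h1
      have h2 : ∀ k, γ k * Dφ (x k) = γ k * (b * Real.log (x k)) + γ k * Dφ 1 := by
        intro k; rw [hDφ _ (hx k)]; ring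
      simp only [h2, Finset.sum_add_distrib, ← Finset.sum_mul] at h1
      rw [← hΓ] at h1
      have h3 : b * Real.log (f x / Γ) = b * g x := by
        have : (∑ k, γ k * (b * Real.log (x k))) = b * (∑ k, γ k * Real.log (x k)) := by
          rw [Finset.mul_sum]; congr 1; ext k; ring
        rw [this] at h1
        have hΓDφ : (1/Γ) * (b * (∑ k, γ k * Real.log (x k)) + Γ * Dφ 1)
            = b * g x + Dφ 1 := by
          rw [hgdef]; field_simp
        rw [hΓDφ] at h1
        linarith [h1]
      have h4 : Real.log (f x / Γ) = g x := by
        have := mul_left_cancel₀ hbne h3; exact this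
      have h5 : f x / Γ = Real.exp (g x) := by
        rw [← h4, Real.exp_log hc]
      field_simp at h5
      linarith [h5]
    -- derivative of Cobb-Douglas
    have hFder : ∀ x : Fin m → ℝ, (∀ k, 0 < x k) →
        HasFDerivAt f ((Γ * Real.exp (g x)) • ((1/Γ:ℝ) • ∑ k, (γ k) • (((x k)⁻¹) •
          (ContinuousLinearMap.proj k : (Fin m → ℝ) →L[ℝ] ℝ)))) x := by
      intro x hx
      have hgder : HasFDerivAt g ((1/Γ:ℝ) • ∑ k, (γ k) • (((x k)⁻¹) •
          (ContinuousLinearMap.proj k : (Fin m → ℝ) →L[ℝ] ℝ))) x := by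
        have hterm : ∀ k : Fin m, HasFDerivAt (fun y : Fin m → ℝ => γ k * Real.log (y k))
            ((γ k) • (((x k)⁻¹) •
              (ContinuousLinearMap.proj k : (Fin m → ℝ) →L[ℝ] ℝ))) x := by
          intro k
          have hpk : HasFDerivAt (fun y : Fin m → ℝ => y k)
              (ContinuousLinearMap.proj k : (Fin m → ℝ) →L[ℝ] ℝ) x :=
            (ContinuousLinearMap.proj k : (Fin m → ℝ) →L[ℝ] ℝ).hasFDerivAt
          exact ((Real.hasDerivAt_log (ne_of_gt (hx k))).comp_hasFDerivAt x hpk).const_mul _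
        exact (HasFDerivAt.fun_sum (fun k _ => hterm k)).const_mul _
      have hF : HasFDerivAt (fun y => Γ * Real.exp (g y))
          ((Γ * Real.exp (g x)) • ((1/Γ:ℝ) • ∑ k, (γ k) • (((x k)⁻¹) •
            (ContinuousLinearMap.proj k : (Fin m → ℝ) →L[ℝ] ℝ)))) x := by
        have hexp : HasFDerivAt (fun y => Real.exp (g y))
            ((Real.exp (g x)) • ((1/Γ:ℝ) • ∑ k, (γ k) • (((x k)⁻¹) •
              (ContinuousLinearMap.proj k : (Fin m → ℝ) →L[ℝ] ℝ)))) x :=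
          (Real.hasDerivAt_exp (g x)).comp_hasFDerivAt x hgder
        have := hexp.const_mul Γ
        rwa [smul_smul] at this
      refine hF.congr_of_eventuallyEq ?_
      filter_upwards [hUopen.mem_nhds hx] with y hy
      exact hfF y hy
    -- choose indices
    refine ⟨⟨0, by omega⟩, ⟨1, by omega⟩, by simp [Fin.ext_iff], γ ⟨0, by omega⟩ / γ ⟨1, by omega⟩,
      div_pos (hγ _) (hγ _), ?_⟩
    intro x hx
    set i : Fin m := ⟨0, by omega⟩
    set j : Fin m := ⟨1, by omega⟩
    have hder := (hFder x hx).fderiv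
    rw [hder]
    have happ : ∀ k : Fin m, ((Γ * Real.exp (g x)) • ((1/Γ:ℝ) • ∑ l, (γ l) • (((x l)⁻¹) •
        (ContinuousLinearMap.proj l : (Fin m → ℝ) →L[ℝ] ℝ)))) (Pi.single k 1)
          = (Γ * Real.exp (g x)) * ((1/Γ) * (γ k * (x k)⁻¹)) := by
      intro k
      simp only [ContinuousLinearMap.smul_apply, ContinuousLinearMap.sum_apply,
        ContinuousLinearMap.proj_apply, smul_eq_mul]
      rw [Finset.sum_eq_single k]
      · simp [Pi.single_eq_same]
      · intro l _ hlk
        simp [Pi.single_apply, hlk]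
      · intro h; exact absurd (Finset.mem_univ k) h
    rw [happ i, happ j]
    have hE : (0:ℝ) < Real.exp (g x) := Real.exp_pos _
    have hxi := hx i
    have hxj := hx j
    have hγi := hγ i
    have hγj := hγ j
    field_simp
end

section
/- Fix m ≥ 1, θ ∈ {−1, +1} and γ_1,…,γ_m > 0, and let the Mitscherlich–Spillman–von Thünen (MST) aggregator be x_⋆(x_1,…,x_m) = Π_{i=1}^m (1 − exp(θ·γ_i·x_i)) on (0,∞)^m. Then the MST aggregator is not an LDA: there exist no strictly convex, twice continuously differentiable φ : (0,∞) → ℝ with φ'' > 0 and no weights γ'_1,…,γ'_m > 0 with Γ' = Σ_i γ'_i such that Γ'·(φ')^{-1}((1/Γ')·Σ_{i=1}^m γ'_i·φ'(x_i)) = Π_{i=1}^m (1 − exp(θ·γ_i·x_i)) for all (x_1,…,x_m) ∈ (0,∞)^m. -/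
open scoped BigOperators

/-- Quadratic lower bound: for `x > 0`, `x^2/4 < exp x - 1`. -/
lemma exp_sub_one_gt (x : ℝ) (hx : 0 < x) : x ^ 2 / 4 < Real.exp x - 1 := by
  have h : x / 2 + 1 ≤ Real.exp (x / 2) := Real.add_one_le_exp (x / 2)
  have hsq : Real.exp x = Real.exp (x / 2) ^ 2 := by
    rw [sq, ← Real.exp_add]
    ring_nf
  nlinarith [Real.exp_pos (x / 2)]

/-- Lemma 4 of the paper: the Mitscherlich–Spillman–von Thünen aggregator
`x⋆(x) = Π (1 − exp(θ·γᵢ·xᵢ))` is not an LDA: no strictly convex, twice continuously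
differentiable generator `φ` with `φ'' > 0` (with `ψ` a left inverse of `φ'` on `(0,∞)`)
and no positive weights `γ'ᵢ` realize it as
`Γ'·(φ')⁻¹((1/Γ')·Σ γ'ᵢ·φ'(xᵢ))` on `(0,∞)^m`. -/
theorem statement_18 (m : ℕ) (hm : 1 ≤ m) (θ : ℝ) (hθ : θ = -1 ∨ θ = 1)
    (γ : Fin m → ℝ) (hγ : ∀ i, 0 < γ i) :
    ¬ ∃ (φ Dφ DDφ ψ : ℝ → ℝ) (γ' : Fin m → ℝ),
      StrictConvexOn ℝ (Set.Ioi 0) φ ∧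
      (∀ t ∈ Set.Ioi (0:ℝ), HasDerivAt φ (Dφ t) t) ∧
      (∀ t ∈ Set.Ioi (0:ℝ), HasDerivAt Dφ (DDφ t) t) ∧
      ContinuousOn DDφ (Set.Ioi 0) ∧
      (∀ t ∈ Set.Ioi (0:ℝ), 0 < DDφ t) ∧
      (∀ t ∈ Set.Ioi (0:ℝ), ψ (Dφ t) = t) ∧
      (∀ i, 0 < γ' i) ∧
      (∀ x : Fin m → ℝ, (∀ i, 0 < x i) →
        (∑ i, γ' i) * ψ ((1 / ∑ i, γ' i) * ∑ i, γ' i * Dφ (x i))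
          = ∏ i, (1 - Real.exp (θ * γ i * x i))) := by
  rintro ⟨φ, Dφ, DDφ, ψ, γ', -, -, -, -, -, hψ, hγ', heq⟩
  have hne : (Finset.univ : Finset (Fin m)).Nonempty := by
    refine ⟨⟨0, hm⟩, Finset.mem_univ _⟩
  have hΓ : 0 < ∑ i, γ' i :=
    Finset.sum_pos (fun i _ => hγ' i) hne
  set Γ' : ℝ := ∑ i, γ' i with hΓ'def
  -- evaluating on the diagonal gives Γ'·t = ∏ (1 − exp(θ γᵢ t))
  have key : ∀ t : ℝ, 0 < t → Γ' * t = ∏ i, (1 - Real.exp (θ * γ i * t)) := by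
    intro t ht
    have h := heq (fun _ => t) (fun _ => ht)
    simpa [← Finset.sum_mul, ← hΓ'def, one_div, inv_mul_cancel_left₀ hΓ.ne',
      hψ t ht] using h
  rcases hθ with hθ | hθ
  · -- θ = -1 : the product is at most 1, but Γ'·t can be 2
    have ht : (0:ℝ) < 2 / Γ' := by positivity
    have h := key _ ht
    have h2 : Γ' * (2 / Γ') = 2 := by field_simp
    have hle : (∏ i, (1 - Real.exp (θ * γ i * (2 / Γ')))) ≤ 1 := by
      refine Finset.prod_le_one (fun i _ => ?_) (fun i _ => ?_)
      · have : Real.exp (θ * γ i * (2 / Γ')) ≤ 1 := by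
          rw [Real.exp_le_one_iff]
          have := hγ i
          rw [hθ]; nlinarith
        linarith
      · have : 0 < Real.exp (θ * γ i * (2 / Γ')) := Real.exp_pos _
        linarith
    rw [h2] at h
    linarith [h.le.trans hle]
  · -- θ = 1 : each |factor| grows quadratically, beating the linear LHS
    set c : ℝ := ∏ i, (γ i) ^ 2 / 4 with hc
    have hcpos : 0 < c := Finset.prod_pos (fun i _ => by have := hγ i; positivity)
    set t : ℝ := max 1 (Γ' / c + 1) with htdef
    have ht1 : (1:ℝ) ≤ t := le_max_left _ _
    have ht : 0 < t := lt_of_lt_of_le one_pos ht1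
    have h := key t ht
    -- take absolute values
    have habs : Γ' * t = ∏ i, (Real.exp (γ i * t) - 1) := by
      have h' := congrArg abs h
      rw [abs_of_pos (by positivity), Finset.abs_prod] at h'
      rw [h']
      refine Finset.prod_congr rfl (fun i _ => ?_)
      have hgt : 1 < Real.exp (θ * γ i * t) := by
        rw [Real.one_lt_exp_iff]
        have := hγ i; rw [hθ]; nlinarith
      rw [abs_of_neg (by linarith), hθ]
      ring_nf
    have hlt : ∏ i, ((γ i * t) ^ 2 / 4) < ∏ i, (Real.exp (γ i * t) - 1) := by
      refine Finset.prod_lt_prod_of_nonempty (fun i _ => ?_) (fun i _ => ?_) hne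
      · have := hγ i; positivity
      · exact exp_sub_one_gt _ (by have := hγ i; positivity)
    have hfac : ∏ i, ((γ i * t) ^ 2 / 4) = c * (t ^ 2) ^ m := by
      calc ∏ i, ((γ i * t) ^ 2 / 4)
          = ∏ i, (γ i ^ 2 / 4 * t ^ 2) := Finset.prod_congr rfl (fun i _ => by ring)
        _ = c * (t ^ 2) ^ m := by
            rw [Finset.prod_mul_distrib, Finset.prod_const, Finset.card_univ,
              Fintype.card_fin]
    have hpow : t ^ 2 ≤ (t ^ 2) ^ m := by
      have h1 : (1:ℝ) ≤ t ^ 2 := by nlinarith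
      calc t ^ 2 = (t ^ 2) ^ 1 := by ring
        _ ≤ (t ^ 2) ^ m := pow_le_pow_right₀ h1 hm
    have hct : Γ' < c * t := by
      have hmax : Γ' / c + 1 ≤ t := le_max_right _ _
      have h1 : Γ' / c < t := by linarith
      calc Γ' = c * (Γ' / c) := by field_simp
        _ < c * t := mul_lt_mul_of_pos_left h1 hcpos
    have hfalse : Γ' * t < Γ' * t := by
      calc Γ' * t < c * t * t := by nlinarith
        _ = c * t ^ 2 := by ring
        _ ≤ c * (t ^ 2) ^ m := by nlinarith
        _ = ∏ i, ((γ i * t) ^ 2 / 4) := hfac.symm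
        _ < ∏ i, (Real.exp (γ i * t) - 1) := hlt
        _ = Γ' * t := habs.symm
    exact lt_irrefl _ hfalse
end
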